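/- arXiv:0908.4003 — 7 statements merged into one kernel-verified Lean document; each statement's English description precedes it below -/
import Mathlib

section
/- For every integer n ≥ 2, the number of secondary structures on [1,n] (with θ = 1) that are either empty or stem-loops (equivalently, secondary structures with at most one hairpin loop, i.e., whose base pairs are pairwise nested) equals 2^{n−2}. -/
/-- A secondary structure on `[1,n]` with `θ = 1`: a finite set of base pairs `(i,j)`
with `1 ≤ i`, `i + 1 < j` (i.e. `i < j` and `j - i > 1`), `j ≤ n`, no shared endpoints,
and no crossings (pseudoknots). -/
def IsSecStr (n : ℕ) (S : Finset (ℕ × ℕ)) : Prop :=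
  (∀ p ∈ S, 1 ≤ p.1 ∧ p.1 + 1 < p.2 ∧ p.2 ≤ n) ∧
  (∀ p ∈ S, ∀ q ∈ S, p ≠ q →
    p.1 ≠ q.1 ∧ p.1 ≠ q.2 ∧ p.2 ≠ q.1 ∧ p.2 ≠ q.2) ∧
  (∀ p ∈ S, ∀ q ∈ S, ¬ (p.1 < q.1 ∧ q.1 < p.2 ∧ p.2 < q.2))

/-- A stem-loop: a secondary structure containing a (unique) base pair `(i₀,j₀)` such that
every other base pair `(i,j)` satisfies `i < i₀ < j₀ < j`. -/
def IsStemLoop (n : ℕ) (S : Finset (ℕ × ℕ)) : Prop :=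
  IsSecStr n S ∧ ∃ p ∈ S, ∀ q ∈ S, q ≠ p → q.1 < p.1 ∧ p.2 < q.2

/-- Pairwise nested family of base pairs. -/
def NestedFam (n : ℕ) (S : Finset (ℕ × ℕ)) : Prop :=
  (∀ p ∈ S, 1 ≤ p.1 ∧ p.1 + 1 < p.2 ∧ p.2 ≤ n) ∧
  (∀ p ∈ S, ∀ q ∈ S, p ≠ q → (p.1 < q.1 ∧ q.2 < p.2) ∨ (q.1 < p.1 ∧ p.2 < q.2))

lemma setEq (n : ℕ) :
    {S : Finset (ℕ × ℕ) | IsSecStr n S ∧ (S = ∅ ∨ IsStemLoop n S)}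
      = {S | NestedFam n S} := by
  ext S
  simp only [Set.mem_setOf_eq]
  constructor
  · rintro ⟨hsec, hS⟩
    refine ⟨hsec.1, ?_⟩
    rcases hS with rfl | ⟨_, p0, hp0, hinner⟩
    · simp
    intro p hp q hq hpq
    obtain ⟨h1, h2, h3, h4⟩ := hsec.2.1 p hp q hq hpq
    by_cases hpe : p = p0
    · subst hpe
      have := hinner q hq (fun h => hpq h.symm)
      omega
    by_cases hqe : q = p0
    · subst hqe
      have := hinner p hp hpe
      omega
    · have hip := hinner p hp hpe
      have hiq := hinner q hq hqe
      have hc1 := hsec.2.2 p hp q hq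
      have hc2 := hsec.2.2 q hq p hp
      have hb := hsec.1 p0 hp0
      omega
  · rintro ⟨hb, hnest⟩
    have hsec : IsSecStr n S := by
      refine ⟨hb, ?_, ?_⟩
      · intro p hp q hq hpq
        have h1 := hb p hp
        have h2 := hb q hq
        have := hnest p hp q hq hpq
        omega
      · intro p hp q hq
        by_cases hpq : p = q
        · subst hpq; omega
        · have := hnest p hp q hq hpq
          omega
    refine ⟨hsec, ?_⟩
    rcases S.eq_empty_or_nonempty with rfl | hne
    · exact Or.inl rfl
    · right
      obtain ⟨p, hp, hmax⟩ := S.exists_max_image Prod.fst hne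
      refine ⟨hsec, p, hp, fun q hq hqp => ?_⟩
      have := hnest p hp q hq (fun h => hqp h.symm)
      have := hmax q hq
      omega

/-- Endpoint encoding: left endpoints together with right endpoints minus one. -/
def fmap (S : Finset (ℕ × ℕ)) : Finset ℕ :=
  S.image Prod.fst ∪ S.image (fun p => p.2 - 1)

lemma mem_fmap {S : Finset (ℕ × ℕ)} {x : ℕ} :
    x ∈ fmap S ↔ (∃ p ∈ S, p.1 = x) ∨ (∃ p ∈ S, p.2 - 1 = x) := by
  simp [fmap]

lemma fmap_subset {n : ℕ} {S : Finset (ℕ × ℕ)} (h : NestedFam n S) :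
    fmap S ⊆ Finset.Icc 1 (n - 1) := by
  intro x hx
  rw [mem_fmap] at hx
  rw [Finset.mem_Icc]
  rcases hx with ⟨p, hp, rfl⟩ | ⟨p, hp, rfl⟩ <;> have := h.1 p hp <;> omega

lemma fmap_card {n : ℕ} {S : Finset (ℕ × ℕ)} (h : NestedFam n S) :
    (fmap S).card = 2 * S.card := by
  have hfst : Set.InjOn Prod.fst (↑S : Set (ℕ × ℕ)) := by
    intro p hp q hq hpq
    by_contra hne
    have := h.2 p hp q hq hne
    omega
  have hsnd : Set.InjOn (fun p : ℕ × ℕ => p.2 - 1) (↑S : Set (ℕ × ℕ)) := by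
    intro p hp q hq hpq
    by_contra hne
    have := h.2 p hp q hq hne
    have := h.1 p hp
    have := h.1 q hq
    simp only at hpq
    omega
  have hdisj : Disjoint (S.image Prod.fst) (S.image (fun p => p.2 - 1)) := by
    rw [Finset.disjoint_left]
    rintro x hx hy
    simp only [Finset.mem_image] at hx hy
    obtain ⟨p, hp, rfl⟩ := hx
    obtain ⟨q, hq, hqx⟩ := hy
    have h1 := h.1 p hp
    have h2 := h.1 q hq
    by_cases hpq : p = q
    · subst hpq; omega
    · have := h.2 p hp q hq hpq
      omega
  rw [fmap, Finset.card_union_of_disjoint hdisj,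
    Finset.card_image_of_injOn hfst, Finset.card_image_of_injOn hsnd]
  ring

lemma exists_outermost {n : ℕ} {S : Finset (ℕ × ℕ)} (h : NestedFam n S)
    (hne : S.Nonempty) :
    ∃ p ∈ S, ∀ q ∈ S, q ≠ p → p.1 < q.1 ∧ q.2 < p.2 := by
  obtain ⟨p, hp, hmin⟩ := S.exists_min_image Prod.fst hne
  refine ⟨p, hp, fun q hq hqp => ?_⟩
  have := h.2 p hp q hq (fun e => hqp e.symm)
  have := hmin q hq
  omega

lemma outermost_min_max {n : ℕ} {S : Finset (ℕ × ℕ)} (h : NestedFam n S)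
    {p : ℕ × ℕ} (hp : p ∈ S) (hout : ∀ q ∈ S, q ≠ p → p.1 < q.1 ∧ q.2 < p.2) :
    p.1 ∈ fmap S ∧ p.2 - 1 ∈ fmap S ∧ ∀ x ∈ fmap S, p.1 ≤ x ∧ x ≤ p.2 - 1 := by
  refine ⟨mem_fmap.2 (Or.inl ⟨p, hp, rfl⟩), mem_fmap.2 (Or.inr ⟨p, hp, rfl⟩), ?_⟩
  intro x hx
  have hbp := h.1 p hp
  rw [mem_fmap] at hx
  rcases hx with ⟨q, hq, rfl⟩ | ⟨q, hq, rfl⟩ <;>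
  · have hbq := h.1 q hq
    by_cases hqp : q = p
    · subst hqp; omega
    · have := hout q hq hqp; omega

lemma fmap_erase {n : ℕ} {S : Finset (ℕ × ℕ)} (h : NestedFam n S)
    {p : ℕ × ℕ} (hp : p ∈ S) (hout : ∀ q ∈ S, q ≠ p → p.1 < q.1 ∧ q.2 < p.2) :
    fmap (S.erase p) = ((fmap S).erase p.1).erase (p.2 - 1) := by
  have hbp := h.1 p hp
  ext x
  rw [Finset.mem_erase, Finset.mem_erase, mem_fmap, mem_fmap]
  constructor
  · rintro (⟨q, hq, rfl⟩ | ⟨q, hq, rfl⟩) <;>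
    · rw [Finset.mem_erase] at hq
      obtain ⟨hqp, hq⟩ := hq
      have := hout q hq hqp
      have := h.1 q hq
      refine ⟨by omega, by omega, ?_⟩
      · first
        | exact Or.inl ⟨q, hq, rfl⟩
        | exact Or.inr ⟨q, hq, rfl⟩
  · rintro ⟨h2, h1, (⟨q, hq, rfl⟩ | ⟨q, hq, rfl⟩)⟩
    · by_cases hqp : q = p
      · subst hqp; omega
      · exact Or.inl ⟨q, Finset.mem_erase.2 ⟨hqp, hq⟩, rfl⟩
    · by_cases hqp : q = p
      · subst hqp; omega
      · exact Or.inr ⟨q, Finset.mem_erase.2 ⟨hqp, hq⟩, rfl⟩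

lemma nested_erase {n : ℕ} {S : Finset (ℕ × ℕ)} (h : NestedFam n S) (p : ℕ × ℕ) :
    NestedFam n (S.erase p) :=
  ⟨fun q hq => h.1 q (Finset.mem_erase.1 hq).2,
   fun q hq r hr => h.2 q (Finset.mem_erase.1 hq).2 r (Finset.mem_erase.1 hr).2⟩

lemma fmap_injOn (n : ℕ) : ∀ k (S S' : Finset (ℕ × ℕ)), S.card = k →
    NestedFam n S → NestedFam n S' → fmap S = fmap S' → S = S' := by
  intro k
  induction k with
  | zero =>
    intro S S' hc h h' heq
    rw [Finset.card_eq_zero] at hc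
    subst hc
    by_contra hne
    have : S'.Nonempty := by
      rcases S'.eq_empty_or_nonempty with rfl | hne'
      · exact absurd rfl hne
      · exact hne'
    obtain ⟨q, hq⟩ := this
    have : q.1 ∈ fmap S' := mem_fmap.2 (Or.inl ⟨q, hq, rfl⟩)
    rw [← heq] at this
    simp [fmap] at this
  | succ k ih =>
    intro S S' hc h h' heq
    have hne : S.Nonempty := Finset.card_pos.1 (by omega)
    have hne' : S'.Nonempty := by
      obtain ⟨q, hq⟩ := hne
      have : q.1 ∈ fmap S' := by
        rw [← heq]; exact mem_fmap.2 (Or.inl ⟨q, hq, rfl⟩)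
      rw [mem_fmap] at this
      rcases this with ⟨r, hr, _⟩ | ⟨r, hr, _⟩ <;> exact ⟨r, hr⟩
    obtain ⟨p, hp, hout⟩ := exists_outermost h hne
    obtain ⟨p', hp', hout'⟩ := exists_outermost h' hne'
    obtain ⟨hm1, hm2, hmm⟩ := outermost_min_max h hp hout
    obtain ⟨hm1', hm2', hmm'⟩ := outermost_min_max h' hp' hout'
    rw [← heq] at hm1' hm2'
    have e1 : p.1 = p'.1 := by
      have := (hmm p'.1 hm1').1
      have := (hmm' p.1 (heq ▸ hm1)).1
      omega
    have e2 : p.2 = p'.2 := by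
      have := (hmm (p'.2 - 1) hm2').2
      have := (hmm' (p.2 - 1) (heq ▸ hm2)).2
      have := h.1 p hp
      have := h'.1 p' hp'
      omega
    have hpp' : p = p' := Prod.ext e1 e2
    have herase : S.erase p = S'.erase p' := by
      apply ih
      · rw [Finset.card_erase_of_mem hp, hc]; omega
      · exact nested_erase h p
      · exact nested_erase h' p'
      · rw [fmap_erase h hp hout, fmap_erase h' hp' hout', heq, e1, e2]
    subst hpp'
    rw [← Finset.insert_erase hp, ← Finset.insert_erase hp', herase]

lemma fmap_surjOn (n : ℕ) (hn : 2 ≤ n) : ∀ k (T : Finset ℕ), T.card = k →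
    T ⊆ Finset.Icc 1 (n - 1) → Even T.card →
    ∃ S, NestedFam n S ∧ fmap S = T := by
  intro k
  induction k using Nat.strong_induction_on with
  | _ k ih =>
    intro T hc hsub hev
    rcases T.eq_empty_or_nonempty with rfl | hne
    · exact ⟨∅, ⟨by simp, by simp⟩, by simp [fmap]⟩
    · have hc2 : 1 < T.card := by
        rcases hev with ⟨m, hm⟩
        have := hne.card_pos
        omega
      set a := T.min' hne with ha
      set b := T.max' hne with hb
      have hab : a < b := T.min'_lt_max'_of_card hc2
      have haT : a ∈ T := T.min'_mem hne
      have hbT : b ∈ T := T.max'_mem hne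
      set T' := (T.erase a).erase b with hT'
      have hbTa : b ∈ T.erase a := Finset.mem_erase.2 ⟨by omega, hbT⟩
      have hcT' : T'.card = T.card - 2 := by
        rw [hT', Finset.card_erase_of_mem hbTa, Finset.card_erase_of_mem haT]; omega
      have hsub' : T' ⊆ T := fun x hx =>
        (Finset.mem_erase.1 ((Finset.mem_erase.1 hx).2)).2
      obtain ⟨S', hS', hf'⟩ := ih (T.card - 2) (by omega) T' hcT'
        (hsub'.trans hsub) (by rw [hcT']; rcases hev with ⟨m, hm⟩; exact ⟨m - 1, by omega⟩)
      have haI := Finset.mem_Icc.1 (hsub haT)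
      have hbI := Finset.mem_Icc.1 (hsub hbT)
      have hkey : ∀ q ∈ S', a < q.1 ∧ q.2 < b + 1 := by
        intro q hq
        have hq1 : q.1 ∈ T' := by
          rw [← hf']; exact mem_fmap.2 (Or.inl ⟨q, hq, rfl⟩)
        have hq2 : q.2 - 1 ∈ T' := by
          rw [← hf']; exact mem_fmap.2 (Or.inr ⟨q, hq, rfl⟩)
        have hbq := hS'.1 q hq
        rw [hT'] at hq1 hq2
        rw [Finset.mem_erase, Finset.mem_erase] at hq1 hq2
        have := T.min'_le q.1 hq1.2.2
        have := T.le_max' (q.2 - 1) hq2.2.2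
        omega
      refine ⟨insert (a, b + 1) S', ⟨?_, ?_⟩, ?_⟩
      · intro p hp
        rcases Finset.mem_insert.1 hp with rfl | hp
        · simp; omega
        · exact hS'.1 p hp
      · intro p hp q hq hpq
        rcases Finset.mem_insert.1 hp with rfl | hp <;>
          rcases Finset.mem_insert.1 hq with rfl | hq
        · exact absurd rfl hpq
        · have := hkey q hq; left; simpa using this
        · have := hkey p hp; right; simpa using this
        · exact hS'.2 p hp q hq hpq
      · rw [show fmap (insert (a, b + 1) S') =
            insert a (insert b (fmap S')) by
            ext x
            simp [fmap, mem_fmap, Finset.mem_insert]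
            tauto]
        rw [hf', hT', Finset.insert_erase hbTa, Finset.insert_erase haT]

lemma card_even_powerset (s : Finset ℕ) (hs : s.Nonempty) :
    ((s.powerset.filter (fun t => Even t.card)).card) = 2 ^ (s.card - 1) := by
  have hsum := Finset.sum_powerset_neg_one_pow_card_of_nonempty hs
  have hsplit : s.powerset.filter (fun t => Even t.card) ∪
      s.powerset.filter (fun t => ¬ Even t.card) = s.powerset :=
    Finset.filter_union_filter_not_eq _ _
  have hdisj : Disjoint (s.powerset.filter (fun t => Even t.card))
      (s.powerset.filter (fun t => ¬ Even t.card)) :=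
    Finset.disjoint_filter_filter_not _ _ _
  set E := s.powerset.filter (fun t => Even t.card)
  set O := s.powerset.filter (fun t => ¬ Even t.card)
  have hEO : E.card + O.card = 2 ^ s.card := by
    rw [← Finset.card_union_of_disjoint hdisj, hsplit, Finset.card_powerset]
  have hES : (∑ m ∈ s.powerset, (-1 : ℤ) ^ m.card) = E.card - O.card := by
    rw [← hsplit, Finset.sum_union hdisj]
    have h1 : (∑ m ∈ E, (-1 : ℤ) ^ m.card) = E.card := by
      rw [Finset.sum_congr rfl (fun m hm => ?_), Finset.sum_const, nsmul_eq_mul, mul_one]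
      have : Even m.card := (Finset.mem_filter.1 hm).2
      exact Even.neg_one_pow this
    have h2 : (∑ m ∈ O, (-1 : ℤ) ^ m.card) = -O.card := by
      rw [Finset.sum_congr rfl (fun m hm => ?_), Finset.sum_const, nsmul_eq_mul, mul_neg_one]
      have : ¬ Even m.card := (Finset.mem_filter.1 hm).2
      exact Odd.neg_one_pow (Nat.not_even_iff_odd.1 this)
    rw [h1, h2]; ring
  rw [hsum] at hES
  have hcard : 1 ≤ s.card := hs.card_pos
  have h2E : 2 * E.card = 2 ^ s.card := by omega
  have : 2 ^ s.card = 2 * 2 ^ (s.card - 1) := by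
    rw [← pow_succ']
    congr 1
    omega
  omega

/-- For every `n ≥ 2`, the number of secondary structures on `[1,n]` (θ = 1) that are
either empty or stem-loops (equivalently, whose base pairs are pairwise nested)
equals `2^(n−2)`. -/
theorem num_empty_or_stem_loops (n : ℕ) (hn : 2 ≤ n) :
    Set.ncard {S : Finset (ℕ × ℕ) | IsSecStr n S ∧ (S = ∅ ∨ IsStemLoop n S)}
      = 2 ^ (n - 2) := by
  rw [setEq]
  set T := (Finset.Icc 1 (n - 1)).powerset.filter (fun t => Even t.card) with hT
  have himg : fmap '' {S | NestedFam n S} = ↑T := by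
    ext t
    simp only [Set.mem_image, Set.mem_setOf_eq, Finset.coe_filter, Finset.mem_powerset,
      Set.mem_setOf_eq, hT]
    constructor
    · rintro ⟨S, hS, rfl⟩
      exact ⟨fmap_subset hS, by rw [fmap_card hS]; exact ⟨S.card, by ring⟩⟩
    · rintro ⟨hsub, hev⟩
      obtain ⟨S, hS, hf⟩ := fmap_surjOn n hn t.card t rfl hsub hev
      exact ⟨S, hS, hf⟩
  have hinj : Set.InjOn fmap {S | NestedFam n S} := by
    intro S hS S' hS' heq
    exact fmap_injOn n S.card S S' rfl hS hS' heq
  have h1 : Set.ncard {S | NestedFam n S} = (fmap '' {S | NestedFam n S}).ncard :=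
    (Set.ncard_image_of_injOn hinj).symm
  rw [h1, himg, Set.ncard_coe_finset]
  have hne : (Finset.Icc 1 (n - 1)).Nonempty := by
    rw [Finset.nonempty_Icc]; omega
  rw [hT, card_even_powerset _ hne, Nat.card_Icc]
  congr 1
end

section
/- For n ≥ 3 let c(n) denote the number of saturated stem-loop structures on [1,n] (with θ = 1). Then c(3) = 1, c(4) = 3, c(5) = 5, c(6) = 7, and for every n ≥ 7 the recurrence c(n) = c(n−2) + 2·c(n−3) + 2·c(n−4) holds. -/
/-- A secondary structure on `[1,n]` is saturated if no base pair can be added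
so that the result is still a secondary structure on `[1,n]`. -/
def IsSaturated (n : ℕ) (S : Finset (ℕ × ℕ)) : Prop :=
  IsSecStr n S ∧ ∀ p : ℕ × ℕ, p ∉ S → ¬ IsSecStr n (insert p S)

/-- The number of saturated stem-loop structures on `[1,n]` (θ = 1). -/
noncomputable def numSatStemLoop (n : ℕ) : ℕ :=
  Set.ncard {S : Finset (ℕ × ℕ) | IsSaturated n S ∧ IsStemLoop n S}

namespace SatSL
open Finset

def T (n : ℕ) : Set (Finset (ℕ × ℕ)) := {S | IsSaturated n S ∧ IsStemLoop n S}

lemma numSatStemLoop_eq (n : ℕ) : numSatStemLoop n = (T n).ncard := rfl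

instance (n : ℕ) (S : Finset (ℕ×ℕ)) : Decidable (IsSecStr n S) := by
  unfold IsSecStr; infer_instance
instance (n : ℕ) (S : Finset (ℕ×ℕ)) : Decidable (IsStemLoop n S) := by
  unfold IsStemLoop; infer_instance

def grid (n : ℕ) : Finset (ℕ × ℕ) :=
  ((range (n+1)) ×ˢ (range (n+1))).filter fun p => 1 ≤ p.1 ∧ p.1 + 1 < p.2 ∧ p.2 ≤ n

def SatB (n : ℕ) (S : Finset (ℕ×ℕ)) : Prop :=
  IsSecStr n S ∧ ∀ p ∈ grid n, p ∉ S → ¬ IsSecStr n (insert p S)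
instance (n : ℕ) (S : Finset (ℕ×ℕ)) : Decidable (SatB n S) := by
  unfold SatB; infer_instance

lemma secstr_subset_grid {n : ℕ} {S : Finset (ℕ×ℕ)} (h : IsSecStr n S) : S ⊆ grid n := by
  intro p hp
  have hb := h.1 p hp
  simp only [grid, mem_filter, mem_product, mem_range]
  omega

lemma saturated_iff_satB {n : ℕ} {S : Finset (ℕ×ℕ)} : IsSaturated n S ↔ SatB n S := by
  constructor
  · rintro ⟨h1, h2⟩; exact ⟨h1, fun p _ hp => h2 p hp⟩
  · rintro ⟨h1, h2⟩
    refine ⟨h1, fun p hp hsec => ?_⟩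
    exact h2 p (secstr_subset_grid hsec (mem_insert_self p S)) hp hsec

lemma T_eq (n : ℕ) :
    T n = ↑(((grid n).powerset).filter (fun S => SatB n S ∧ IsStemLoop n S)) := by
  ext S
  simp only [T, Set.mem_setOf_eq, coe_filter, Set.mem_setOf_eq, mem_powerset]
  rw [saturated_iff_satB]
  constructor
  · rintro ⟨h1, h2⟩; exact ⟨secstr_subset_grid h1.1, h1, h2⟩
  · rintro ⟨_, h1, h2⟩; exact ⟨h1, h2⟩

lemma T_finite (n : ℕ) : (T n).Finite := by
  rw [T_eq]; exact Finset.finite_toSet _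

set_option maxRecDepth 40000 in
lemma base3 : numSatStemLoop 3 = 1 := by
  rw [numSatStemLoop_eq, T_eq, Set.ncard_coe_finset]; decide

set_option maxRecDepth 40000 in
lemma base4 : numSatStemLoop 4 = 3 := by
  rw [numSatStemLoop_eq, T_eq, Set.ncard_coe_finset]; decide

set_option maxRecDepth 40000 in
lemma base5 : numSatStemLoop 5 = 5 := by
  rw [numSatStemLoop_eq, T_eq, Set.ncard_coe_finset]; decide

set_option maxRecDepth 40000 in
lemma base6 : numSatStemLoop 6 = 7 := by
  rw [numSatStemLoop_eq, T_eq, Set.ncard_coe_finset]; decide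



lemma insert_secstr {n : ℕ} {S : Finset (ℕ×ℕ)} (hS : IsSecStr n S) {q : ℕ×ℕ}
    (hb : 1 ≤ q.1 ∧ q.1 + 1 < q.2 ∧ q.2 ≤ n)
    (hcond : ∀ r ∈ S, (q.1 ≠ r.1 ∧ q.1 ≠ r.2 ∧ q.2 ≠ r.1 ∧ q.2 ≠ r.2) ∧
      ¬(q.1 < r.1 ∧ r.1 < q.2 ∧ q.2 < r.2) ∧ ¬(r.1 < q.1 ∧ q.1 < r.2 ∧ r.2 < q.2)) :
    IsSecStr n (insert q S) := by
  refine ⟨?_, ?_, ?_⟩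
  · intro p hp
    rcases Finset.mem_insert.1 hp with rfl | hp
    · exact hb
    · exact hS.1 p hp
  · intro p hp r hr hpr
    rcases Finset.mem_insert.1 hp with h1 | h1 <;> rcases Finset.mem_insert.1 hr with h2 | h2
    · exact absurd (h1.trans h2.symm) hpr
    · subst h1; exact (hcond r h2).1
    · subst h2; have := (hcond p h1).1; omega
    · exact hS.2.1 p h1 r h2 hpr
  · intro p hp r hr
    rcases Finset.mem_insert.1 hp with h1 | h1 <;> rcases Finset.mem_insert.1 hr with h2 | h2
    · subst h1; subst h2; omega
    · subst h1; exact (hcond r h2).2.1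
    · subst h2; exact (hcond p h1).2.2
    · exact hS.2.2 p h1 r h2

lemma nested {n : ℕ} {S : Finset (ℕ×ℕ)} (hS : IsSecStr n S) {p0 : ℕ×ℕ} (hp0 : p0 ∈ S)
    (hst : ∀ q ∈ S, q ≠ p0 → q.1 < p0.1 ∧ p0.2 < q.2) :
    ∀ q ∈ S, ∀ r ∈ S, q.1 < r.1 → r.2 < q.2 := by
  intro q hq r hr hlt
  have hqr : q ≠ r := fun h => by subst h; omega
  have hends := hS.2.1 q hq r hr hqr
  have hcross := hS.2.2 q hq r hr
  have hb0 := hS.1 p0 hp0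
  rcases eq_or_ne q p0 with rfl | hq0
  · rcases eq_or_ne r q with rfl | hr0
    · omega
    · have := hst r hr hr0; omega
  · have h1 := hst q hq hq0
    rcases eq_or_ne r p0 with rfl | hr0
    · omega
    · have h2 := hst r hr hr0; omega

lemma exists_outer {n : ℕ} {S : Finset (ℕ×ℕ)} (hS : IsSecStr n S) {p0 : ℕ×ℕ} (hp0 : p0 ∈ S)
    (hst : ∀ q ∈ S, q ≠ p0 → q.1 < p0.1 ∧ p0.2 < q.2) :
    ∃ m ∈ S, ∀ q ∈ S, m.1 ≤ q.1 ∧ q.2 ≤ m.2 := by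
  obtain ⟨m, hm, hmin⟩ := S.exists_min_image Prod.fst ⟨p0, hp0⟩
  refine ⟨m, hm, fun q hq => ⟨hmin q hq, ?_⟩⟩
  rcases eq_or_ne q m with rfl | hqm
  · exact le_rfl
  · have hends := hS.2.1 q hq m hm hqm
    have hlt : m.1 < q.1 := lt_of_le_of_ne (hmin q hq) (Ne.symm hends.1)
    exact le_of_lt (nested hS hp0 hst m hm q hq hlt)

def Cl (n a b : ℕ) : Set (Finset (ℕ×ℕ)) :=
  {S | (IsSaturated n S ∧ IsStemLoop n S) ∧ (a,b) ∈ S ∧ ∀ q ∈ S, a ≤ q.1 ∧ q.2 ≤ b}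

lemma Cl_subset_T (n a b : ℕ) : Cl n a b ⊆ T n := fun _ h => h.1

lemma Cl_bounds {n a b : ℕ} {S : Finset (ℕ×ℕ)} (hS : S ∈ Cl n a b) :
    ∀ q ∈ S.erase (a,b), a + 1 ≤ q.1 ∧ q.1 + 1 < q.2 ∧ q.2 + 1 ≤ b := by
  intro q hq
  obtain ⟨hq1, hq2⟩ := Finset.mem_erase.1 hq
  have hsec : IsSecStr n S := hS.1.1.1
  have hb := hsec.1 q hq2
  have hub := hS.2.2 q hq2
  have hends := hsec.2.1 q hq2 (a,b) hS.2.1 hq1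
  dsimp only at hends
  omega

lemma Cl_disj {n a b a' b' : ℕ} (h : (a,b) ≠ (a',b')) : Disjoint (Cl n a b) (Cl n a' b') := by
  rw [Set.disjoint_left]
  rintro S ⟨_, hm, hub⟩ ⟨_, hm', hub'⟩
  have h1 := hub _ hm'
  have h2 := hub' _ hm
  dsimp only at h1 h2
  simp only [ne_eq, Prod.mk.injEq, not_and] at h
  omega

lemma cover {n : ℕ} (hn : 7 ≤ n) :
    T n = Cl n 1 n ∪ (Cl n 2 n ∪ (Cl n 3 n ∪ (Cl n 1 (n-1) ∪ Cl n 1 (n-2)))) := by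
  apply Set.Subset.antisymm
  · intro S hS
    obtain ⟨hsat, hsl⟩ := hS
    obtain ⟨hsec, p0, hp0, hst⟩ := hsl
    obtain ⟨m, hm, houter⟩ := exists_outer hsec hp0 hst
    have hbnd := hsec.1 m hm
    have claim1 : m.1 = 1 ∨ m.2 = n := by
      by_contra h
      push_neg at h
      refine hsat.2 (m.1 - 1, m.2 + 1) (fun hmem => ?_) (insert_secstr hsec (by dsimp only; omega) ?_)
      · have := houter _ hmem; dsimp only at this; omega
      · intro r hr
        have h1 := houter r hr
        have h2 := hsec.1 r hr
        dsimp only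
        omega
    have claim2 : n ≤ m.2 + 2 := by
      by_contra h
      push_neg at h
      refine hsat.2 (m.2 + 1, m.2 + 3) (fun hmem => ?_) (insert_secstr hsec (by dsimp only; omega) ?_)
      · have := houter _ hmem; dsimp only at this; omega
      · intro r hr
        have h1 := houter r hr
        have h2 := hsec.1 r hr
        dsimp only
        omega
    have claim3 : m.1 ≤ 3 := by
      by_contra h
      push_neg at h
      refine hsat.2 (1, 3) (fun hmem => ?_) (insert_secstr hsec (by dsimp only; omega) ?_)
      · have := houter _ hmem; dsimp only at this; omega
      · intro r hr
        have h1 := houter r hr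
        have h2 := hsec.1 r hr
        dsimp only
        omega
    have hmem : ∀ a b : ℕ, m = (a, b) → S ∈ Cl n a b := by
      rintro a b rfl
      exact ⟨⟨hsat, hsec, p0, hp0, hst⟩, hm, houter⟩
    have hme : m = (m.1, m.2) := rfl
    rcases claim1 with h1 | h1
    · have : m.2 = n ∨ m.2 = n - 1 ∨ m.2 = n - 2 := by omega
      rcases this with h2 | h2 | h2
      · exact Or.inl (hmem 1 n (by rw [hme, h1, h2]))
      · exact Or.inr (Or.inr (Or.inr (Or.inl (hmem 1 (n-1) (by rw [hme, h1, h2])))))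
      · exact Or.inr (Or.inr (Or.inr (Or.inr (hmem 1 (n-2) (by rw [hme, h1, h2])))))
    · have : m.1 = 1 ∨ m.1 = 2 ∨ m.1 = 3 := by omega
      rcases this with h2 | h2 | h2
      · exact Or.inl (hmem 1 n (by rw [hme, h1, h2]))
      · exact Or.inr (Or.inl (hmem 2 n (by rw [hme, h1, h2])))
      · exact Or.inr (Or.inr (Or.inl (hmem 3 n (by rw [hme, h1, h2]))))
  · intro S hS
    rcases hS with h | h | h | h | h <;> exact h.1


def shdown (a : ℕ) (q : ℕ×ℕ) : ℕ×ℕ := (q.1 - a, q.2 - a)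
def shup (a : ℕ) (q : ℕ×ℕ) : ℕ×ℕ := (q.1 + a, q.2 + a)
def phi (a b : ℕ) (S : Finset (ℕ×ℕ)) : Finset (ℕ×ℕ) := (S.erase (a,b)).image (shdown a)
def psi (a b : ℕ) (S : Finset (ℕ×ℕ)) : Finset (ℕ×ℕ) := insert (a,b) (S.image (shup a))

lemma maps_phi {n a b : ℕ} (h3 : a ≤ 3) (hb2 : n ≤ b + 2) (hbn : b ≤ n)
    (hab : a + 4 ≤ b) {S : Finset (ℕ×ℕ)} (hS : S ∈ Cl n a b) :
    phi a b S ∈ T (b - a - 1) := by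
  obtain ⟨⟨hsat, hsl⟩, hmemab, hub⟩ := hS
  have hsec := hsat.1
  have hbd := Cl_bounds ⟨⟨hsat, hsl⟩, hmemab, hub⟩
  have hsec' : IsSecStr (b - a - 1) (phi a b S) := by
    refine ⟨?_, ?_, ?_⟩
    · intro p hp
      obtain ⟨q, hq, rfl⟩ := Finset.mem_image.1 hp
      have := hbd q hq
      simp only [shdown]
      omega
    · intro p hp r hr hpr
      obtain ⟨q1, hq1, rfl⟩ := Finset.mem_image.1 hp
      obtain ⟨q2, hq2, rfl⟩ := Finset.mem_image.1 hr
      have hb1 := hbd q1 hq1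
      have hb2' := hbd q2 hq2
      have hq12 : q1 ≠ q2 := fun he => hpr (by rw [he])
      have := hsec.2.1 q1 (Finset.mem_of_mem_erase hq1) q2 (Finset.mem_of_mem_erase hq2) hq12
      simp only [shdown]
      omega
    · intro p hp r hr
      obtain ⟨q1, hq1, rfl⟩ := Finset.mem_image.1 hp
      obtain ⟨q2, hq2, rfl⟩ := Finset.mem_image.1 hr
      have hb1 := hbd q1 hq1
      have hb2' := hbd q2 hq2
      have := hsec.2.2 q1 (Finset.mem_of_mem_erase hq1) q2 (Finset.mem_of_mem_erase hq2)
      simp only [shdown]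
      omega
  have htwo : ∃ r ∈ S, r ≠ (a,b) := by
    by_contra h
    push_neg at h
    refine hsat.2 (a+1, a+3) (fun hmem => ?_) (insert_secstr hsec (by dsimp only; omega) ?_)
    · have := h _ hmem
      simp only [Prod.mk.injEq] at this
      omega
    · intro r hr
      have := h r hr
      subst this
      dsimp only
      omega
  have hsat' : ∀ p : ℕ×ℕ, p ∉ phi a b S → ¬ IsSecStr (b-a-1) (insert p (phi a b S)) := by
    rintro ⟨p1, p2⟩ hp hins
    have hpb := hins.1 _ (Finset.mem_insert_self _ _)
    dsimp only at hpb
    have hqS : (p1 + a, p2 + a) ∉ S := by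
      intro hmem
      have hne : (p1 + a, p2 + a) ≠ (a, b) := by
        intro he
        rw [Prod.mk.injEq] at he
        omega
      apply hp
      refine Finset.mem_image.2 ⟨(p1+a, p2+a), Finset.mem_erase.2 ⟨hne, hmem⟩, ?_⟩
      simp only [shdown, Prod.mk.injEq]
      omega
    refine hsat.2 (p1 + a, p2 + a) hqS (insert_secstr hsec (by dsimp only; omega) ?_)
    intro r hr
    rcases eq_or_ne r (a, b) with rfl | hrne
    · dsimp only
      omega
    · have hre := Finset.mem_erase.2 ⟨hrne, hr⟩
      have hrb := hbd r hre
      have hr' : shdown a r ∈ phi a b S := Finset.mem_image_of_mem _ hre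
      have hne' : (p1, p2) ≠ shdown a r := fun h => hp (by rw [h]; exact hr')
      have hE := hins.2.1 _ (Finset.mem_insert_self _ _) _ (Finset.mem_insert_of_mem hr') hne'
      have hC1 := hins.2.2 _ (Finset.mem_insert_self _ _) _ (Finset.mem_insert_of_mem hr')
      have hC2 := hins.2.2 _ (Finset.mem_insert_of_mem hr') _ (Finset.mem_insert_self _ _)
      simp only [shdown] at hE hC1 hC2
      dsimp only at hE hC1 hC2 ⊢
      omega
  obtain ⟨_, p0, hp0, hst⟩ := hsl
  have hp0ne : p0 ≠ (a,b) := by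
    rintro rfl
    obtain ⟨r, hr, hrne⟩ := htwo
    have h1 := hst r hr hrne
    have h2 := hub r hr
    dsimp only at h1 h2
    omega
  have hp0e := Finset.mem_erase.2 ⟨hp0ne, hp0⟩
  have hp0b := hbd p0 hp0e
  refine ⟨⟨hsec', hsat'⟩, hsec', shdown a p0, Finset.mem_image_of_mem _ hp0e, ?_⟩
  intro q hq hqne
  obtain ⟨r, hre, rfl⟩ := Finset.mem_image.1 hq
  have hrb := hbd r hre
  have hrne : r ≠ p0 := fun he => hqne (by rw [he])
  have := hst r (Finset.mem_of_mem_erase hre) hrne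
  simp only [shdown]
  omega

lemma maps_psi {n a b : ℕ} (h1 : 1 ≤ a) (h3 : a ≤ 3) (hb2 : n ≤ b + 2) (hbn : b ≤ n)
    (hor : a = 1 ∨ b = n) (hab : a + 4 ≤ b) {S' : Finset (ℕ×ℕ)} (hS' : S' ∈ T (b - a - 1)) :
    psi a b S' ∈ Cl n a b := by
  obtain ⟨hsat', hsl'⟩ := hS'
  have hbd : ∀ q ∈ S', 1 ≤ q.1 ∧ q.1 + 1 < q.2 ∧ q.2 ≤ b - a - 1 := hsat'.1.1
  have hsec : IsSecStr n (psi a b S') := by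
    refine ⟨?_, ?_, ?_⟩
    · intro p hp
      rcases Finset.mem_insert.1 hp with h | h
      · subst h; dsimp only; omega
      · obtain ⟨q, hq, rfl⟩ := Finset.mem_image.1 h
        have := hbd q hq
        simp only [shup]
        omega
    · intro p hp r hr hpr
      rcases Finset.mem_insert.1 hp with h | h <;> rcases Finset.mem_insert.1 hr with h2 | h2
      · exact absurd (h.trans h2.symm) hpr
      · subst h
        obtain ⟨q, hq, rfl⟩ := Finset.mem_image.1 h2
        have := hbd q hq
        simp only [shup]
        omega
      · subst h2
        obtain ⟨q, hq, rfl⟩ := Finset.mem_image.1 h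
        have := hbd q hq
        simp only [shup]
        omega
      · obtain ⟨q1, hq1, rfl⟩ := Finset.mem_image.1 h
        obtain ⟨q2, hq2, rfl⟩ := Finset.mem_image.1 h2
        have hq12 : q1 ≠ q2 := fun he => hpr (by rw [he])
        have := hsat'.1.2.1 q1 hq1 q2 hq2 hq12
        simp only [shup]
        omega
    · intro p hp r hr
      rcases Finset.mem_insert.1 hp with h | h <;> rcases Finset.mem_insert.1 hr with h2 | h2
      · subst h
        rw [h2]
        dsimp only
        omega
      · subst h
        obtain ⟨q, hq, rfl⟩ := Finset.mem_image.1 h2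
        have := hbd q hq
        simp only [shup]
        omega
      · subst h2
        obtain ⟨q, hq, rfl⟩ := Finset.mem_image.1 h
        have := hbd q hq
        simp only [shup]
        omega
      · obtain ⟨q1, hq1, rfl⟩ := Finset.mem_image.1 h
        obtain ⟨q2, hq2, rfl⟩ := Finset.mem_image.1 h2
        have hb1 := hbd q1 hq1
        have hb2' := hbd q2 hq2
        have := hsat'.1.2.2 q1 hq1 q2 hq2
        simp only [shup]
        omega
  have hsat : ∀ p : ℕ×ℕ, p ∉ psi a b S' → ¬ IsSecStr n (insert p (psi a b S')) := by
    rintro ⟨p1, p2⟩ hp hins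
    have habm : (a,b) ∈ insert (p1,p2) (psi a b S') :=
      Finset.mem_insert_of_mem (Finset.mem_insert_self _ _)
    have hpb := hins.1 _ (Finset.mem_insert_self _ _)
    have hpne : (p1,p2) ≠ (a,b) := fun h => hp (by rw [h]; exact Finset.mem_insert_self _ _)
    have hE := hins.2.1 _ (Finset.mem_insert_self _ _) _ habm hpne
    have hC1 := hins.2.2 _ (Finset.mem_insert_self _ _) _ habm
    have hC2 := hins.2.2 _ habm _ (Finset.mem_insert_self _ _)
    dsimp only at hE hC1 hC2 hpb
    have hint : a < p1 ∧ p2 < b := by omega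
    have hp'S : (p1 - a, p2 - a) ∉ S' := by
      intro hmem
      apply hp
      refine Finset.mem_insert_of_mem (Finset.mem_image.2 ⟨_, hmem, ?_⟩)
      simp only [shup, Prod.mk.injEq]
      omega
    refine hsat'.2 (p1 - a, p2 - a) hp'S (insert_secstr hsat'.1 (by dsimp only; omega) ?_)
    intro r hr
    have hrb := hbd r hr
    have hrpsi : shup a r ∈ psi a b S' :=
      Finset.mem_insert_of_mem (Finset.mem_image_of_mem _ hr)
    have hne2 : (p1,p2) ≠ shup a r := fun h => hp (by rw [h]; exact hrpsi)
    have hE2 := hins.2.1 _ (Finset.mem_insert_self _ _) _ (Finset.mem_insert_of_mem hrpsi) hne2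
    have hC3 := hins.2.2 _ (Finset.mem_insert_self _ _) _ (Finset.mem_insert_of_mem hrpsi)
    have hC4 := hins.2.2 _ (Finset.mem_insert_of_mem hrpsi) _ (Finset.mem_insert_self _ _)
    simp only [shup] at hE2 hC3 hC4
    dsimp only at hE2 hC3 hC4 ⊢
    omega
  obtain ⟨_, p0, hp0, hst⟩ := hsl'
  have hp0b := hbd p0 hp0
  refine ⟨⟨⟨hsec, hsat⟩, hsec, shup a p0,
    Finset.mem_insert_of_mem (Finset.mem_image_of_mem _ hp0), ?_⟩,
    Finset.mem_insert_self _ _, ?_⟩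
  · intro q hq hqne
    rcases Finset.mem_insert.1 hq with h | h
    · subst h
      simp only [shup]
      omega
    · obtain ⟨r, hr, rfl⟩ := Finset.mem_image.1 h
      have hrne : r ≠ p0 := fun he => hqne (by rw [he])
      have := hst r hr hrne
      have hrb := hbd r hr
      simp only [shup]
      omega
  · intro q hq
    rcases Finset.mem_insert.1 hq with h | h
    · subst h; dsimp only; omega
    · obtain ⟨r, hr, rfl⟩ := Finset.mem_image.1 h
      have := hbd r hr
      simp only [shup]
      omega

lemma phi_psi {a b : ℕ} {S' : Finset (ℕ×ℕ)}
    (hbd : ∀ q ∈ S', 1 ≤ q.1) : phi a b (psi a b S') = S' := by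
  have hnm : (a,b) ∉ S'.image (shup a) := by
    intro hmem
    obtain ⟨q, hq, he⟩ := Finset.mem_image.1 hmem
    have := hbd q hq
    rw [shup, Prod.mk.injEq] at he
    omega
  unfold phi psi
  rw [Finset.erase_insert_eq_erase, Finset.erase_eq_of_notMem hnm, Finset.image_image]
  have himg : S'.image (shdown a ∘ shup a) = S'.image id :=
    Finset.image_congr (fun x _ => by
      rw [Prod.ext_iff]
      constructor <;> simp [shup, shdown])
  rw [himg, Finset.image_id]

lemma psi_phi {n a b : ℕ} {S : Finset (ℕ×ℕ)} (hS : S ∈ Cl n a b) :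
    psi a b (phi a b S) = S := by
  have hbd := Cl_bounds hS
  unfold phi psi
  rw [Finset.image_image]
  have himg : (S.erase (a,b)).image (shup a ∘ shdown a) = (S.erase (a,b)).image id :=
    Finset.image_congr (fun x hx => by
      have := hbd x hx
      rw [Prod.ext_iff]
      constructor <;> (simp only [Function.comp, shup, shdown, id_eq]; omega))
  rw [himg, Finset.image_id, Finset.insert_erase hS.2.1]

lemma ncard_Cl {n a b : ℕ} (h1 : 1 ≤ a) (h3 : a ≤ 3) (hb2 : n ≤ b + 2) (hbn : b ≤ n)
    (hor : a = 1 ∨ b = n) (hab : a + 4 ≤ b) :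
    (Cl n a b).ncard = numSatStemLoop (b - a - 1) := by
  have hbij : Set.BijOn (phi a b) (Cl n a b) (T (b - a - 1)) := by
    refine Set.InvOn.bijOn (f' := psi a b) ⟨?_, ?_⟩ ?_ ?_
    · intro S hS; exact psi_phi hS
    · intro S' hS'; exact phi_psi (fun q hq => (hS'.1.1.1 q hq).1)
    · intro S hS; exact maps_phi h3 hb2 hbn hab hS
    · intro S' hS'; exact maps_psi h1 h3 hb2 hbn hor hab hS'
  rw [numSatStemLoop_eq, ← hbij.image_eq, Set.ncard_image_of_injOn hbij.injOn]

lemma main_rec {n : ℕ} (hn : 7 ≤ n) :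
    numSatStemLoop n = numSatStemLoop (n - 2) + 2 * numSatStemLoop (n - 3)
      + 2 * numSatStemLoop (n - 4) := by
  have fin : ∀ a b, (Cl n a b).Finite := fun a b => (T_finite n).subset (Cl_subset_T n a b)
  have d1 : Disjoint (Cl n 1 n) (Cl n 2 n ∪ (Cl n 3 n ∪ (Cl n 1 (n-1) ∪ Cl n 1 (n-2)))) := by
    simp only [Set.disjoint_union_right]
    refine ⟨Cl_disj ?_, Cl_disj ?_, Cl_disj ?_, Cl_disj ?_⟩ <;>
      (intro h; rw [Prod.mk.injEq] at h; omega)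
  have d2 : Disjoint (Cl n 2 n) (Cl n 3 n ∪ (Cl n 1 (n-1) ∪ Cl n 1 (n-2))) := by
    simp only [Set.disjoint_union_right]
    refine ⟨Cl_disj ?_, Cl_disj ?_, Cl_disj ?_⟩ <;>
      (intro h; rw [Prod.mk.injEq] at h; omega)
  have d3 : Disjoint (Cl n 3 n) (Cl n 1 (n-1) ∪ Cl n 1 (n-2)) := by
    simp only [Set.disjoint_union_right]
    refine ⟨Cl_disj ?_, Cl_disj ?_⟩ <;>
      (intro h; rw [Prod.mk.injEq] at h; omega)
  have d4 : Disjoint (Cl n 1 (n-1)) (Cl n 1 (n-2)) := by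
    refine Cl_disj ?_
    intro h; rw [Prod.mk.injEq] at h; omega
  have e1 : (Cl n 1 n).ncard = numSatStemLoop (n - 2) := by
    rw [ncard_Cl le_rfl (by omega) (by omega) le_rfl (Or.inl rfl) (by omega),
      show n - 1 - 1 = n - 2 by omega]
  have e2 : (Cl n 2 n).ncard = numSatStemLoop (n - 3) := by
    rw [ncard_Cl (by omega) (by omega) (by omega) le_rfl (Or.inr rfl) (by omega),
      show n - 2 - 1 = n - 3 by omega]
  have e3 : (Cl n 3 n).ncard = numSatStemLoop (n - 4) := by
    rw [ncard_Cl (by omega) (by omega) (by omega) le_rfl (Or.inr rfl) (by omega),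
      show n - 3 - 1 = n - 4 by omega]
  have e4 : (Cl n 1 (n-1)).ncard = numSatStemLoop (n - 3) := by
    rw [ncard_Cl le_rfl (by omega) (by omega) (by omega) (Or.inl rfl) (by omega),
      show n - 1 - 1 - 1 = n - 3 by omega]
  have e5 : (Cl n 1 (n-2)).ncard = numSatStemLoop (n - 4) := by
    rw [ncard_Cl le_rfl (by omega) (by omega) (by omega) (Or.inl rfl) (by omega),
      show n - 2 - 1 - 1 = n - 4 by omega]
  rw [numSatStemLoop_eq, cover hn,
    Set.ncard_union_eq d1 (fin 1 n)
      ((fin 2 n).union ((fin 3 n).union ((fin 1 (n-1)).union (fin 1 (n-2))))),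
    Set.ncard_union_eq d2 (fin 2 n) ((fin 3 n).union ((fin 1 (n-1)).union (fin 1 (n-2)))),
    Set.ncard_union_eq d3 (fin 3 n) ((fin 1 (n-1)).union (fin 1 (n-2))),
    Set.ncard_union_eq d4 (fin 1 (n-1)) (fin 1 (n-2)),
    e1, e2, e3, e4, e5]
  ring
end SatSL

/-- The number `c(n)` of saturated stem-loops satisfies `c(3) = 1`, `c(4) = 3`,
`c(5) = 5`, `c(6) = 7`, and `c(n) = c(n−2) + 2c(n−3) + 2c(n−4)` for all `n ≥ 7`. -/
theorem sat_stem_loop_recurrence :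
    numSatStemLoop 3 = 1 ∧ numSatStemLoop 4 = 3 ∧ numSatStemLoop 5 = 5 ∧
    numSatStemLoop 6 = 7 ∧
    ∀ n : ℕ, 7 ≤ n →
      numSatStemLoop n
        = numSatStemLoop (n - 2) + 2 * numSatStemLoop (n - 3)
          + 2 * numSatStemLoop (n - 4) := by
  exact ⟨SatSL.base3, SatSL.base4, SatSL.base5, SatSL.base6, fun n hn => SatSL.main_rec hn⟩
end

section
/- Let a₁, a₂, a₃ be the three (distinct) complex roots of the polynomial Q(z) = 1 − z − 2z³. Then for every integer n ≥ 3, the number of saturated stem-loop structures on [1,n] (with θ = 1) equals Σ_{i=1}^{3} a_i^{−n}/(1 + 6a_i²). (The right-hand side is the partial-fraction expansion of the rational generating function z/(1 − z − 2z³), using that Q′(z) = −1 − 6z².) -/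
namespace SatSLAux

def shift (k : ℕ) (S : Finset (ℕ × ℕ)) : Finset (ℕ × ℕ) :=
  S.image (fun q => (q.1 + k, q.2 + k))

def unshift (k : ℕ) (S : Finset (ℕ × ℕ)) : Finset (ℕ × ℕ) :=
  S.image (fun q => (q.1 - k, q.2 - k))

lemma mem_shift {k : ℕ} {S : Finset (ℕ × ℕ)} {p : ℕ × ℕ} :
    p ∈ shift k S ↔ ∃ q ∈ S, p = (q.1 + k, q.2 + k) := by
  simp only [shift, Finset.mem_image]
  constructor
  · rintro ⟨x, h, rfl⟩; exact ⟨x, h, rfl⟩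
  · rintro ⟨x, h, rfl⟩; exact ⟨x, h, rfl⟩

lemma mem_shift_of {k : ℕ} {S : Finset (ℕ × ℕ)} {q : ℕ × ℕ} (h : q ∈ S) :
    (q.1 + k, q.2 + k) ∈ shift k S := Finset.mem_image_of_mem _ h

lemma shift_injective (k : ℕ) : Function.Injective (shift k) := by
  apply Finset.image_injective
  intro x y hxy
  simp [Prod.ext_iff] at hxy
  exact Prod.ext (by omega) (by omega)

lemma shift_zero (S : Finset (ℕ × ℕ)) : shift 0 S = S := by
  ext p; simp [mem_shift]

lemma shift_insert (k : ℕ) (p : ℕ × ℕ) (S : Finset (ℕ × ℕ)) :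
    shift k (insert p S) = insert (p.1 + k, p.2 + k) (shift k S) := by
  simp [shift, Finset.image_insert]

lemma shift_unshift {k m : ℕ} {S : Finset (ℕ × ℕ)}
    (hb : ∀ q ∈ S, k + 1 ≤ q.1 ∧ q.1 < q.2 ∧ q.2 ≤ k + m) : shift k (unshift k S) = S := by
  ext p
  simp only [mem_shift, unshift, Finset.mem_image]
  constructor
  · rintro ⟨q, ⟨r, hr, rfl⟩, rfl⟩
    have hbb := hb r hr
    have h1 : r.1 - k + k = r.1 := by omega
    have h2 : r.2 - k + k = r.2 := by omega
    simpa [h1, h2] using hr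
  · intro hp
    refine ⟨(p.1 - k, p.2 - k), ⟨p, hp, rfl⟩, ?_⟩
    have := hb p hp
    ext <;> simp <;> omega

lemma secstr_subset {n : ℕ} {S T : Finset (ℕ × ℕ)} (h : IsSecStr n S) (hTS : T ⊆ S) :
    IsSecStr n T :=
  ⟨fun p hp => h.1 p (hTS hp), fun p hp q hq => h.2.1 p (hTS hp) q (hTS hq),
   fun p hp q hq => h.2.2 p (hTS hp) q (hTS hq)⟩

lemma insert_secstr {n : ℕ} {S : Finset (ℕ × ℕ)} {p : ℕ × ℕ} (hS : IsSecStr n S)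
    (hb : 1 ≤ p.1 ∧ p.1 + 1 < p.2 ∧ p.2 ≤ n)
    (hd : ∀ q ∈ S, p.1 ≠ q.1 ∧ p.1 ≠ q.2 ∧ p.2 ≠ q.1 ∧ p.2 ≠ q.2)
    (hc : ∀ q ∈ S, ¬(p.1 < q.1 ∧ q.1 < p.2 ∧ p.2 < q.2) ∧
      ¬(q.1 < p.1 ∧ p.1 < q.2 ∧ q.2 < p.2)) :
    IsSecStr n (insert p S) := by
  obtain ⟨h1, h2, h3⟩ := hS
  refine ⟨?_, ?_, ?_⟩
  · intro q hq
    rcases Finset.mem_insert.mp hq with rfl | hq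
    · exact hb
    · exact h1 q hq
  · intro q hq r hr hqr
    rcases Finset.mem_insert.mp hq with hq1 | hq1
    · rcases Finset.mem_insert.mp hr with hr1 | hr1
      · exact absurd (hq1.trans hr1.symm) hqr
      · rw [hq1]; exact hd r hr1
    · rcases Finset.mem_insert.mp hr with hr1 | hr1
      · rw [hr1]; have := hd q hq1; omega
      · exact h2 q hq1 r hr1 hqr
  · intro q hq r hr
    rcases Finset.mem_insert.mp hq with hq1 | hq1
    · rcases Finset.mem_insert.mp hr with hr1 | hr1
      · rw [hq1, hr1]; omega
      · rw [hq1]; exact (hc r hr1).1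
    · rcases Finset.mem_insert.mp hr with hr1 | hr1
      · rw [hr1]; exact (hc q hq1).2
      · exact h3 q hq1 r hr1

lemma secstr_insert_elim {n : ℕ} {S : Finset (ℕ × ℕ)} {p : ℕ × ℕ} (hp : p ∉ S)
    (h : IsSecStr n (insert p S)) :
    (1 ≤ p.1 ∧ p.1 + 1 < p.2 ∧ p.2 ≤ n) ∧
    (∀ q ∈ S, p.1 ≠ q.1 ∧ p.1 ≠ q.2 ∧ p.2 ≠ q.1 ∧ p.2 ≠ q.2) ∧
    (∀ q ∈ S, ¬(p.1 < q.1 ∧ q.1 < p.2 ∧ p.2 < q.2) ∧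
      ¬(q.1 < p.1 ∧ p.1 < q.2 ∧ q.2 < p.2)) := by
  obtain ⟨h1, h2, h3⟩ := h
  have hps : p ∈ insert p S := Finset.mem_insert_self p S
  refine ⟨h1 p hps, ?_, ?_⟩
  · intro q hq
    exact h2 p hps q (Finset.mem_insert_of_mem hq) (by rintro rfl; exact hp hq)
  · intro q hq
    exact ⟨h3 p hps q (Finset.mem_insert_of_mem hq), h3 q (Finset.mem_insert_of_mem hq) p hps⟩

lemma secstr_shift {m k n : ℕ} {S : Finset (ℕ × ℕ)} (h : IsSecStr m S) (hn : k + m ≤ n) :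
    IsSecStr n (shift k S) := by
  obtain ⟨h1, h2, h3⟩ := h
  refine ⟨?_, ?_, ?_⟩
  · intro p hp
    obtain ⟨q, hq, rfl⟩ := mem_shift.mp hp
    have := h1 q hq; simp; omega
  · intro p hp q hq hpq
    obtain ⟨p', hp', rfl⟩ := mem_shift.mp hp
    obtain ⟨q', hq', rfl⟩ := mem_shift.mp hq
    have hne : p' ≠ q' := by
      rintro rfl; exact hpq rfl
    have := h2 p' hp' q' hq' hne
    simp; omega
  · intro p hp q hq
    obtain ⟨p', hp', rfl⟩ := mem_shift.mp hp
    obtain ⟨q', hq', rfl⟩ := mem_shift.mp hq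
    have := h3 p' hp' q' hq'
    simp; omega

lemma secstr_unshift {n k m : ℕ} {S : Finset (ℕ × ℕ)} (h : IsSecStr n S)
    (hb : ∀ q ∈ S, k + 1 ≤ q.1 ∧ q.2 ≤ k + m) : IsSecStr m (unshift k S) := by
  obtain ⟨h1, h2, h3⟩ := h
  refine ⟨?_, ?_, ?_⟩
  · intro p hp
    obtain ⟨q, hq, rfl⟩ := Finset.mem_image.mp hp
    have := h1 q hq; have := hb q hq; simp; omega
  · intro p hp q hq hpq
    obtain ⟨p', hp', rfl⟩ := Finset.mem_image.mp hp
    obtain ⟨q', hq', rfl⟩ := Finset.mem_image.mp hq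
    have hne : p' ≠ q' := by rintro rfl; exact hpq rfl
    have := h2 p' hp' q' hq' hne
    have := h1 p' hp'; have := h1 q' hq'
    have := hb p' hp'; have := hb q' hq'
    simp; omega
  · intro p hp q hq
    obtain ⟨p', hp', rfl⟩ := Finset.mem_image.mp hp
    obtain ⟨q', hq', rfl⟩ := Finset.mem_image.mp hq
    have := h3 p' hp' q' hq'
    have := h1 p' hp'; have := h1 q' hq'
    have := hb p' hp'; have := hb q' hq'
    simp; omega


def SL (n : ℕ) : Set (Finset (ℕ × ℕ)) := {S | IsSaturated n S ∧ IsStemLoop n S}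

def TL (n : ℕ) : Set (Finset (ℕ × ℕ)) :=
  {S | (IsSaturated n S ∧ IsStemLoop n S) ∧ (1, n) ∈ S}

noncomputable def B (n : ℕ) : ℕ := (TL n).ncard

lemma chain {n : ℕ} {S : Finset (ℕ × ℕ)} (hsl : IsStemLoop n S) :
    ∀ q ∈ S, ∀ q' ∈ S, q.1 < q'.1 → q'.2 < q.2 := by
  obtain ⟨⟨h1, h2, h3⟩, p, hp, hcen⟩ := hsl
  intro q hq q' hq' hlt
  have hqq' : q ≠ q' := by intro h; rw [h] at hlt; omega
  by_cases hq'p : q' = p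
  · subst hq'p
    have := hcen q hq (by intro h; rw [h] at hlt; omega)
    omega
  · by_cases hqp : q = p
    · subst hqp
      have := hcen q' hq' hq'p
      omega
    · have hc1 := hcen q hq hqp
      have hc2 := hcen q' hq' hq'p
      have hcr := h3 q hq q' hq'
      have hd := h2 q hq q' hq' hqq'
      have hb := h1 p hp
      omega

lemma exists_outer {n : ℕ} {S : Finset (ℕ × ℕ)} (hsl : IsStemLoop n S)
    (hne : S.Nonempty) : ∃ o ∈ S, ∀ q ∈ S, o.1 ≤ q.1 ∧ q.2 ≤ o.2 := by
  obtain ⟨o, ho, hmin⟩ := S.exists_min_image (fun q => q.1) hne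
  refine ⟨o, ho, fun q hq => ⟨hmin q hq, ?_⟩⟩
  rcases eq_or_ne q o with rfl | hqo
  · exact le_refl _
  · have := hmin q hq
    rcases lt_or_eq_of_le this with h | h
    · exact le_of_lt (chain hsl o ho q hq h)
    · have hd := hsl.1.2.1 q hq o ho hqo
      omega


lemma tl_three_le {m : ℕ} {S : Finset (ℕ × ℕ)} (hS : S ∈ TL m) : 3 ≤ m := by
  have := hS.1.1.1.1 (1, m) hS.2
  omega

lemma tl_bounds {m : ℕ} {S : Finset (ℕ × ℕ)} (hS : S ∈ TL m) :
    ∀ q ∈ S, 1 ≤ q.1 ∧ q.1 + 1 < q.2 ∧ q.2 ≤ m := hS.1.1.1.1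

/-- Core saturation transfer: a pair `p` inside a window `[lo,hi]` around a shifted
tight saturated structure leads to a contradiction. -/
lemma window_core {m k lo hi : ℕ} {S₀ : Finset (ℕ × ℕ)}
    (hsat : IsSaturated m S₀) (htight : (1, m) ∈ S₀)
    (hm3 : 3 ≤ m)
    (hlo : lo ≤ k + 1) (hhi : k + m ≤ hi) (hl2 : k + 1 ≤ lo + 2) (hr2 : hi ≤ k + m + 2)
    (hmin : k + 1 = lo ∨ hi = k + m)
    {p : ℕ × ℕ} (hp1 : lo ≤ p.1) (hp2 : p.1 + 1 < p.2) (hp3 : p.2 ≤ hi)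
    (hpS : ∀ q ∈ S₀, p.1 ≠ q.1 + k ∧ p.1 ≠ q.2 + k ∧ p.2 ≠ q.1 + k ∧ p.2 ≠ q.2 + k)
    (hpc : ∀ q ∈ S₀, ¬(p.1 < q.1 + k ∧ q.1 + k < p.2 ∧ p.2 < q.2 + k) ∧
      ¬(q.1 + k < p.1 ∧ p.1 < q.2 + k ∧ q.2 + k < p.2)) :
    False := by
  have c1 := hpS (1, m) htight
  have c2 := hpc (1, m) htight
  simp only at c1 c2
  have hkey : k + 1 < p.1 ∧ p.2 < k + m := by omega
  obtain ⟨x, hx⟩ : ∃ x, p.1 = x + k := ⟨p.1 - k, by omega⟩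
  obtain ⟨y, hy⟩ : ∃ y, p.2 = y + k := ⟨p.2 - k, by omega⟩
  have hpnot : (x, y) ∉ S₀ := by
    intro hmem
    have := hpS (x, y) hmem
    simp only at this
    omega
  apply hsat.2 (x, y) hpnot
  apply insert_secstr hsat.1
  · simp only; omega
  · intro q hq
    have := hpS q hq
    simp only; omega
  · intro q hq
    have := hpc q hq
    simp only; omega

/-- Forward direction for the outer decomposition. -/
lemma fwd_A {m e f n : ℕ} {S₀ : Finset (ℕ × ℕ)} (hS₀ : S₀ ∈ TL m)
    (he : e ≤ 2) (hf : f ≤ 2) (hef : e = 0 ∨ f = 0) (hn : n = m + e + f) :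
    shift e S₀ ∈ SL n := by
  obtain ⟨⟨⟨hsec, hsatur⟩, hsec', p₀, hp₀, hcen⟩, htight⟩ := hS₀
  have hm3 : 3 ≤ m := by have := hsec.1 (1, m) htight; omega
  have hshift : IsSecStr n (shift e S₀) := secstr_shift hsec (by omega)
  refine ⟨⟨hshift, ?_⟩, hshift, (p₀.1 + e, p₀.2 + e), mem_shift_of hp₀, ?_⟩
  · -- saturation
    intro p hp hcon
    obtain ⟨hb, hd, hc⟩ := secstr_insert_elim hp hcon
    refine window_core (k := e) (lo := 1) (hi := n) (p := p) ⟨hsec, hsatur⟩ htight hm3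
      (by omega) (by omega) (by omega) (by omega) (by omega) hb.1 hb.2.1 hb.2.2 ?_ ?_
    · intro q hq
      have := hd (q.1 + e, q.2 + e) (mem_shift_of hq)
      simpa using this
    · intro q hq
      have := hc (q.1 + e, q.2 + e) (mem_shift_of hq)
      simpa using this
  · -- stem-loop center
    intro q hq hqp
    obtain ⟨q', hq', rfl⟩ := mem_shift.mp hq
    have hne : q' ≠ p₀ := by
      intro h; rw [h] at hqp; exact hqp rfl
    have := hcen q' hq' hne
    simp only; omega

/-- Forward direction for the peeling decomposition. -/
lemma fwd_B {m g h n : ℕ} {S₀ : Finset (ℕ × ℕ)} (hS₀ : S₀ ∈ TL m)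
    (hg : g ≤ 2) (hh : h ≤ 2) (hgh : g = 0 ∨ h = 0) (hn : n = m + 2 + g + h) :
    insert (1, n) (shift (1 + g) S₀) ∈ TL n := by
  obtain ⟨⟨⟨hsec, hsatur⟩, hsec', p₀, hp₀, hcen⟩, htight⟩ := hS₀
  have hm3 : 3 ≤ m := by have := hsec.1 (1, m) htight; omega
  have hbnd := hsec.1
  have hshift : IsSecStr n (shift (1 + g) S₀) := secstr_shift hsec (by omega)
  have hsecS : IsSecStr n (insert (1, n) (shift (1 + g) S₀)) := by
    apply insert_secstr hshift
    · simp only; omega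
    · intro q hq
      obtain ⟨q', hq', rfl⟩ := mem_shift.mp hq
      have := hbnd q' hq'
      simp only; omega
    · intro q hq
      obtain ⟨q', hq', rfl⟩ := mem_shift.mp hq
      have := hbnd q' hq'
      simp only; omega
  refine ⟨⟨⟨hsecS, ?_⟩, hsecS, (p₀.1 + (1 + g), p₀.2 + (1 + g)),
      Finset.mem_insert_of_mem (mem_shift_of hp₀), ?_⟩, Finset.mem_insert_self _ _⟩
  · -- saturation
    intro p hp hcon
    obtain ⟨hb, hd, hc⟩ := secstr_insert_elim hp hcon
    have hd1 := hd (1, n) (Finset.mem_insert_self _ _)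
    have hc1 := hc (1, n) (Finset.mem_insert_self _ _)
    simp only at hd1 hc1
    refine window_core (k := 1 + g) (lo := 2) (hi := n - 1) (p := p) ⟨hsec, hsatur⟩ htight hm3
      (by omega) (by omega) (by omega) (by omega) (by omega) (by omega) (by omega) (by omega)
      ?_ ?_
    · intro q hq
      have := hd (q.1 + (1 + g), q.2 + (1 + g))
        (Finset.mem_insert_of_mem (mem_shift_of hq))
      simpa using this
    · intro q hq
      have := hc (q.1 + (1 + g), q.2 + (1 + g))
        (Finset.mem_insert_of_mem (mem_shift_of hq))
      simpa using this
  · -- stem-loop center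
    intro q hq hqp
    have hpb := hbnd p₀ hp₀
    rcases Finset.mem_insert.mp hq with hq1 | hq1
    · rw [hq1]; simp only; omega
    · obtain ⟨q', hq', rfl⟩ := mem_shift.mp hq1
      have hne : q' ≠ p₀ := by
        intro hh2; rw [hh2] at hqp; exact hqp rfl
      have := hcen q' hq' hne
      simp only; omega


/-- Backward direction for the outer decomposition. -/
lemma bwd_A {n : ℕ} {S : Finset (ℕ × ℕ)} (hS : S ∈ SL n) :
    ∃ e f m S₀, e ≤ 2 ∧ f ≤ 2 ∧ (e = 0 ∨ f = 0) ∧ n = m + e + f ∧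
      S₀ ∈ TL m ∧ S = shift e S₀ := by
  obtain ⟨⟨hsec, hsatur⟩, hsl⟩ := hS
  obtain ⟨-, p₀, hp₀, hcen⟩ := hsl
  have hne : S.Nonempty := ⟨p₀, hp₀⟩
  obtain ⟨o, ho, houter⟩ := exists_outer ⟨hsec, p₀, hp₀, hcen⟩ hne
  have hob := hsec.1 o ho
  have hbnd := hsec.1
  -- constraint: left external gap ≤ 2
  have c1 : o.1 ≤ 3 := by
    by_contra hcon
    push_neg at hcon
    apply hsatur (1, 3)
    · intro hmem; have := (houter _ hmem).1; simp at this; omega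
    · apply insert_secstr hsec
      · simp only; omega
      · intro q hq
        have := houter q hq; have := hbnd q hq; simp only; omega
      · intro q hq
        have := houter q hq; have := hbnd q hq; simp only; omega
  -- constraint: right external gap ≤ 2
  have c2 : n ≤ o.2 + 2 := by
    by_contra hcon
    push_neg at hcon
    apply hsatur (n - 2, n)
    · intro hmem; have := (houter _ hmem).2; simp at this; omega
    · apply insert_secstr hsec
      · simp only; omega
      · intro q hq
        have := houter q hq; have := hbnd q hq; simp only; omega
      · intro q hq
        have := houter q hq; have := hbnd q hq; simp only; omega
  -- constraint: one external gap is zero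
  have c3 : o.1 = 1 ∨ o.2 = n := by
    by_contra hcon
    push_neg at hcon
    apply hsatur (1, n)
    · intro hmem
      have h1 := (houter _ hmem).1; have h2 := (houter _ hmem).2
      simp at h1 h2; omega
    · apply insert_secstr hsec
      · simp only; omega
      · intro q hq
        have := houter q hq; have := hbnd q hq; simp only; omega
      · intro q hq
        have := houter q hq; have := hbnd q hq; simp only; omega
  -- now build the decomposition
  refine ⟨o.1 - 1, n - o.2, o.2 - o.1 + 1, unshift (o.1 - 1) S, by omega, by omega,
    by omega, by omega, ?_, ?_⟩
  · -- membership in TL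
    have hbS : ∀ q ∈ S, (o.1 - 1) + 1 ≤ q.1 ∧ q.1 < q.2 ∧ q.2 ≤ (o.1 - 1) + (o.2 - o.1 + 1) := by
      intro q hq
      have := houter q hq; have := hbnd q hq; omega
    have hsu : shift (o.1 - 1) (unshift (o.1 - 1) S) = S :=
      shift_unshift (fun q hq => ⟨(hbS q hq).1, (hbS q hq).2.1.trans_le (le_refl _) |>.trans_le (le_refl _) , (hbS q hq).2.2⟩)
    have hsec₀ : IsSecStr (o.2 - o.1 + 1) (unshift (o.1 - 1) S) :=
      secstr_unshift hsec (fun q hq => ⟨(hbS q hq).1, (hbS q hq).2.2⟩)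
    refine ⟨⟨⟨hsec₀, ?_⟩, hsec₀, (p₀.1 - (o.1 - 1), p₀.2 - (o.1 - 1)),
      Finset.mem_image_of_mem _ hp₀, ?_⟩, ?_⟩
    · -- saturation of the unshifted structure
      intro p' hp' hcon
      have hpmem : (p'.1 + (o.1 - 1), p'.2 + (o.1 - 1)) ∉ S := by
        intro hmem
        rw [← hsu] at hmem
        obtain ⟨q, hq, hqe⟩ := mem_shift.mp hmem
        have : p' = q := by
          have := Prod.ext_iff.mp hqe; simp at this
          exact Prod.ext (by omega) (by omega)
        rw [this] at hp'; exact hp' hq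
      apply hsatur _ hpmem
      have : insert (p'.1 + (o.1 - 1), p'.2 + (o.1 - 1)) S
          = shift (o.1 - 1) (insert p' (unshift (o.1 - 1) S)) := by
        rw [shift_insert, hsu]
      rw [this]
      exact secstr_shift hcon (by omega)
    · -- center
      intro q hq hqp
      obtain ⟨q', hq', rfl⟩ := Finset.mem_image.mp hq
      have hb' := hbS q' hq'
      have hbp := hbS p₀ hp₀
      have hne' : q' ≠ p₀ := by
        intro h; rw [h] at hqp; exact hqp rfl
      have := hcen q' hq' hne'
      simp only; omega
    · -- tightness: o maps to (1, m)
      have : ((1 : ℕ), o.2 - o.1 + 1) = (o.1 - (o.1 - 1), o.2 - (o.1 - 1)) := by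
        have := hob; exact Prod.ext (by simp; omega) (by simp; omega)
      rw [this]
      exact Finset.mem_image_of_mem _ ho
  · -- S = shift e S₀
    symm
    apply shift_unshift (m := o.2 - o.1 + 1)
    intro q hq
    have := houter q hq; have := hbnd q hq
    exact ⟨by omega, by omega, by omega⟩


/-- Backward direction for the peeling decomposition. -/
lemma bwd_B {n : ℕ} {S : Finset (ℕ × ℕ)} (hS : S ∈ TL n) (hn5 : 5 ≤ n) :
    ∃ g h m S₀, g ≤ 2 ∧ h ≤ 2 ∧ (g = 0 ∨ h = 0) ∧ n = m + 2 + g + h ∧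
      S₀ ∈ TL m ∧ S = insert (1, n) (shift (1 + g) S₀) := by
  obtain ⟨⟨⟨hsec, hsatur⟩, hsl⟩, htight⟩ := hS
  obtain ⟨-, p₀, hp₀, hcen⟩ := hsl
  have hbnd := hsec.1
  set S' := S.erase (1, n) with hS'def
  have hmemS' : ∀ q, q ∈ S' ↔ q ≠ (1, n) ∧ q ∈ S := fun q => Finset.mem_erase
  have hq1 : ∀ q ∈ S', 2 ≤ q.1 ∧ q.2 ≤ n - 1 := by
    intro q hq
    obtain ⟨hne, hqS⟩ := (hmemS' q).mp hq
    have := hsec.2.1 q hqS (1, n) htight hne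
    have := hbnd q hqS
    simp only at *
    omega
  have hS'ne : S'.Nonempty := by
    rw [Finset.nonempty_iff_ne_empty]
    intro hemp
    have hall : ∀ q ∈ S, q = (1, n) := by
      intro q hq
      by_contra hne
      have : q ∈ S' := (hmemS' q).mpr ⟨hne, hq⟩
      rw [hemp] at this
      exact absurd this (Finset.notMem_empty q)
    apply hsatur (2, 4)
    · intro hmem; have := hall _ hmem
      simp only [Prod.mk.injEq] at this; omega
    · apply insert_secstr hsec
      · simp only; omega
      · intro q hq; have := hall q hq; rw [this]; simp only; omega
      · intro q hq; have := hall q hq; rw [this]; simp only; omega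
  have hS'sec : IsSecStr n S' := secstr_subset hsec (Finset.erase_subset _ _)
  have hp₀ne : p₀ ≠ (1, n) := by
    intro hh
    obtain ⟨q, hq⟩ := hS'ne
    obtain ⟨hne, hqS⟩ := (hmemS' q).mp hq
    have hc2' := hcen q hqS (by rw [hh]; exact hne)
    have hb2' := hbnd q hqS
    rw [hh] at hc2'
    have : q.1 < 1 := hc2'.1
    omega
  have hp₀' : p₀ ∈ S' := (hmemS' p₀).mpr ⟨hp₀ne, hp₀⟩
  have hcen' : ∀ q ∈ S', q ≠ p₀ → q.1 < p₀.1 ∧ p₀.2 < q.2 := by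
    intro q hq hne
    exact hcen q ((hmemS' q).mp hq).2 hne
  obtain ⟨o, ho', houter⟩ := exists_outer ⟨hS'sec, p₀, hp₀', hcen'⟩ hS'ne
  have hoS : o ∈ S := ((hmemS' o).mp ho').2
  have hob := hbnd o hoS
  have ho1 := hq1 o ho'
  have hbS' : ∀ q ∈ S', 2 ≤ q.1 ∧ o.1 ≤ q.1 ∧ q.1 + 1 < q.2 ∧ q.2 ≤ o.2 ∧ q.2 ≤ n - 1 := by
    intro q hq
    have h1 := houter q hq
    have h2 := hq1 q hq
    have h3 := hbnd q ((hmemS' q).mp hq).2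
    exact ⟨h2.1, h1.1, h3.2.1, h1.2, h2.2⟩
  have c1 : o.1 ≤ 4 := by
    by_contra hcon
    push_neg at hcon
    apply hsatur (2, 4)
    · intro hmem
      have hm2 : (2, 4) ∈ S' := (hmemS' _).mpr ⟨by simp, hmem⟩
      have h5 : o.1 ≤ 2 := (houter _ hm2).1
      omega
    · apply insert_secstr hsec
      · simp only; omega
      · intro q hq
        by_cases hqn : q = (1, n)
        · rw [hqn]; simp only; omega
        · have := hbS' q ((hmemS' q).mpr ⟨hqn, hq⟩); simp only; omega
      · intro q hq
        by_cases hqn : q = (1, n)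
        · rw [hqn]; simp only; omega
        · have := hbS' q ((hmemS' q).mpr ⟨hqn, hq⟩); simp only; omega
  have c2 : n - 1 ≤ o.2 + 2 := by
    by_contra hcon
    push_neg at hcon
    apply hsatur (n - 3, n - 1)
    · intro hmem
      have hm2 : (n - 3, n - 1) ∈ S' := (hmemS' _).mpr ⟨by simp; omega, hmem⟩
      have h5 : n - 1 ≤ o.2 := (houter _ hm2).2
      omega
    · apply insert_secstr hsec
      · simp only; omega
      · intro q hq
        by_cases hqn : q = (1, n)
        · rw [hqn]; simp only; omega
        · have := hbS' q ((hmemS' q).mpr ⟨hqn, hq⟩); simp only; omega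
      · intro q hq
        by_cases hqn : q = (1, n)
        · rw [hqn]; simp only; omega
        · have := hbS' q ((hmemS' q).mpr ⟨hqn, hq⟩); simp only; omega
  have c3 : o.1 = 2 ∨ o.2 = n - 1 := by
    by_contra hcon
    push_neg at hcon
    apply hsatur (2, n - 1)
    · intro hmem
      have hm2 : (2, n - 1) ∈ S' := (hmemS' _).mpr ⟨by simp, hmem⟩
      have h5 : o.1 ≤ 2 := (houter _ hm2).1
      omega
    · apply insert_secstr hsec
      · simp only; omega
      · intro q hq
        by_cases hqn : q = (1, n)
        · rw [hqn]; simp only; omega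
        · have := hbS' q ((hmemS' q).mpr ⟨hqn, hq⟩); simp only; omega
      · intro q hq
        by_cases hqn : q = (1, n)
        · rw [hqn]; simp only; omega
        · have := hbS' q ((hmemS' q).mpr ⟨hqn, hq⟩); simp only; omega
  -- build the decomposition
  have hSins : insert (1, n) S' = S := Finset.insert_erase htight
  have hk : 1 + (o.1 - 2) = o.1 - 1 := by omega
  set m := o.2 - o.1 + 1 with hmdef
  have hbw : ∀ q ∈ S', (o.1 - 1) + 1 ≤ q.1 ∧ q.1 < q.2 ∧ q.2 ≤ (o.1 - 1) + m := by
    intro q hq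
    have := hbS' q hq
    omega
  have hsu : shift (o.1 - 1) (unshift (o.1 - 1) S') = S' := shift_unshift hbw
  have hsec₀ : IsSecStr m (unshift (o.1 - 1) S') :=
    secstr_unshift hS'sec (fun q hq => ⟨(hbw q hq).1, (hbw q hq).2.2⟩)
  refine ⟨o.1 - 2, (n - 1) - o.2, m, unshift (o.1 - 1) S', by omega, by omega, by omega,
    by omega, ?_, ?_⟩
  · refine ⟨⟨⟨hsec₀, ?_⟩, hsec₀, (p₀.1 - (o.1 - 1), p₀.2 - (o.1 - 1)),
      Finset.mem_image_of_mem _ hp₀', ?_⟩, ?_⟩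
    · -- saturation
      intro p' hp' hcon
      have hpb := hcon.1 p' (Finset.mem_insert_self _ _)
      have hpmem : (p'.1 + (o.1 - 1), p'.2 + (o.1 - 1)) ∉ S := by
        intro hmem
        have hne : (p'.1 + (o.1 - 1), p'.2 + (o.1 - 1)) ≠ (1, n) := by
          simp only [ne_eq, Prod.mk.injEq, not_and]
          intro hh; omega
        have hmem' : (p'.1 + (o.1 - 1), p'.2 + (o.1 - 1)) ∈ S' := (hmemS' _).mpr ⟨hne, hmem⟩
        rw [← hsu] at hmem'
        obtain ⟨q, hq, hqe⟩ := mem_shift.mp hmem'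
        have : p' = q := by
          have := Prod.ext_iff.mp hqe; simp at this
          exact Prod.ext (by omega) (by omega)
        rw [this] at hp'; exact hp' hq
      apply hsatur _ hpmem
      have hins : insert (p'.1 + (o.1 - 1), p'.2 + (o.1 - 1)) S
          = insert (1, n) (shift (o.1 - 1) (insert p' (unshift (o.1 - 1) S'))) := by
        rw [shift_insert, hsu, ← hSins, Finset.insert_comm]
      rw [hins]
      apply insert_secstr (secstr_shift hcon (by omega))
      · simp only; omega
      · intro r hr
        obtain ⟨q, hq, rfl⟩ := mem_shift.mp hr
        have := hcon.1 q hq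
        simp only; omega
      · intro r hr
        obtain ⟨q, hq, rfl⟩ := mem_shift.mp hr
        have := hcon.1 q hq
        simp only; omega
    · -- center
      intro q hq hqp
      obtain ⟨q', hq', rfl⟩ := Finset.mem_image.mp hq
      have hb' := hbS' q' hq'
      have hbp := hbS' p₀ hp₀'
      have hne' : q' ≠ p₀ := by
        intro hh; rw [hh] at hqp; exact hqp rfl
      have := hcen' q' hq' hne'
      simp only; omega
    · -- tightness
      have heq : ((1 : ℕ), m) = (o.1 - (o.1 - 1), o.2 - (o.1 - 1)) :=
        Prod.ext (by simp; omega) (by simp; omega)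
      rw [heq]
      exact Finset.mem_image_of_mem _ ho'
  · rw [hk, hsu, hSins]


lemma SL_finite (n : ℕ) : (SL n).Finite := by
  apply Set.Finite.subset ((Finset.Iio (n+1) ×ˢ Finset.Iio (n+1)).powerset).finite_toSet
  intro S hS
  rw [Finset.mem_coe, Finset.mem_powerset]
  intro q hq
  have := hS.1.1.1 q hq
  rw [Finset.mem_product]
  constructor <;> rw [Finset.mem_Iio] <;> omega

lemma TL_subset_SL (n : ℕ) : TL n ⊆ SL n := fun S hS => hS.1

lemma TL_finite (n : ℕ) : (TL n).Finite := (SL_finite n).subset (TL_subset_SL n)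

lemma image_shift_zero (X : Set (Finset (ℕ × ℕ))) : shift 0 '' X = X := by
  ext S; simp [shift_zero]

lemma mem_shiftTL_bounds {e m : ℕ} {S : Finset (ℕ × ℕ)} (h : S ∈ shift e '' TL m) :
    (1 + e, m + e) ∈ S ∧ ∀ q ∈ S, 1 + e ≤ q.1 ∧ q.2 ≤ m + e := by
  obtain ⟨S₀, hS₀, rfl⟩ := h
  constructor
  · exact mem_shift_of hS₀.2
  · intro q hq
    obtain ⟨q', hq', rfl⟩ := mem_shift.mp hq
    have := tl_bounds hS₀ q' hq'
    simp only; omega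

lemma shiftTL_disj {e m e' m' : ℕ} (h : ¬(e = e' ∧ m = m')) :
    Disjoint (shift e '' TL m) (shift e' '' TL m') := by
  rw [Set.disjoint_left]
  intro S h1 h2
  obtain ⟨hm1, hb1⟩ := mem_shiftTL_bounds h1
  obtain ⟨hm2, hb2⟩ := mem_shiftTL_bounds h2
  have c1 := hb1 _ hm2
  have c2 := hb2 _ hm1
  simp only at c1 c2
  omega

lemma SL_eq (n : ℕ) : SL (n + 3) =
    TL (n + 3) ∪ (shift 1 '' TL (n + 2) ∪ (TL (n + 2) ∪ (shift 2 '' TL (n + 1) ∪ TL (n + 1)))) := by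
  ext S
  constructor
  · intro hS
    obtain ⟨e, f, m, S₀, he, hf, hef, hn, hS₀, rfl⟩ := bwd_A hS
    have hm3 : 3 ≤ m := tl_three_le hS₀
    simp only [Set.mem_union]
    interval_cases e <;> interval_cases f
    · have hm : m = n + 3 := by omega
      subst hm; rw [shift_zero]; exact Or.inl hS₀
    · have hm : m = n + 2 := by omega
      subst hm; rw [shift_zero]; exact Or.inr (Or.inr (Or.inl hS₀))
    · have hm : m = n + 1 := by omega
      subst hm; rw [shift_zero]; exact Or.inr (Or.inr (Or.inr (Or.inr hS₀)))
    · have hm : m = n + 2 := by omega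
      subst hm; exact Or.inr (Or.inl ⟨S₀, hS₀, rfl⟩)
    · omega
    · omega
    · have hm : m = n + 1 := by omega
      subst hm; exact Or.inr (Or.inr (Or.inr (Or.inl ⟨S₀, hS₀, rfl⟩)))
    · omega
    · omega
  · intro hS
    simp only [Set.mem_union] at hS
    rcases hS with h | h | h | h | h
    · have := fwd_A (n := n + 3) h (e := 0) (f := 0) (by omega) (by omega) (by omega) (by omega)
      rwa [shift_zero] at this
    · obtain ⟨S₀, hS₀, rfl⟩ := h
      exact fwd_A (n := n + 3) hS₀ (e := 1) (f := 0) (by omega) (by omega) (by omega) (by omega)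
    · have := fwd_A (n := n + 3) h (e := 0) (f := 1) (by omega) (by omega) (by omega) (by omega)
      rwa [shift_zero] at this
    · obtain ⟨S₀, hS₀, rfl⟩ := h
      exact fwd_A (n := n + 3) hS₀ (e := 2) (f := 0) (by omega) (by omega) (by omega) (by omega)
    · have := fwd_A (n := n + 3) h (e := 0) (f := 2) (by omega) (by omega) (by omega) (by omega)
      rwa [shift_zero] at this


lemma ncard_shiftTL (e m : ℕ) : (shift e '' TL m).ncard = B m :=
  Set.ncard_image_of_injective _ (shift_injective e)

lemma A_eq (n : ℕ) : numSatStemLoop (n + 3) = B (n + 3) + 2 * B (n + 2) + 2 * B (n + 1) := by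
  have h0 : numSatStemLoop (n + 3) = (SL (n + 3)).ncard := rfl
  rw [h0, SL_eq]
  have f1 := TL_finite (n + 3)
  have f2 := (TL_finite (n + 2)).image (shift 1)
  have f3 := TL_finite (n + 2)
  have f4 := (TL_finite (n + 1)).image (shift 2)
  have f5 := TL_finite (n + 1)
  have e1 : TL (n + 3) = shift 0 '' TL (n + 3) := (image_shift_zero _).symm
  have e3 : TL (n + 2) = shift 0 '' TL (n + 2) := (image_shift_zero _).symm
  have e5 : TL (n + 1) = shift 0 '' TL (n + 1) := (image_shift_zero _).symm
  have d12 : Disjoint (TL (n+3)) (shift 1 '' TL (n+2)) := by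
    rw [e1]; exact shiftTL_disj (by omega)
  have d13 : Disjoint (TL (n+3)) (TL (n+2)) := by
    rw [e1, e3]; exact shiftTL_disj (by omega)
  have d14 : Disjoint (TL (n+3)) (shift 2 '' TL (n+1)) := by
    rw [e1]; exact shiftTL_disj (by omega)
  have d15 : Disjoint (TL (n+3)) (TL (n+1)) := by
    rw [e1, e5]; exact shiftTL_disj (by omega)
  have d23 : Disjoint (shift 1 '' TL (n+2)) (TL (n+2)) := by
    nth_rewrite 2 [e3]; exact shiftTL_disj (by omega)
  have d24 : Disjoint (shift 1 '' TL (n+2)) (shift 2 '' TL (n+1)) := shiftTL_disj (by omega)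
  have d25 : Disjoint (shift 1 '' TL (n+2)) (TL (n+1)) := by
    rw [e5]; exact shiftTL_disj (by omega)
  have d34 : Disjoint (TL (n+2)) (shift 2 '' TL (n+1)) := by
    rw [e3]; exact shiftTL_disj (by omega)
  have d35 : Disjoint (TL (n+2)) (TL (n+1)) := by
    rw [e3, e5]; exact shiftTL_disj (by omega)
  have d45 : Disjoint (shift 2 '' TL (n+1)) (TL (n+1)) := by
    nth_rewrite 2 [e5]; exact shiftTL_disj (by omega)
  rw [Set.ncard_union_eq (by exact Disjoint.union_right d12 (Disjoint.union_right d13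
      (Disjoint.union_right d14 d15))) f1 (f2.union (f3.union (f4.union f5)))]
  rw [Set.ncard_union_eq (Disjoint.union_right d23 (Disjoint.union_right d24 d25)) f2
      ((f3.union (f4.union f5)))]
  rw [Set.ncard_union_eq (Disjoint.union_right d34 d35) f3 (f4.union f5)]
  rw [Set.ncard_union_eq d45 f4 f5]
  rw [ncard_shiftTL, ncard_shiftTL]
  show B (n+3) + (B (n+2) + ((TL (n+2)).ncard + (B (n+1) + (TL (n+1)).ncard))) = _
  show B (n+3) + (B (n+2) + (B (n+2) + (B (n+1) + B (n+1)))) = _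
  ring


lemma mem_psi_bounds {N k m : ℕ} {S : Finset (ℕ × ℕ)} (hk : 1 ≤ k)
    (h : S ∈ (fun S₀ => insert (1, N) (shift k S₀)) '' TL m) :
    (1 + k, m + k) ∈ S ∧ ∀ q ∈ S, q = (1, N) ∨ (1 + k ≤ q.1 ∧ q.2 ≤ m + k) := by
  obtain ⟨S₀, hS₀, rfl⟩ := h
  constructor
  · exact Finset.mem_insert_of_mem (mem_shift_of hS₀.2)
  · intro q hq
    rcases Finset.mem_insert.mp hq with h1 | h1
    · exact Or.inl h1
    · right
      obtain ⟨q', hq', rfl⟩ := mem_shift.mp h1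
      have := tl_bounds hS₀ q' hq'
      simp only; omega

lemma psi_disj {N k m k' m' : ℕ} (hk : 1 ≤ k) (hk' : 1 ≤ k')
    (h : ¬(k = k' ∧ m = m')) :
    Disjoint ((fun S₀ => insert (1, N) (shift k S₀)) '' TL m)
      ((fun S₀ => insert (1, N) (shift k' S₀)) '' TL m') := by
  rw [Set.disjoint_left]
  intro S h1 h2
  obtain ⟨hm1, hb1⟩ := mem_psi_bounds hk h1
  obtain ⟨hm2, hb2⟩ := mem_psi_bounds hk' h2
  have c1 := hb1 _ hm2
  have c2 := hb2 _ hm1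
  simp only [Prod.mk.injEq] at c1 c2
  omega

lemma ncard_psi (N k m : ℕ) (hk : 1 ≤ k) :
    ((fun S₀ => insert (1, N) (shift k S₀)) '' TL m).ncard = B m := by
  apply Set.ncard_image_of_injOn
  intro S₀ hS₀ S₀' hS₀' heq
  have hnot : ∀ (T : Finset (ℕ × ℕ)), T ∈ TL m → (1, N) ∉ shift k T := by
    intro T hT hmem
    obtain ⟨q, hq, hqe⟩ := mem_shift.mp hmem
    have := tl_bounds hT q hq
    have := Prod.ext_iff.mp hqe
    simp at this
    omega
  have := congrArg (fun X => Finset.erase X (1, N)) heq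
  simp only [Finset.erase_insert (hnot _ hS₀), Finset.erase_insert (hnot _ hS₀')] at this
  exact shift_injective k this

lemma TL_eq (n : ℕ) : TL (n + 5) =
    (fun S₀ => insert (1, n + 5) (shift 1 S₀)) '' TL (n + 3) ∪
    ((fun S₀ => insert (1, n + 5) (shift 2 S₀)) '' TL (n + 2) ∪
    ((fun S₀ => insert (1, n + 5) (shift 1 S₀)) '' TL (n + 2) ∪
    ((fun S₀ => insert (1, n + 5) (shift 3 S₀)) '' TL (n + 1) ∪
    (fun S₀ => insert (1, n + 5) (shift 1 S₀)) '' TL (n + 1)))) := by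
  ext S
  constructor
  · intro hS
    obtain ⟨g, h, m, S₀, hg, hh, hgh, hn, hS₀, rfl⟩ := bwd_B hS (by omega)
    have hm3 : 3 ≤ m := tl_three_le hS₀
    simp only [Set.mem_union]
    interval_cases g <;> interval_cases h
    · have hm : m = n + 3 := by omega
      subst hm; exact Or.inl ⟨S₀, hS₀, rfl⟩
    · have hm : m = n + 2 := by omega
      subst hm; exact Or.inr (Or.inr (Or.inl ⟨S₀, hS₀, rfl⟩))
    · have hm : m = n + 1 := by omega
      subst hm; exact Or.inr (Or.inr (Or.inr (Or.inr ⟨S₀, hS₀, rfl⟩)))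
    · have hm : m = n + 2 := by omega
      subst hm; exact Or.inr (Or.inl ⟨S₀, hS₀, rfl⟩)
    · omega
    · omega
    · have hm : m = n + 1 := by omega
      subst hm; exact Or.inr (Or.inr (Or.inr (Or.inl ⟨S₀, hS₀, rfl⟩)))
    · omega
    · omega
  · intro hS
    simp only [Set.mem_union] at hS
    rcases hS with h | h | h | h | h
    · obtain ⟨S₀, hS₀, rfl⟩ := h
      exact fwd_B (n := n + 5) hS₀ (g := 0) (h := 0) (by omega) (by omega) (by omega) (by omega)
    · obtain ⟨S₀, hS₀, rfl⟩ := h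
      exact fwd_B (n := n + 5) hS₀ (g := 1) (h := 0) (by omega) (by omega) (by omega) (by omega)
    · obtain ⟨S₀, hS₀, rfl⟩ := h
      exact fwd_B (n := n + 5) hS₀ (g := 0) (h := 1) (by omega) (by omega) (by omega) (by omega)
    · obtain ⟨S₀, hS₀, rfl⟩ := h
      exact fwd_B (n := n + 5) hS₀ (g := 2) (h := 0) (by omega) (by omega) (by omega) (by omega)
    · obtain ⟨S₀, hS₀, rfl⟩ := h
      exact fwd_B (n := n + 5) hS₀ (g := 0) (h := 2) (by omega) (by omega) (by omega) (by omega)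

lemma B_rec (n : ℕ) : B (n + 5) = B (n + 3) + 2 * B (n + 2) + 2 * B (n + 1) := by
  have h0 : B (n + 5) = (TL (n + 5)).ncard := rfl
  rw [h0, TL_eq]
  have f1 := (TL_finite (n + 3)).image (fun S₀ => insert ((1 : ℕ), n + 5) (shift 1 S₀))
  have f2 := (TL_finite (n + 2)).image (fun S₀ => insert ((1 : ℕ), n + 5) (shift 2 S₀))
  have f3 := (TL_finite (n + 2)).image (fun S₀ => insert ((1 : ℕ), n + 5) (shift 1 S₀))
  have f4 := (TL_finite (n + 1)).image (fun S₀ => insert ((1 : ℕ), n + 5) (shift 3 S₀))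
  have f5 := (TL_finite (n + 1)).image (fun S₀ => insert ((1 : ℕ), n + 5) (shift 1 S₀))
  have d12 := psi_disj (N := n+5) (k := 1) (m := n+3) (k' := 2) (m' := n+2) (by omega) (by omega) (by omega)
  have d13 := psi_disj (N := n+5) (k := 1) (m := n+3) (k' := 1) (m' := n+2) (by omega) (by omega) (by omega)
  have d14 := psi_disj (N := n+5) (k := 1) (m := n+3) (k' := 3) (m' := n+1) (by omega) (by omega) (by omega)
  have d15 := psi_disj (N := n+5) (k := 1) (m := n+3) (k' := 1) (m' := n+1) (by omega) (by omega) (by omega)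
  have d23 := psi_disj (N := n+5) (k := 2) (m := n+2) (k' := 1) (m' := n+2) (by omega) (by omega) (by omega)
  have d24 := psi_disj (N := n+5) (k := 2) (m := n+2) (k' := 3) (m' := n+1) (by omega) (by omega) (by omega)
  have d25 := psi_disj (N := n+5) (k := 2) (m := n+2) (k' := 1) (m' := n+1) (by omega) (by omega) (by omega)
  have d34 := psi_disj (N := n+5) (k := 1) (m := n+2) (k' := 3) (m' := n+1) (by omega) (by omega) (by omega)
  have d35 := psi_disj (N := n+5) (k := 1) (m := n+2) (k' := 1) (m' := n+1) (by omega) (by omega) (by omega)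
  have d45 := psi_disj (N := n+5) (k := 3) (m := n+1) (k' := 1) (m' := n+1) (by omega) (by omega) (by omega)
  rw [Set.ncard_union_eq (Disjoint.union_right d12 (Disjoint.union_right d13
      (Disjoint.union_right d14 d15))) f1 (f2.union (f3.union (f4.union f5)))]
  rw [Set.ncard_union_eq (Disjoint.union_right d23 (Disjoint.union_right d24 d25)) f2
      (f3.union (f4.union f5))]
  rw [Set.ncard_union_eq (Disjoint.union_right d34 d35) f3 (f4.union f5)]
  rw [Set.ncard_union_eq d45 f4 f5]
  rw [ncard_psi _ _ _ (by omega), ncard_psi _ _ _ (by omega), ncard_psi _ _ _ (by omega),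
    ncard_psi _ _ _ (by omega), ncard_psi _ _ _ (by omega)]
  ring


lemma TL_empty {n : ℕ} (hn : n ≤ 2) : TL n = ∅ := by
  ext S
  simp only [Set.mem_empty_iff_false, iff_false]
  intro hS
  have := hS.1.1.1.1 (1, n) hS.2
  simp only at this
  omega

lemma TL3 : TL 3 = {({((1 : ℕ), (3 : ℕ))} : Finset (ℕ × ℕ))} := by
  ext S
  simp only [Set.mem_singleton_iff]
  constructor
  · intro hS
    ext q
    simp only [Finset.mem_singleton]
    constructor
    · intro hq
      have := hS.1.1.1.1 q hq
      exact Prod.ext (by omega) (by omega)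
    · intro hq; rw [hq]; exact hS.2
  · rintro rfl
    have hsec : IsSecStr 3 {((1 : ℕ), (3 : ℕ))} := by
      refine ⟨?_, ?_, ?_⟩ <;> intro p hp
      · simp only [Finset.mem_singleton] at hp; rw [hp]; simp
      · intro q hq hpq
        simp only [Finset.mem_singleton] at hp hq
        rw [hp, hq] at hpq; exact absurd rfl hpq
      · intro q hq
        simp only [Finset.mem_singleton] at hp hq
        rw [hp, hq]; simp only; omega
    refine ⟨⟨⟨hsec, ?_⟩, hsec, (1, 3), Finset.mem_singleton_self _, ?_⟩,
      Finset.mem_singleton_self _⟩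
    · intro p hp hcon
      have hb := hcon.1 p (Finset.mem_insert_self _ _)
      apply hp
      simp only [Finset.mem_singleton]
      exact Prod.ext (by omega) (by omega)
    · intro q hq hne
      simp only [Finset.mem_singleton] at hq
      exact absurd hq hne
  
lemma TL4 : TL 4 = {({((1 : ℕ), (4 : ℕ))} : Finset (ℕ × ℕ))} := by
  ext S
  simp only [Set.mem_singleton_iff]
  constructor
  · intro hS
    ext q
    simp only [Finset.mem_singleton]
    constructor
    · intro hq
      have hb := hS.1.1.1.1 q hq
      by_contra hne
      have hd := hS.1.1.1.2.1 q hq (1, 4) hS.2 hne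
      simp only at hd
      omega
    · intro hq; rw [hq]; exact hS.2
  · rintro rfl
    have hsec : IsSecStr 4 {((1 : ℕ), (4 : ℕ))} := by
      refine ⟨?_, ?_, ?_⟩ <;> intro p hp
      · simp only [Finset.mem_singleton] at hp; rw [hp]; simp
      · intro q hq hpq
        simp only [Finset.mem_singleton] at hp hq
        rw [hp, hq] at hpq; exact absurd rfl hpq
      · intro q hq
        simp only [Finset.mem_singleton] at hp hq
        rw [hp, hq]; simp only; omega
    refine ⟨⟨⟨hsec, ?_⟩, hsec, (1, 4), Finset.mem_singleton_self _, ?_⟩,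
      Finset.mem_singleton_self _⟩
    · intro p hp hcon
      obtain ⟨hb, hd, -⟩ := secstr_insert_elim (by simpa using hp) hcon
      have := hd (1, 4) (Finset.mem_singleton_self _)
      simp only at this
      have hne : ¬(p.1 = 1 ∧ p.2 = 4) := by
        intro hh
        apply hp; simp only [Finset.mem_singleton]
        exact Prod.ext (by omega) (by omega)
      omega
    · intro q hq hne
      simp only [Finset.mem_singleton] at hq
      exact absurd hq hne

lemma B0 : B 0 = 0 := by rw [B, TL_empty (by omega)]; exact Set.ncard_empty _
lemma B1 : B 1 = 0 := by rw [B, TL_empty (by omega)]; exact Set.ncard_empty _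
lemma B2 : B 2 = 0 := by rw [B, TL_empty (by omega)]; exact Set.ncard_empty _
lemma B3 : B 3 = 1 := by rw [B, TL3]; exact Set.ncard_singleton _
lemma B4 : B 4 = 1 := by rw [B, TL4]; exact Set.ncard_singleton _

lemma B_3term : ∀ n, B (n + 4) = B (n + 3) + 2 * B (n + 1) := by
  intro n
  induction n using Nat.strong_induction_on with
  | _ n ih =>
    match n, ih with
    | 0, _ => rw [B4, B3, B1]
    | 1, _ =>
      have h := B_rec 0
      rw [B3, B2, B1] at h
      rw [h, B4, B2]
    | (k+2), ih =>
      have h1 := B_rec (k+1)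
      have h2 := B_rec k
      have h3 := ih k (by omega)
      rw [show k + 1 + 5 = k + 6 from by omega, show k + 1 + 3 = k + 4 from by omega,
        show k + 1 + 2 = k + 3 from by omega, show k + 1 + 1 = k + 2 from by omega] at h1
      rw [show k+2+4 = k+6 from by omega, show k+2+3 = k+5 from by omega,
        show k+2+1 = k+3 from by omega]
      omega

lemma A_vals : numSatStemLoop 3 = 1 ∧ numSatStemLoop 4 = 3 ∧ numSatStemLoop 5 = 5 := by
  have h3 := A_eq 0
  have h4 := A_eq 1
  have h5 := A_eq 2
  have hB5 := B_rec 0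
  simp only [Nat.reduceAdd] at h3 h4 h5 hB5
  rw [B3, B2, B1] at h3 hB5
  rw [B4, B3, B2] at h4
  rw [hB5, B4, B3] at h5
  exact ⟨by omega, by omega, by omega⟩

lemma A_3term (n : ℕ) : numSatStemLoop (n + 6) =
    numSatStemLoop (n + 5) + 2 * numSatStemLoop (n + 3) := by
  have h1 := A_eq (n + 3)
  have h2 := A_eq (n + 2)
  have h3 := A_eq n
  have t1 := B_3term (n + 2)
  have t2 := B_3term (n + 1)
  have t3 := B_3term n
  have e1 : n + 3 + 3 = n + 6 := by omega
  have e2 : n + 3 + 2 = n + 5 := by omega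
  have e3 : n + 3 + 1 = n + 4 := by omega
  have e4 : n + 2 + 3 = n + 5 := by omega
  have e5 : n + 2 + 2 = n + 4 := by omega
  have e6 : n + 2 + 1 = n + 3 := by omega
  have e7 : n + 2 + 4 = n + 6 := by omega
  have e8 : n + 1 + 4 = n + 5 := by omega
  have e9 : n + 1 + 3 = n + 4 := by omega
  have e10 : n + 1 + 1 = n + 2 := by omega
  rw [e1, e2, e3] at h1
  rw [e4, e5, e6] at h2
  rw [e7, e4, e6] at t1
  rw [e8, e9, e10] at t2
  have h4 := B_rec n
  omega

end SatSLAux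

/-- If `a₁, a₂, a₃` are the three distinct complex roots of `Q(z) = 1 − z − 2z³`, then
for every `n ≥ 3` the number of saturated stem-loops on `[1,n]` equals
`Σᵢ aᵢ⁻ⁿ/(1 + 6aᵢ²)` (the partial-fraction expansion of `z/(1 − z − 2z³)`,
using `Q′(z) = −1 − 6z²`). -/
theorem sat_stem_loop_exact_formula (a : Fin 3 → ℂ)
    (hinj : Function.Injective a)
    (hroot : ∀ i : Fin 3, 1 - a i - 2 * a i ^ 3 = 0) :
    ∀ n : ℕ, 3 ≤ n →
      (numSatStemLoop n : ℂ) = ∑ i : Fin 3, (a i) ^ (-(n : ℤ)) / (1 + 6 * a i ^ 2) := by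
  have ha0 : ∀ i, a i ≠ 0 := by
    intro i h
    have := hroot i
    rw [h] at this
    norm_num at this
  have hinv : ∀ i, (a i)⁻¹ = 1 + 2 * a i ^ 2 := by
    intro i
    have hba : a i * (1 + 2 * a i ^ 2) = 1 := by linear_combination -hroot i
    exact inv_eq_of_mul_eq_one_right hba
  have hne01 : a 0 ≠ a 1 := hinj.ne (by decide)
  have hne02 : a 0 ≠ a 2 := hinj.ne (by decide)
  have hne12 : a 1 ≠ a 2 := hinj.ne (by decide)
  have hq01 : 1 + 2 * (a 0 ^ 2 + a 0 * a 1 + a 1 ^ 2) = 0 := by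
    have h01 : (a 1 - a 0) * (1 + 2 * (a 0 ^ 2 + a 0 * a 1 + a 1 ^ 2)) = 0 := by
      linear_combination hroot 0 - hroot 1
    rcases mul_eq_zero.mp h01 with h | h
    · exact absurd (by linear_combination -h) hne01
    · exact h
  have hq02 : 1 + 2 * (a 0 ^ 2 + a 0 * a 2 + a 2 ^ 2) = 0 := by
    have h02 : (a 2 - a 0) * (1 + 2 * (a 0 ^ 2 + a 0 * a 2 + a 2 ^ 2)) = 0 := by
      linear_combination hroot 0 - hroot 2
    rcases mul_eq_zero.mp h02 with h | h
    · exact absurd (by linear_combination -h) hne02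
    · exact h
  have he1 : a 0 + a 1 + a 2 = 0 := by
    have h12 : (a 1 - a 2) * (a 0 + a 1 + a 2) = 0 := by
      linear_combination (1/2 : ℂ) * hq01 - (1/2 : ℂ) * hq02
    rcases mul_eq_zero.mp h12 with h | h
    · exact absurd (by linear_combination h) hne12
    · exact h
  have hden : ∀ i, (1 : ℂ) + 6 * a i ^ 2 ≠ 0 := by
    intro i h
    have h32 : (2/3 : ℂ) * a i = 1 := by
      linear_combination -hroot i - (a i / 3) * h
    have hai : a i = 3 / 2 := by linear_combination (3/2 : ℂ) * h32
    rw [hai] at h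
    norm_num at h
  set G : ℕ → ℂ := fun n => ∑ i : Fin 3, (1 + 2 * a i ^ 2) ^ n / (1 + 6 * a i ^ 2) with hG
  -- base values
  have base0 : G 0 = 0 := by
    show ∑ i : Fin 3, (1 + 2 * a i ^ 2) ^ (0 : ℕ) / (1 + 6 * a i ^ 2) = 0
    rw [Fin.sum_univ_three]
    field_simp [hden 0, hden 1, hden 2]
    linear_combination ((-6) * a 2 + (-12) * a 1 + (-36) * a 1^3 + (6) * a 0 + (-36) * a 0 * a 1 * a 2) * he1 + ((3) + (18) * a 2^2 + (18) * a 1 * a 2 + (18) * a 1^2) * hq01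
  have base1 : G 1 = 1 := by
    show ∑ i : Fin 3, (1 + 2 * a i ^ 2) ^ (1 : ℕ) / (1 + 6 * a i ^ 2) = 1
    rw [Fin.sum_univ_three]
    rw [div_add_div _ _ (hden 0) (hden 1), div_add_div _ _ (mul_ne_zero (hden 0) (hden 1)) (hden 2), div_eq_iff (mul_ne_zero (mul_ne_zero (hden 0) (hden 1)) (hden 2))]
    linear_combination ((-4) * a 2 + (-8) * a 1 + (-24) * a 1^3 + (4) * a 0 + (-24) * a 0 * a 1 * a 2) * he1 + ((2) + (12) * a 2^2 + (12) * a 1 * a 2 + (12) * a 1^2) * hq01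
  have base2 : G 2 = 1 := by
    show ∑ i : Fin 3, (1 + 2 * a i ^ 2) ^ (2 : ℕ) / (1 + 6 * a i ^ 2) = 1
    rw [Fin.sum_univ_three]
    rw [div_add_div _ _ (hden 0) (hden 1), div_add_div _ _ (mul_ne_zero (hden 0) (hden 1)) (hden 2), div_eq_iff (mul_ne_zero (mul_ne_zero (hden 0) (hden 1)) (hden 2))]
    linear_combination ((-6) * a 2 + (-20) * a 2^3 + (-10) * a 1 + (-28) * a 1 * a 2^2 + (-28) * a 1^2 * a 2 + (-168) * a 1^2 * a 2^3 + (-52) * a 1^3 + (-216) * a 1^3 * a 2^2 + (-48) * a 1^4 * a 2 + (-288) * a 1^4 * a 2^3 + (-48) * a 1^5 + (-288) * a 1^5 * a 2^2 + (6) * a 0 + (20) * a 0 * a 2^2 + (-24) * a 0 * a 1 * a 2 + (-48) * a 0 * a 1 * a 2^3 + (20) * a 0 * a 1^2 + (120) * a 0 * a 1^2 * a 2^2 + (-48) * a 0 * a 1^3 * a 2 + (-288) * a 0 * a 1^3 * a 2^3 + (-4) * a 0^2 * a 2 + (-24) * a 0^2 * a 2^3 + (-4) * a 0^2 * a 1 +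 (-24) * a 0^2 * a 1 * a 2^2 + (-24) * a 0^2 * a 1^2 * a 2 + (-144) * a 0^2 * a 1^2 * a 2^3 + (-24) * a 0^2 * a 1^3 + (-144) * a 0^2 * a 1^3 * a 2^2 + (4) * a 0^3 + (24) * a 0^3 * a 2^2 + (24) * a 0^3 * a 1^2 + (144) * a 0^3 * a 1^2 * a 2^2) * he1 + ((2) + (16) * a 2^2 + (24) * a 2^4 + (16) * a 1 * a 2 + (48) * a 1 * a 2^3 + (16) * a 1^2 + (72) * a 1^2 * a 2^2 + (144) * a 1^2 * a 2^4 + (48) * a 1^3 * a 2 + (288) * a 1^3 * a 2^3 + (24) * a 1^4 + (144) * a 1^4 * a 2^2) * hq01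
  -- recurrence for the rhs in b-power form
  have hb3 : ∀ i, (1 + 2 * a i ^ 2) ^ 3 = (1 + 2 * a i ^ 2) ^ 2 + 2 := by
    intro i
    linear_combination (-2 * (2 * a i ^ 3 + a i + 1)) * hroot i
  have grec : ∀ n : ℕ, G (n + 3) = G (n + 2) + 2 * G n := by
    intro n
    have hterm : ∀ i : Fin 3, (1 + 2 * a i ^ 2) ^ (n + 3)
        = (1 + 2 * a i ^ 2) ^ (n + 2) + 2 * (1 + 2 * a i ^ 2) ^ n := by
      intro i
      calc (1 + 2 * a i ^ 2) ^ (n + 3) = (1 + 2 * a i ^ 2) ^ n * (1 + 2 * a i ^ 2) ^ 3 := by ring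
        _ = (1 + 2 * a i ^ 2) ^ n * ((1 + 2 * a i ^ 2) ^ 2 + 2) := by rw [hb3 i]
        _ = (1 + 2 * a i ^ 2) ^ (n + 2) + 2 * (1 + 2 * a i ^ 2) ^ n := by ring
    have h1 : G (n + 3) = ∑ i : Fin 3, ((1 + 2 * a i ^ 2) ^ (n + 2) / (1 + 6 * a i ^ 2)
        + 2 * ((1 + 2 * a i ^ 2) ^ n / (1 + 6 * a i ^ 2))) := by
      rw [hG]
      refine Finset.sum_congr rfl (fun i _ => ?_)
      rw [hterm i]; ring
    rw [h1, Finset.sum_add_distrib, ← Finset.mul_sum]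
  have g3 : G 3 = 1 := by
    have h := grec 0
    norm_num at h
    rw [base2, base0] at h
    rw [h]; ring
  have g4 : G 4 = 3 := by
    have h := grec 1
    norm_num at h
    rw [g3, base1] at h
    rw [h]; ring
  have g5 : G 5 = 5 := by
    have h := grec 2
    norm_num at h
    rw [g4, base2] at h
    rw [h]; ring
  -- main induction
  have main : ∀ k : ℕ, (numSatStemLoop (k + 3) : ℂ) = G (k + 3) := by
    intro k
    induction k using Nat.strong_induction_on with
    | _ k ih =>
      match k, ih with
      | 0, _ => rw [SatSLAux.A_vals.1, g3]; norm_num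
      | 1, _ =>
        show (numSatStemLoop 4 : ℂ) = G 4
        rw [SatSLAux.A_vals.2.1, g4]; norm_num
      | 2, _ =>
        show (numSatStemLoop 5 : ℂ) = G 5
        rw [SatSLAux.A_vals.2.2, g5]; norm_num
      | (k+3), ih =>
        show (numSatStemLoop (k + 6) : ℂ) = G (k + 6)
        have hA := SatSLAux.A_3term k
        have h1 := ih (k + 2) (by omega)
        have h2 := ih k (by omega)
        have hg := grec (k + 3)
        rw [show k + 2 + 3 = k + 5 from by omega] at h1
        rw [show k + 3 + 3 = k + 6 from by omega, show k + 3 + 2 = k + 5 from by omega] at hg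
        rw [hA, hg]
        push_cast
        rw [h1, h2]
  -- conclude
  intro n hn
  obtain ⟨k, rfl⟩ : ∃ k, n = k + 3 := ⟨n - 3, by omega⟩
  have hzp : ∀ i : Fin 3, (a i) ^ (-((k + 3 : ℕ) : ℤ)) = (1 + 2 * a i ^ 2) ^ (k + 3 : ℕ) := by
    intro i
    rw [zpow_neg, ← inv_zpow, hinv i, zpow_natCast]
  calc (numSatStemLoop (k + 3) : ℂ) = G (k + 3) := main k
    _ = ∑ i : Fin 3, (a i) ^ (-((k + 3 : ℕ) : ℤ)) / (1 + 6 * a i ^ 2) := by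
      rw [hG]
      exact Finset.sum_congr rfl (fun i _ => by rw [hzp i])
end

section
/- Fix an integer θ ≥ 1 and define the sequence (U_n)_{n≥0} of rationals by U_n = 0 for 0 ≤ n ≤ θ + 1, and U_n = 1 + (1/(n − θ − 1)) · Σ_{k=θ}^{n−2} (U_k + U_{n−k−2}) for n ≥ θ + 2. Then for every n ≥ θ + 1 the recurrence (n − θ)·U_{n+1} = 1 + (n − θ − 1)·U_n + U_{n−1} + U_{n−θ−1} holds. -/
/-- Fix `θ ≥ 1` and let `(U_n)` be the sequence of rationals with `U_n = 0` for
`n ≤ θ + 1` and `U_n = 1 + (1/(n − θ − 1)) Σ_{k=θ}^{n−2} (U_k + U_{n−k−2})` for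
`n ≥ θ + 2` (the expected number of base pairs of a quasi-random saturated
structure). Then `(n − θ)U_{n+1} = 1 + (n − θ − 1)U_n + U_{n−1} + U_{n−θ−1}`
for every `n ≥ θ + 1`. -/
theorem quasi_random_recurrence (θ : ℕ) (hθ : 1 ≤ θ) (U : ℕ → ℚ)
    (h0 : ∀ n : ℕ, n ≤ θ + 1 → U n = 0)
    (hrec : ∀ n : ℕ, θ + 2 ≤ n →
      U n = 1 + (1 / ((n : ℚ) - θ - 1)) *
        ∑ k ∈ Finset.Icc θ (n - 2), (U k + U (n - k - 2))) :
    ∀ n : ℕ, θ + 1 ≤ n →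
      ((n : ℚ) - θ) * U (n + 1)
        = 1 + ((n : ℚ) - θ - 1) * U n + U (n - 1) + U (n - θ - 1) := by
  intro n hn
  rcases eq_or_lt_of_le hn with h | h
  · -- base case n = θ + 1
    have hU1 : U (n + 1) = 1 := by
      rw [hrec (n + 1) (by omega)]
      have hIcc : Finset.Icc θ (n + 1 - 2) = {θ} := by
        have : n + 1 - 2 = θ := by omega
        rw [this, Finset.Icc_self]
      rw [hIcc, Finset.sum_singleton, h0 θ (by omega), h0 (n + 1 - θ - 2) (by omega)]
      ring
    rw [hU1, h0 n (by omega), h0 (n - 1) (by omega), h0 (n - θ - 1) (by omega)]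
    have hcast : (n : ℚ) = (θ : ℚ) + 1 := by
      rw [← h]; push_cast; ring
    rw [hcast]; ring
  · -- inductive case n ≥ θ + 2
    have hn2 : θ + 2 ≤ n := h
    set N : ℕ := n - 1 - θ with hN
    have hN1 : 1 ≤ N := by omega
    have e1 : ∑ k ∈ Finset.Icc θ (n - 2), (U k + U (n - k - 2))
        = (∑ k ∈ Finset.Icc θ (n - 2), U k) + ∑ i ∈ Finset.range N, U i := by
      rw [Finset.sum_add_distrib]
      congr 1
      rw [← Finset.Ico_add_one_right_eq_Icc, Finset.sum_Ico_eq_sum_range]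
      have hr : n - 2 + 1 - θ = N := by omega
      rw [hr, ← Finset.sum_range_reflect]
      apply Finset.sum_congr rfl
      intro i hi
      have hi' : i < N := Finset.mem_range.mp hi
      congr 1
      omega
    have e2 : ∑ k ∈ Finset.Icc θ (n + 1 - 2), (U k + U (n + 1 - k - 2))
        = (∑ k ∈ Finset.Icc θ (n - 2), U k) + U (n - 1)
          + ((∑ i ∈ Finset.range N, U i) + U N) := by
      have hsplit : n + 1 - 2 = (n - 2) + 1 := by omega
      rw [hsplit, Finset.sum_Icc_succ_top (by omega)]
      have htop : U ((n - 2) + 1) + U (n + 1 - ((n - 2) + 1) - 2) = U (n - 1) := by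
        rw [show (n - 2) + 1 = n - 1 from by omega,
          show n + 1 - (n - 1) - 2 = 0 from by omega, h0 0 (by omega)]
        ring
      rw [htop, Finset.sum_add_distrib]
      have hsec : ∑ k ∈ Finset.Icc θ (n - 2), U (n + 1 - k - 2)
          = (∑ i ∈ Finset.range N, U i) + U N := by
        rw [← Finset.Ico_add_one_right_eq_Icc, Finset.sum_Ico_eq_sum_range]
        have hr : n - 2 + 1 - θ = N := by omega
        rw [hr]
        have hc : ∀ i ∈ Finset.range N, U (n + 1 - (θ + i) - 2) = (fun j => U (j + 1)) (N - 1 - i) := by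
          intro i hi
          have hi' : i < N := Finset.mem_range.mp hi
          simp only
          congr 1
          omega
        rw [Finset.sum_congr rfl hc, Finset.sum_range_reflect (fun j => U (j + 1)) N]
        have ha := Finset.sum_range_succ' U N
        have hb := Finset.sum_range_succ U N
        rw [h0 0 (by omega)] at ha
        linarith [ha, hb]
      rw [hsec]
      ring
    have h1 := hrec n (by omega)
    have h2 := hrec (n + 1) (by omega)
    rw [e1] at h1
    rw [e2] at h2
    push_cast at h2
    have hne1 : ((n : ℚ) - θ - 1) ≠ 0 := by
      have : (θ : ℚ) + 2 ≤ (n : ℚ) := by exact_mod_cast hn2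
      intro hc; linarith
    have hne2 : ((n : ℚ) + 1 - θ - 1) ≠ 0 := by
      have : (θ : ℚ) + 2 ≤ (n : ℚ) := by exact_mod_cast hn2
      intro hc; linarith
    have hidx : n - θ - 1 = N := by omega
    rw [hidx, h1, h2]
    field_simp
    ring
end

section
/- Fix an integer θ ≥ 1 and define the sequence (U_n)_{n≥0} by U_n = 0 for 0 ≤ n ≤ θ + 1, and U_n = 1 + (1/(n − θ − 1)) · Σ_{k=θ}^{n−2} (U_k + U_{n−k−2}) for n ≥ θ + 2. Then the power series Y(z) = Σ_{n≥0} U_n z^n has radius of convergence at least 1, and for every real z with |z| < 1 it satisfies the linear differential equation z(1−z)·Y′(z) + ((θ+1)(z−1) − z² − z^{θ+2})·Y(z) = z^{θ+2}/(1−z). -/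
lemma quasiAux_summable {z : ℝ} (hz : |z| < 1) {C : ℝ} {c : ℕ → ℝ}
    (h : ∀ n, |c n| ≤ C * ((n : ℝ) + 1) ^ 2) : Summable fun n : ℕ => c n * z ^ n := by
  have habs : ‖|z|‖ < 1 := by rwa [Real.norm_eq_abs, abs_abs]
  have hb : Summable fun n : ℕ => C * (((n : ℝ) + 1) ^ 2 * |z| ^ n) := by
    have h2 := summable_pow_mul_geometric_of_norm_lt_one (R := ℝ) 2 habs
    have h1 := summable_pow_mul_geometric_of_norm_lt_one (R := ℝ) 1 habs
    have h0 := summable_pow_mul_geometric_of_norm_lt_one (R := ℝ) 0 habs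
    have := (h2.add ((h1.mul_left 2).add h0)).mul_left C
    refine this.congr fun n => ?_
    ring
  refine Summable.of_norm_bounded hb fun n => ?_
  rw [Real.norm_eq_abs, abs_mul, abs_pow]
  calc |c n| * |z| ^ n ≤ (C * ((n:ℝ)+1)^2) * |z| ^ n := by
        exact mul_le_mul_of_nonneg_right (h n) (pow_nonneg (abs_nonneg z) n)
    _ = C * (((n:ℝ)+1)^2 * |z|^n) := by ring

/-- Fix `θ ≥ 1` and let `(U_n)` be the sequence with `U_n = 0` for `n ≤ θ + 1` and
`U_n = 1 + (1/(n − θ − 1)) Σ_{k=θ}^{n−2} (U_k + U_{n−k−2})` for `n ≥ θ + 2`. Then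
`Y(z) = Σ U_n zⁿ` has radius of convergence at least `1` and satisfies, for `|z| < 1`,
`z(1−z)Y′(z) + ((θ+1)(z−1) − z² − z^{θ+2})Y(z) = z^{θ+2}/(1−z)`. -/
theorem quasi_random_ode (θ : ℕ) (hθ : 1 ≤ θ) (U : ℕ → ℝ)
    (h0 : ∀ n : ℕ, n ≤ θ + 1 → U n = 0)
    (hrec : ∀ n : ℕ, θ + 2 ≤ n →
      U n = 1 + (1 / ((n : ℝ) - θ - 1)) *
        ∑ k ∈ Finset.Icc θ (n - 2), (U k + U (n - k - 2))) :
    (∀ z : ℝ, |z| < 1 → Summable fun n : ℕ => U n * z ^ n) ∧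
    (∀ z : ℝ, |z| < 1 →
      z * (1 - z) * deriv (fun x : ℝ => ∑' n : ℕ, U n * x ^ n) z
        + (((θ : ℝ) + 1) * (z - 1) - z ^ 2 - z ^ (θ + 2)) * (∑' n : ℕ, U n * z ^ n)
        = z ^ (θ + 2) / (1 - z)) := by
  -- Bounds on U : 0 ≤ U n ≤ n
  have hU : ∀ n : ℕ, 0 ≤ U n ∧ U n ≤ (n : ℝ) := by
    intro n
    induction n using Nat.strong_induction_on with
    | _ n ih =>
      by_cases hn : θ + 2 ≤ n
      · have hnR : (θ:ℝ) + 2 ≤ (n:ℝ) := by exact_mod_cast hn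
        have hθR : (1:ℝ) ≤ (θ:ℝ) := by exact_mod_cast hθ
        have hpos : (0:ℝ) < (n:ℝ) - θ - 1 := by linarith
        have hmem : ∀ k ∈ Finset.Icc θ (n - 2), 0 ≤ U k + U (n - k - 2) := by
          intro k hk
          simp only [Finset.mem_Icc] at hk
          have h1 := (ih k (by omega)).1
          have h2 := (ih (n - k - 2) (by omega)).1
          linarith
        have hub : ∀ k ∈ Finset.Icc θ (n - 2), U k + U (n - k - 2) ≤ (n:ℝ) - 2 := by
          intro k hk
          simp only [Finset.mem_Icc] at hk
          have h1 := (ih k (by omega)).2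
          have h2 := (ih (n - k - 2) (by omega)).2
          have hk2 : k + 2 ≤ n := by omega
          have hcast : ((n - k - 2 : ℕ) : ℝ) = (n:ℝ) - k - 2 := by
            have he : (n - k - 2 : ℕ) = n - (k + 2) := by omega
            rw [he, Nat.cast_sub hk2]
            push_cast
            ring
          rw [hcast] at h2
          linarith
        have hsum_le : ∑ k ∈ Finset.Icc θ (n-2), (U k + U (n-k-2))
            ≤ ((n:ℝ) - θ - 1) * ((n:ℝ) - 2) := by
          have h3 := Finset.sum_le_card_nsmul (Finset.Icc θ (n-2)) _ ((n:ℝ)-2) hub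
          rw [Nat.card_Icc, nsmul_eq_mul] at h3
          have hcard : ((n - 2 + 1 - θ : ℕ):ℝ) = (n:ℝ) - θ - 1 := by
            have h1 : (n - 2 + 1 - θ : ℕ) = n - (θ + 1) := by omega
            rw [h1, Nat.cast_sub (by omega)]
            push_cast
            ring
          rwa [hcard] at h3
        have hsum_ge : 0 ≤ ∑ k ∈ Finset.Icc θ (n-2), (U k + U (n-k-2)) :=
          Finset.sum_nonneg hmem
        rw [hrec n hn]
        constructor
        · have : 0 ≤ (1/((n:ℝ)-θ-1)) * ∑ k ∈ Finset.Icc θ (n-2), (U k + U (n-k-2)) :=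
            mul_nonneg (by positivity) hsum_ge
          linarith
        · have hmul : (1/((n:ℝ)-θ-1)) * ∑ k ∈ Finset.Icc θ (n-2), (U k + U (n-k-2))
              ≤ (1/((n:ℝ)-θ-1)) * (((n:ℝ)-θ-1)*((n:ℝ)-2)) :=
            mul_le_mul_of_nonneg_left hsum_le (by positivity)
          have he : (1/((n:ℝ)-θ-1)) * (((n:ℝ)-θ-1)*((n:ℝ)-2)) = (n:ℝ)-2 := by
            field_simp
          rw [he] at hmul
          linarith
      · have hUn : U n = 0 := h0 n (by omega)
        rw [hUn]
        exact ⟨le_refl 0, Nat.cast_nonneg n⟩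
  have hsumm : ∀ z : ℝ, |z| < 1 → Summable fun n : ℕ => U n * z ^ n := by
    intro z hz
    refine quasiAux_summable hz (C := 1) fun n => ?_
    rw [abs_of_nonneg (hU n).1, one_mul]
    nlinarith [(hU n).2, Nat.cast_nonneg (α := ℝ) n]
  refine ⟨hsumm, ?_⟩
  intro z hz
  have hzlt := abs_lt.mp hz
  have hz1 : (1:ℝ) - z ≠ 0 := by linarith [hzlt.2]
  have hznorm : ‖z‖ < 1 := by rwa [Real.norm_eq_abs]
  -- partial sums
  set S : ℕ → ℝ := fun m => ∑ k ∈ Finset.range (m+1), U k with hSdef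
  have hSnn : ∀ m, 0 ≤ S m := fun m => Finset.sum_nonneg fun k _ => (hU k).1
  have hSle : ∀ m, S m ≤ ((m:ℝ)+1)^2 := by
    intro m
    have hb : ∀ k ∈ Finset.range (m+1), U k ≤ (m:ℝ) := by
      intro k hk
      have hkm : (k:ℝ) ≤ (m:ℝ) := by
        exact_mod_cast Nat.lt_succ_iff.mp (Finset.mem_range.mp hk)
      linarith [(hU k).2]
    have h2 := Finset.sum_le_card_nsmul (Finset.range (m+1)) _ ((m:ℝ)) hb
    rw [Finset.card_range, nsmul_eq_mul] at h2
    push_cast at h2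
    nlinarith [Nat.cast_nonneg (α := ℝ) m]
  -- the coefficient families
  set bf : ℕ → ℝ := fun n => if θ + 2 ≤ n then (n:ℝ) - θ - 1 else 0 with hbf
  set cf : ℕ → ℝ := fun n => if 2 ≤ n then S (n-2) else 0 with hcf
  set df : ℕ → ℝ := fun n => if θ + 2 ≤ n then S (n - θ - 2) else 0 with hdf
  -- summability facts
  have hsUz : Summable fun n : ℕ => U n * z^n := hsumm z hz
  have hsSz : Summable fun n : ℕ => S n * z^n := by
    refine quasiAux_summable hz (C := 1) fun n => ?_
    rw [abs_of_nonneg (hSnn n), one_mul]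
    exact hSle n
  have hsN : Summable fun n : ℕ => (n:ℝ) * U n * z^n := by
    refine quasiAux_summable hz (C := 1) (c := fun n => (n:ℝ) * U n) fun n => ?_
    rw [one_mul, abs_mul, Nat.abs_cast, abs_of_nonneg (hU n).1]
    nlinarith [(hU n).2, (hU n).1, Nat.cast_nonneg (α := ℝ) n]
  have hsbf : Summable fun n : ℕ => bf n * z^n := by
    refine quasiAux_summable hz (C := 1) fun n => ?_
    rw [one_mul]
    simp only [hbf]
    split
    · next hnn =>
      have : (θ:ℝ) + 2 ≤ (n:ℝ) := by exact_mod_cast hnn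
      rw [abs_of_nonneg (by linarith)]
      nlinarith [Nat.cast_nonneg (α := ℝ) n, Nat.cast_nonneg (α := ℝ) θ]
    · simp
      positivity
  have hsub2 : ∀ m n : ℕ, S m ≤ ((n:ℝ)+1)^2 → True := fun _ _ _ => trivial
  have hScast : ∀ m n : ℕ, m ≤ n → S m ≤ ((n:ℝ)+1)^2 := by
    intro m n hmn
    have h1 := hSle m
    have h2 : ((m:ℝ)) ≤ (n:ℝ) := by exact_mod_cast hmn
    nlinarith [Nat.cast_nonneg (α := ℝ) m]
  have hscf : Summable fun n : ℕ => cf n * z^n := by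
    refine quasiAux_summable hz (C := 1) fun n => ?_
    rw [one_mul]
    simp only [hcf]
    split
    · next hnn =>
      rw [abs_of_nonneg (hSnn _)]
      exact hScast _ _ (Nat.sub_le n 2)
    · simp
      positivity
  have hsdf : Summable fun n : ℕ => df n * z^n := by
    refine quasiAux_summable hz (C := 1) fun n => ?_
    rw [one_mul]
    simp only [hdf]
    split
    · next hnn =>
      rw [abs_of_nonneg (hSnn _)]
      exact hScast _ _ (by omega)
    · simp
      positivity
  -- the termwise identity
  have h_term : ∀ n : ℕ, ((n:ℝ) - θ - 1) * U n = bf n + cf n + df n := by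
    intro n
    by_cases hn : θ + 2 ≤ n
    · have h2n : 2 ≤ n := by omega
      have hSig1 : ∑ k ∈ Finset.Icc θ (n-2), U k = S (n-2) := by
        simp only [hSdef]
        have hsub : Finset.Icc θ (n-2) ⊆ Finset.range (n-2+1) := by
          intro x hx
          simp only [Finset.mem_Icc] at hx
          simp only [Finset.mem_range]
          omega
        refine Finset.sum_subset hsub fun x hx hnx => h0 x ?_
        simp only [Finset.mem_range] at hx
        simp only [Finset.mem_Icc] at hnx
        omega
      have hSig2 : ∑ k ∈ Finset.Icc θ (n-2), U (n - k - 2) = S (n - θ - 2) := by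
        rw [← Finset.Ico_add_one_right_eq_Icc, Finset.sum_Ico_eq_sum_range]
        have hm : n - 2 + 1 - θ = n - θ - 2 + 1 := by omega
        rw [hm]
        have hcongr : ∀ i ∈ Finset.range (n-θ-2+1),
            U (n - (θ + i) - 2) = U (n - θ - 2 + 1 - 1 - i) := by
          intro i hi
          simp only [Finset.mem_range] at hi
          congr 1
          omega
        rw [Finset.sum_congr rfl hcongr, Finset.sum_range_reflect]
      have hnR : (θ:ℝ) + 2 ≤ (n:ℝ) := by exact_mod_cast hn
      have hne : ((n:ℝ) - θ - 1) ≠ 0 := ne_of_gt (by linarith)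
      simp only [hbf, hcf, hdf]
      rw [if_pos hn, if_pos h2n, if_pos hn]
      rw [hrec n hn, Finset.sum_add_distrib, hSig1, hSig2]
      field_simp
      ring
    · have hUn : U n = 0 := h0 n (by omega)
      have hcf0 : cf n = 0 := by
        simp only [hcf]
        split
        · simp only [hSdef]
          exact Finset.sum_eq_zero fun k hk => h0 k (by
            simp only [Finset.mem_range] at hk; omega)
        · rfl
      rw [hUn, hcf0]
      simp only [hbf, hdf]
      rw [if_neg hn, if_neg hn]
      ring
  -- main tsum identities
  set Yv := ∑' n : ℕ, U n * z ^ n with hYv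
  set Tv := ∑' n : ℕ, S n * z ^ n with hTv
  set Nv := ∑' n : ℕ, (n:ℝ) * U n * z ^ n with hNv
  have hA1 : ∑' n : ℕ, ((n:ℝ) - θ - 1) * U n * z^n = Nv - ((θ:ℝ)+1) * Yv := by
    have h2 : Summable fun n : ℕ => ((θ:ℝ)+1) * (U n * z^n) := hsUz.mul_left _
    have h3 := Summable.tsum_sub hsN h2
    rw [tsum_mul_left] at h3
    rw [← h3]
    exact tsum_congr fun n => by ring
  have hA2 : ∑' n : ℕ, ((n:ℝ) - θ - 1) * U n * z^n
      = (∑' n : ℕ, bf n * z^n) + (∑' n : ℕ, cf n * z^n) + (∑' n : ℕ, df n * z^n) := by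
    have e : ∀ n : ℕ, ((n:ℝ) - θ - 1) * U n * z^n
        = bf n * z^n + (cf n * z^n + df n * z^n) := by
      intro n
      rw [show ((n:ℝ) - θ - 1) * U n * z^n = (((n:ℝ) - θ - 1) * U n) * z^n by ring,
        h_term n]
      ring
    rw [tsum_congr e, Summable.tsum_add hsbf (hscf.add hsdf), Summable.tsum_add hscf hsdf]
    ring
  have hB : ∑' n : ℕ, bf n * z^n = z^(θ+2)/(1-z)^2 := by
    rw [← Summable.sum_add_tsum_nat_add (θ+2) hsbf]
    have h1 : ∑ i ∈ Finset.range (θ+2), bf i * z^i = 0 := by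
      refine Finset.sum_eq_zero fun i hi => ?_
      simp only [hbf]
      rw [if_neg (by simp only [Finset.mem_range] at hi; omega)]
      ring
    rw [h1, zero_add]
    have h2 : ∀ i : ℕ, bf (i + (θ+2)) * z^(i+(θ+2)) = z^(θ+1) * (((i:ℝ)+1) * z^(i+1)) := by
      intro i
      simp only [hbf]
      rw [if_pos (by omega)]
      push_cast
      ring
    rw [tsum_congr h2, tsum_mul_left]
    have hs1 : Summable fun n : ℕ => (n:ℝ) * z^n := by
      have := summable_pow_mul_geometric_of_norm_lt_one (R := ℝ) 1 hznorm
      simpa using this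
    have h3 : ∑' i : ℕ, ((i:ℝ)+1) * z^(i+1) = z/(1-z)^2 := by
      have h4 := Summable.tsum_eq_zero_add hs1
      rw [tsum_coe_mul_geometric_of_norm_lt_one hznorm] at h4
      simp only [Nat.cast_zero, zero_mul, pow_zero, zero_add, Nat.cast_add,
        Nat.cast_one] at h4
      exact h4.symm
    rw [h3]
    field_simp
    ring
  have hC : ∑' n : ℕ, cf n * z^n = z^2 * Tv := by
    rw [← Summable.sum_add_tsum_nat_add 2 hscf]
    have h1 : ∑ i ∈ Finset.range 2, cf i * z^i = 0 := by
      refine Finset.sum_eq_zero fun i hi => ?_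
      simp only [hcf]
      rw [if_neg (by simp only [Finset.mem_range] at hi; omega)]
      ring
    rw [h1, zero_add]
    have h2 : ∀ i : ℕ, cf (i + 2) * z^(i+2) = z^2 * (S i * z^i) := by
      intro i
      simp only [hcf]
      rw [if_pos (by omega), show i + 2 - 2 = i from by omega]
      ring
    rw [tsum_congr h2, tsum_mul_left, hTv]
  have hD : ∑' n : ℕ, df n * z^n = z^(θ+2) * Tv := by
    rw [← Summable.sum_add_tsum_nat_add (θ+2) hsdf]
    have h1 : ∑ i ∈ Finset.range (θ+2), df i * z^i = 0 := by
      refine Finset.sum_eq_zero fun i hi => ?_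
      simp only [hdf]
      rw [if_neg (by simp only [Finset.mem_range] at hi; omega)]
      ring
    rw [h1, zero_add]
    have h2 : ∀ i : ℕ, df (i + (θ+2)) * z^(i+(θ+2)) = z^(θ+2) * (S i * z^i) := by
      intro i
      simp only [hdf]
      rw [if_pos (by omega), show i + (θ+2) - θ - 2 = i from by omega]
      ring
    rw [tsum_congr h2, tsum_mul_left, hTv]
  have hT : (1 - z) * Tv = Yv := by
    have hA2' : Summable fun n : ℕ => S (n+1) * z^(n+1) :=
      (summable_nat_add_iff (f := fun n : ℕ => S n * z^n) 1).mpr hsSz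
    have hA2'' : Summable fun n : ℕ => S n * z^(n+1) := by
      refine (hsSz.mul_left z).congr fun n => ?_
      ring
    have e1 : z * Tv = ∑' n : ℕ, S n * z^(n+1) := by
      rw [hTv, ← tsum_mul_left]
      exact tsum_congr fun n => by ring
    have e2 : Tv = S 0 * z^0 + ∑' n : ℕ, S (n+1) * z^(n+1) := Summable.tsum_eq_zero_add hsSz
    have e3 : Yv = U 0 * z^0 + ∑' n : ℕ, U (n+1) * z^(n+1) := Summable.tsum_eq_zero_add hsUz
    have e4 : (∑' n : ℕ, S (n+1) * z^(n+1)) - (∑' n : ℕ, S n * z^(n+1))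
        = ∑' n : ℕ, U (n+1) * z^(n+1) := by
      rw [← Summable.tsum_sub hA2' hA2'']
      refine tsum_congr fun n => ?_
      have hss : S (n+1) = S n + U (n+1) := by
        simp only [hSdef]
        rw [Finset.sum_range_succ]
      rw [hss]
      ring
    have hS0 : S 0 = U 0 := by simp [hSdef]
    linear_combination e2 - e1 - e3 + e4 + hS0
  have key : Nv - ((θ:ℝ)+1) * Yv = z^(θ+2)/(1-z)^2 + z^2 * Tv + z^(θ+2) * Tv := by
    rw [← hA1, hA2, hB, hC, hD]
  -- differentiation of the power series
  set r : ℝ := (1 + |z|)/2 with hrdef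
  have hr0 : 0 < r := by positivity
  have hr1 : r < 1 := by rw [hrdef]; linarith
  have hzr : |z| < r := by rw [hrdef]; linarith
  have hrabs : |r| < 1 := by rw [abs_of_pos hr0]; exact hr1
  have hu : Summable (fun n : ℕ => (n:ℝ) * (n:ℝ) * r^(n-1)) := by
    have haux : Summable fun n : ℕ => (((n:ℝ)+1) * ((n:ℝ)+1)) * r^n := by
      refine quasiAux_summable hrabs (C := 4) fun n => ?_
      rw [abs_of_nonneg (by positivity)]
      nlinarith [Nat.cast_nonneg (α := ℝ) n]
    exact (summable_nat_add_iff (f := fun m : ℕ => (m:ℝ) * (m:ℝ) * r^(m-1)) 1).mp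
      (haux.congr fun n => by
        simp only [Nat.add_sub_cancel]
        push_cast
        ring)
  have hderiv : HasDerivAt (fun x : ℝ => ∑' n : ℕ, U n * x ^ n)
      (∑' n : ℕ, U n * ((n:ℝ) * z^(n-1))) z := by
    refine hasDerivAt_tsum_of_isPreconnected (u := fun n : ℕ => (n:ℝ) * (n:ℝ) * r^(n-1))
      (t := Metric.ball (0:ℝ) r) (y₀ := (0:ℝ))
      (g := fun n x => U n * x ^ n) (g' := fun n x => U n * ((n:ℝ) * x^(n-1)))
      hu Metric.isOpen_ball ((convex_ball (0:ℝ) r).isPreconnected)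
      (fun n y _ => (hasDerivAt_pow n y).const_mul (U n)) ?_
      (Metric.mem_ball_self hr0) (hsumm 0 (by norm_num))
      (Metric.mem_ball.mpr (by simpa [Real.dist_eq] using hzr))
    intro n y hy
    have hyr : |y| ≤ r := le_of_lt (by simpa [Real.dist_eq] using Metric.mem_ball.mp hy)
    have h1 : |U n| ≤ (n:ℝ) := by rw [abs_of_nonneg (hU n).1]; exact (hU n).2
    have h2 : |y|^(n-1) ≤ r^(n-1) := pow_le_pow_left₀ (abs_nonneg y) hyr _
    rw [Real.norm_eq_abs, abs_mul, abs_mul, abs_pow, Nat.abs_cast]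
    calc |U n| * ((n:ℝ) * |y|^(n-1)) ≤ (n:ℝ) * ((n:ℝ) * r^(n-1)) := by
          refine mul_le_mul h1 ?_ (by positivity) (Nat.cast_nonneg n)
          exact mul_le_mul_of_nonneg_left h2 (Nat.cast_nonneg n)
      _ = (n:ℝ) * (n:ℝ) * r^(n-1) := by ring
  have hzD : z * deriv (fun x : ℝ => ∑' n : ℕ, U n * x ^ n) z = Nv := by
    rw [hderiv.deriv, hNv, ← tsum_mul_left]
    refine tsum_congr fun n => ?_
    cases n with
    | zero => simp
    | succ m =>
      simp only [Nat.add_sub_cancel]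
      push_cast
      ring
  have hBB : (1-z) * (z^(θ+2)/(1-z)^2) = z^(θ+2)/(1-z) := by
    field_simp
  linear_combination (1-z) * hzD + (1-z) * key + (z^2 + z^(θ+2)) * hT + hBB
end

section
/- Fix an integer θ ≥ 1 and define the sequence (U_n)_{n≥0} by U_n = 0 for 0 ≤ n ≤ θ + 1, and U_n = 1 + (1/(n − θ − 1)) · Σ_{k=θ}^{n−2} (U_k + U_{n−k−2}) for n ≥ θ + 2. Then for every real z with 0 ≤ z < 1, Σ_{n≥0} U_n z^n = (z^{θ+1}/(1−z)²) · exp(−z − Σ_{j=1}^{θ+1} z^j/j) · ∫₀^z exp(t + Σ_{j=1}^{θ+1} t^j/j) dt. -/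
open Finset Filter Real

section QRGF
variable {θ : ℕ} {U : ℕ → ℝ} {c C x r : ℝ}




private lemma qr_nonneg (hθ : 1 ≤ θ)
    (h0 : ∀ n : ℕ, n ≤ θ + 1 → U n = 0)
    (hrec : ∀ n : ℕ, θ + 2 ≤ n →
      U n = 1 + (1 / ((n : ℝ) - θ - 1)) *
        ∑ k ∈ Finset.Icc θ (n - 2), (U k + U (n - k - 2))) :
    ∀ n, 0 ≤ U n := by
  intro n
  induction n using Nat.strong_induction_on with
  | _ n ih =>
    by_cases hn : n ≤ θ + 1
    · rw [h0 n hn]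
    · push_neg at hn
      have hn' : θ + 2 ≤ n := hn
      rw [hrec n hn']
      have hcast : (θ : ℝ) + 2 ≤ (n : ℝ) := by exact_mod_cast hn'
      have hpos : (0:ℝ) < (n:ℝ) - θ - 1 := by linarith
      have hsum : 0 ≤ ∑ k ∈ Finset.Icc θ (n-2), (U k + U (n-k-2)) := by
        apply Finset.sum_nonneg
        intro k hk
        simp only [Finset.mem_Icc] at hk
        exact add_nonneg (ih k (by omega)) (ih _ (by omega))
      have : 0 ≤ (1 / ((n : ℝ) - θ - 1)) *
          ∑ k ∈ Finset.Icc θ (n-2), (U k + U (n-k-2)) :=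
        mul_nonneg (by positivity) hsum
      linarith

private lemma qr_le_three_pow (hθ : 1 ≤ θ)
    (h0 : ∀ n : ℕ, n ≤ θ + 1 → U n = 0)
    (hrec : ∀ n : ℕ, θ + 2 ≤ n →
      U n = 1 + (1 / ((n : ℝ) - θ - 1)) *
        ∑ k ∈ Finset.Icc θ (n - 2), (U k + U (n - k - 2))) :
    ∀ n, U n ≤ 3 ^ n := by
  intro n
  induction n using Nat.strong_induction_on with
  | _ n ih =>
    by_cases hn : n ≤ θ + 1
    · rw [h0 n hn]; positivity
    · push_neg at hn
      have hn' : θ + 2 ≤ n := hn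
      rw [hrec n hn']
      have hcast : (θ : ℝ) + 2 ≤ (n : ℝ) := by exact_mod_cast hn'
      have hpos : (0:ℝ) < (n:ℝ) - θ - 1 := by linarith
      have hnn := qr_nonneg hθ h0 hrec
      have hsum : 0 ≤ ∑ k ∈ Finset.Icc θ (n-2), (U k + U (n-k-2)) :=
        Finset.sum_nonneg fun k _ => add_nonneg (hnn k) (hnn _)
      have h1d : 1 / ((n:ℝ) - θ - 1) ≤ 1 := by
        rw [div_le_one hpos]; linarith
      have step1 : (1 / ((n : ℝ) - θ - 1)) *
          (∑ k ∈ Finset.Icc θ (n-2), (U k + U (n-k-2)))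
          ≤ ∑ k ∈ Finset.Icc θ (n-2), (U k + U (n-k-2)) :=
        mul_le_of_le_one_left hsum h1d
      have step2 : ∑ k ∈ Finset.Icc θ (n-2), (U k + U (n-k-2))
          ≤ ∑ k ∈ Finset.Icc θ (n-2), ((3:ℝ)^k + 3^(n-k-2)) := by
        apply Finset.sum_le_sum
        intro k hk
        simp only [Finset.mem_Icc] at hk
        exact add_le_add (ih k (by omega)) (ih _ (by omega))
      have step3 : ∑ k ∈ Finset.Icc θ (n-2), ((3:ℝ)^k + 3^(n-k-2))
          ≤ ∑ k ∈ Finset.range (n-1), ((3:ℝ)^k + 3^(n-k-2)) := by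
        apply Finset.sum_le_sum_of_subset_of_nonneg
        · intro k hk
          simp only [Finset.mem_Icc] at hk
          simp only [Finset.mem_range]
          omega
        · intro k _ _; positivity
      have hrefl : ∑ k ∈ Finset.range (n-1), (3:ℝ)^(n-k-2)
          = ∑ k ∈ Finset.range (n-1), (3:ℝ)^k := by
        rw [← Finset.sum_range_reflect (fun j => (3:ℝ)^j) (n-1)]
        apply Finset.sum_congr rfl
        intro k hk
        simp only [Finset.mem_range] at hk
        congr 1
        omega
      have hgeom : ∑ k ∈ Finset.range (n-1), (3:ℝ)^k = ((3:ℝ)^(n-1) - 1)/2 := by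
        rw [geom_sum_eq (by norm_num : (3:ℝ) ≠ 1)]
        norm_num
      have step4 : ∑ k ∈ Finset.range (n-1), ((3:ℝ)^k + 3^(n-k-2))
          = (3:ℝ)^(n-1) - 1 := by
        rw [Finset.sum_add_distrib, hrefl, hgeom]; ring
      have hexp : (3:ℝ)^(n-1) ≤ 3^n := by
        apply pow_le_pow_right₀ (by norm_num) (by omega)
      linarith

private lemma qr_growth (hθ : 1 ≤ θ)
    (h0 : ∀ n : ℕ, n ≤ θ + 1 → U n = 0)
    (hrec : ∀ n : ℕ, θ + 2 ≤ n →
      U n = 1 + (1 / ((n : ℝ) - θ - 1)) *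
        ∑ k ∈ Finset.Icc θ (n - 2), (U k + U (n - k - 2))) :
    ∀ c : ℝ, 1 < c → ∃ C : ℝ, 1 ≤ C ∧ ∀ n, U n ≤ C * c ^ n := by
  intro c hc
  obtain ⟨M, hM⟩ : ∃ M : ℕ, 2 / (c-1)^2 ≤ (M:ℝ) + 1 := by
    obtain ⟨M, hM⟩ := exists_nat_ge (2 / (c-1)^2)
    exact ⟨M, by linarith⟩
  refine ⟨3 ^ (θ + 1 + M), one_le_pow₀ (by norm_num), ?_⟩
  have hnn := qr_nonneg hθ h0 hrec
  have hc0 : (0:ℝ) < c := by linarith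
  have hC1 : (1:ℝ) ≤ 3 ^ (θ + 1 + M) := one_le_pow₀ (by norm_num)
  intro n
  induction n using Nat.strong_induction_on with
  | _ n ih =>
    by_cases hn : n ≤ θ + 1 + M
    · calc U n ≤ 3 ^ n := qr_le_three_pow hθ h0 hrec n
        _ ≤ 3 ^ (θ + 1 + M) := by
            apply pow_le_pow_right₀ (by norm_num) hn
        _ = 3 ^ (θ + 1 + M) * 1 := by ring
        _ ≤ 3 ^ (θ + 1 + M) * c ^ n := by
            apply mul_le_mul_of_nonneg_left (one_le_pow₀ hc.le) (by positivity)
    · push_neg at hn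
      have hn2 : θ + 2 ≤ n := by omega
      rw [hrec n hn2]
      have hcast : (θ : ℝ) + 2 ≤ (n : ℝ) := by exact_mod_cast hn2
      have hcast2 : (θ : ℝ) + 1 + M + 1 ≤ (n : ℝ) := by exact_mod_cast hn
      have hpos : (0:ℝ) < (n:ℝ) - θ - 1 := by linarith
      have hM1 : (0:ℝ) < (M:ℝ) + 1 := by positivity
      set C : ℝ := 3 ^ (θ + 1 + M) with hCdef
      have step2 : ∑ k ∈ Finset.Icc θ (n-2), (U k + U (n-k-2))
          ≤ ∑ k ∈ Finset.range (n-1), (C * c^k + C * c^(n-k-2)) := by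
        calc ∑ k ∈ Finset.Icc θ (n-2), (U k + U (n-k-2))
            ≤ ∑ k ∈ Finset.Icc θ (n-2), (C * c^k + C * c^(n-k-2)) := by
              apply Finset.sum_le_sum
              intro k hk
              simp only [Finset.mem_Icc] at hk
              exact add_le_add (ih k (by omega)) (ih _ (by omega))
          _ ≤ ∑ k ∈ Finset.range (n-1), (C * c^k + C * c^(n-k-2)) := by
              apply Finset.sum_le_sum_of_subset_of_nonneg
              · intro k hk
                simp only [Finset.mem_Icc] at hk
                simp only [Finset.mem_range]
                omega
              · intro k _ _; positivity
      have hrefl : ∑ k ∈ Finset.range (n-1), c^(n-k-2)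
          = ∑ k ∈ Finset.range (n-1), c^k := by
        rw [← Finset.sum_range_reflect (fun j => c^j) (n-1)]
        apply Finset.sum_congr rfl
        intro k hk
        simp only [Finset.mem_range] at hk
        congr 1
        omega
      have hgeom : ∑ k ∈ Finset.range (n-1), c^k ≤ c^(n-1) / (c-1) := by
        rw [geom_sum_eq (by linarith : c ≠ 1)]
        apply div_le_div_of_nonneg_right ?_ (by linarith)
        · linarith [pow_nonneg hc0.le (n-1)]
      have hsum0 : 0 ≤ ∑ k ∈ Finset.Icc θ (n-2), (U k + U (n-k-2)) :=
        Finset.sum_nonneg fun k _ => add_nonneg (hnn k) (hnn _)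
      have hC0 : (0:ℝ) < C := by positivity
      have hsplit : ∑ k ∈ Finset.range (n-1), (C * c^k + C * c^(n-k-2))
          ≤ 2 * C * (c^(n-1)/(c-1)) := by
        rw [Finset.sum_add_distrib, ← Finset.mul_sum, ← Finset.mul_sum, hrefl]
        nlinarith [hgeom]
      have hd : 1/((n:ℝ)-θ-1) ≤ 1/((M:ℝ)+1) := by
        apply one_div_le_one_div_of_le hM1
        linarith
      have hmul : (1/((n:ℝ)-θ-1)) * ∑ k ∈ Finset.Icc θ (n-2), (U k + U (n-k-2))
          ≤ (1/((M:ℝ)+1)) * (2*C*(c^(n-1)/(c-1))) :=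
        mul_le_mul hd (le_trans step2 hsplit) hsum0 (by positivity)
      have hcn1 : (1:ℝ) ≤ c^(n-1) := one_le_pow₀ hc.le
      have hc1 : (0:ℝ) < c - 1 := by linarith
      have hkey : 2 ≤ ((M:ℝ)+1) * (c-1)^2 := by
        rw [div_le_iff₀ (pow_pos hc1 2)] at hM
        linarith
      have hpowsucc : c^n = c^(n-1) * c := by
        rw [← pow_succ]
        congr 1
        omega
      have e1 : (1/((M:ℝ)+1)) * (2*C*(c^(n-1)/(c-1))) ≤ C * (c-1) * c^(n-1) := by
        have heq : (1/((M:ℝ)+1)) * (2*C*(c^(n-1)/(c-1)))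
            = 2*C*c^(n-1) / (((M:ℝ)+1)*(c-1)) := by
          field_simp
        rw [heq, div_le_iff₀ (mul_pos hM1 hc1)]
        have ht0 : (0:ℝ) < c^(n-1) := pow_pos hc0 _
        nlinarith [mul_pos hC0 ht0]
      have e2 : 1 + C * (c-1) * c^(n-1) ≤ C * c^n := by
        rw [hpowsucc]
        nlinarith [hcn1, hC1]
      linarith





private lemma qr_summable_norm (hnn : ∀ n, 0 ≤ U n) (hub : ∀ n, U n ≤ C * c ^ n)
    (hc : 1 < c) (hx : c * |x| < 1) :
    Summable (fun n => ‖U n * x ^ n‖) := by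
  have hq0 : 0 ≤ c * |x| := mul_nonneg (by linarith) (abs_nonneg x)
  have hgeo : Summable (fun n => C * (c * |x|) ^ n) :=
    (summable_geometric_of_lt_one hq0 hx).mul_left C
  apply Summable.of_nonneg_of_le (fun n => norm_nonneg _) ?_ hgeo
  intro n
  rw [norm_mul, norm_pow, Real.norm_eq_abs, Real.norm_eq_abs,
    abs_of_nonneg (hnn n), mul_pow]
  have h1 : |x| ^ n ≤ |x| ^ n := le_refl _
  calc U n * |x| ^ n ≤ (C * c ^ n) * |x| ^ n := by
        apply mul_le_mul_of_nonneg_right (hub n) (by positivity)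
    _ = C * (c ^ n * |x| ^ n) := by ring

private lemma qr_summable (hnn : ∀ n, 0 ≤ U n) (hub : ∀ n, U n ≤ C * c ^ n)
    (hc : 1 < c) (hx : c * |x| < 1) :
    Summable (fun n => U n * x ^ n) :=
  (qr_summable_norm hnn hub hc hx).of_norm

private lemma qr_summable_S (hnn : ∀ n, 0 ≤ U n) (hub : ∀ n, U n ≤ C * c ^ n)
    (hc : 1 < c) (hC : 1 ≤ C) (hx : c * |x| < 1) :
    Summable (fun m => (∑ k ∈ Finset.range (m+1), U k) * x ^ m) := by
  have hq0 : 0 ≤ c * |x| := mul_nonneg (by linarith) (abs_nonneg x)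
  have hq1 : ‖c * |x|‖ < 1 := by rwa [Real.norm_eq_abs, abs_of_nonneg hq0]
  have h1 : Summable (fun m : ℕ => (m : ℝ) * (c * |x|) ^ m) := by
    simpa using summable_pow_mul_geometric_of_norm_lt_one 1 hq1
  have h2 : Summable (fun m : ℕ => (c * |x|) ^ m) :=
    summable_geometric_of_lt_one hq0 hx
  have hgeo : Summable (fun m : ℕ => C * (((m:ℝ) + 1) * (c * |x|) ^ m)) := by
    apply Summable.mul_left C
    have := h1.add h2
    apply this.congr
    intro m
    ring
  apply Summable.of_norm
  apply Summable.of_nonneg_of_le (fun n => norm_nonneg _) ?_ hgeo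
  intro m
  have hS0 : 0 ≤ ∑ k ∈ Finset.range (m+1), U k := Finset.sum_nonneg fun k _ => hnn k
  rw [norm_mul, norm_pow, Real.norm_eq_abs, Real.norm_eq_abs, abs_of_nonneg hS0]
  have hSb : ∑ k ∈ Finset.range (m+1), U k ≤ ((m:ℝ) + 1) * (C * c ^ m) := by
    calc ∑ k ∈ Finset.range (m+1), U k ≤ ∑ k ∈ Finset.range (m+1), C * c ^ m := by
          apply Finset.sum_le_sum
          intro k hk
          simp only [Finset.mem_range] at hk
          calc U k ≤ C * c ^ k := hub k
            _ ≤ C * c ^ m := by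
                apply mul_le_mul_of_nonneg_left
                  (pow_le_pow_right₀ hc.le (by omega)) (by linarith)
      _ = ((m:ℝ) + 1) * (C * c ^ m) := by
          rw [Finset.sum_const, Finset.card_range]
          push_cast
          ring
  calc (∑ k ∈ Finset.range (m+1), U k) * |x| ^ m
      ≤ (((m:ℝ) + 1) * (C * c ^ m)) * |x| ^ m := by
        apply mul_le_mul_of_nonneg_right hSb (by positivity)
    _ = C * (((m:ℝ) + 1) * (c * |x|) ^ m) := by
        rw [mul_pow]
        ring

private lemma qr_shift (h0 : ∀ n : ℕ, n ≤ θ + 1 → U n = 0) (x : ℝ) :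
    ∑' n : ℕ, U n * x ^ n = x ^ (θ+1) * ∑' m : ℕ, U (m + (θ+1)) * x ^ m := by
  rw [← tsum_mul_left]
  have h1 : ∀ m : ℕ, x ^ (θ+1) * (U (m + (θ+1)) * x ^ m)
      = U (m + (θ+1)) * x ^ (m + (θ+1)) := by
    intro m
    rw [pow_add]
    ring
  rw [tsum_congr h1]
  refine ((add_left_injective (θ+1)).tsum_eq (f := fun n => U n * x ^ n) ?_).symm
  intro n hn
  simp only [Function.mem_support] at hn
  have hnle : ¬ n ≤ θ + 1 := fun h => hn (by rw [h0 n h, zero_mul])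
  exact ⟨n - (θ+1), by show n - (θ+1) + (θ+1) = n; omega⟩





private lemma qr_hasDerivAt (hnn : ∀ n, 0 ≤ U n) (hub : ∀ n, U n ≤ C * c ^ n)
    (hc : 1 < c) (hC : 1 ≤ C) (hr0 : 0 < r) (hcr : c * r < 1)
    (hx : x ∈ Set.Ioo (-r) r) :
    HasDerivAt (fun y : ℝ => ∑' m : ℕ, U (m + (θ+1)) * y ^ m)
      (∑' m : ℕ, U (m + (θ+1)) * ((m:ℝ) * x ^ (m-1))) x := by
  have hq0 : (0:ℝ) ≤ c * r := mul_nonneg (by linarith) hr0.le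
  have hq1 : ‖c * r‖ < 1 := by rwa [Real.norm_eq_abs, abs_of_nonneg hq0]
  have hu : Summable (fun n : ℕ => C * c ^ (θ+1) / r * ((n:ℝ) * (c*r) ^ n)) := by
    apply Summable.mul_left
    simpa using summable_pow_mul_geometric_of_norm_lt_one 1 hq1
  refine hasDerivAt_tsum_of_isPreconnected hu isOpen_Ioo
    (convex_Ioo (-r) r).isPreconnected
    (fun n y _ => HasDerivAt.const_mul (U (n + (θ+1))) (hasDerivAt_pow n y))
    (fun n y hy => ?_) (Set.mem_Ioo.mpr ⟨by linarith, hr0⟩) ?_ hx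
  · rcases Nat.eq_zero_or_pos n with h | h
    · subst h
      simp
    · have hy' : |y| ≤ r := by
        rw [abs_le]
        exact ⟨hy.1.le, hy.2.le⟩
      have hrn : r ^ n = r ^ (n-1) * r := by
        rw [← pow_succ]
        congr 1
        omega
      have hnorm : ‖U (n + (θ+1)) * ((n:ℝ) * y ^ (n-1))‖
          = U (n + (θ+1)) * ((n:ℝ) * |y| ^ (n-1)) := by
        rw [norm_mul, norm_mul, norm_pow, Real.norm_eq_abs, Real.norm_eq_abs,
          Real.norm_eq_abs, abs_of_nonneg (hnn _), Nat.abs_cast]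
      rw [hnorm]
      have key : U (n + (θ+1)) * ((n:ℝ) * |y| ^ (n-1))
          ≤ (C * c ^ (n + (θ+1))) * ((n:ℝ) * r ^ (n-1)) := by
        apply mul_le_mul (hub _) ?_ (by positivity) (by positivity)
        exact mul_le_mul_of_nonneg_left
          (pow_le_pow_left₀ (abs_nonneg y) hy' _) (Nat.cast_nonneg n)
      have heq : (C * c ^ (n + (θ+1))) * ((n:ℝ) * r ^ (n-1))
          = C * c ^ (θ+1) / r * ((n:ℝ) * (c*r) ^ n) := by
        rw [mul_pow, pow_add, hrn]
        field_simp
      linarith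
  · apply summable_of_ne_finset_zero (s := ({0} : Finset ℕ))
    intro n hn
    simp only [Finset.mem_singleton] at hn
    rw [zero_pow hn, mul_zero]

private lemma qr_summable_of_le (hc : 1 < c) (hC : 0 ≤ C) {T : ℕ → ℝ}
    (hT : ∀ n, |T n| ≤ ((n:ℝ) + 1) * (C * c ^ n)) (hq : c * |x| < 1) :
    Summable fun n => T n * x ^ n := by
  have hq0 : 0 ≤ c * |x| := mul_nonneg (by linarith) (abs_nonneg x)
  have hq1 : ‖c * |x|‖ < 1 := by rwa [Real.norm_eq_abs, abs_of_nonneg hq0]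
  have h1 : Summable (fun m : ℕ => (m : ℝ) * (c * |x|) ^ m) := by
    simpa using summable_pow_mul_geometric_of_norm_lt_one 1 hq1
  have h2 : Summable (fun m : ℕ => (c * |x|) ^ m) :=
    summable_geometric_of_lt_one hq0 hq
  have hgeo : Summable (fun m : ℕ => C * (((m:ℝ) + 1) * (c * |x|) ^ m)) := by
    apply Summable.mul_left C
    exact (h1.add h2).congr (fun m => by ring)
  apply Summable.of_norm
  apply Summable.of_nonneg_of_le (fun n => norm_nonneg _) ?_ hgeo
  intro n
  rw [norm_mul, norm_pow, Real.norm_eq_abs, Real.norm_eq_abs]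
  calc |T n| * |x| ^ n ≤ (((n:ℝ) + 1) * (C * c ^ n)) * |x| ^ n :=
        mul_le_mul_of_nonneg_right (hT n) (by positivity)
    _ = C * (((n:ℝ) + 1) * (c * |x|) ^ n) := by rw [mul_pow]; ring





private lemma qr_E (hθ : 1 ≤ θ)
    (h0 : ∀ n : ℕ, n ≤ θ + 1 → U n = 0)
    (hrec : ∀ n : ℕ, θ + 2 ≤ n →
      U n = 1 + (1 / ((n : ℝ) - θ - 1)) *
        ∑ k ∈ Finset.Icc θ (n - 2), (U k + U (n - k - 2)))
    (hnn : ∀ n, 0 ≤ U n) (hub : ∀ n, U n ≤ C * c ^ n)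
    (hc : 1 < c) (hC : 1 ≤ C) (hq : c * |x| < 1) :
    x ^ (θ+2) * ∑' m : ℕ, U (m + (θ+1)) * ((m:ℝ) * x ^ (m-1))
      = x ^ (θ+2) / (1-x) ^ 2
        + (x ^ 2 + x ^ (θ+2)) * ((∑' n : ℕ, U n * x ^ n) * (1-x)⁻¹) := by
  have hx1 : |x| < 1 := lt_of_le_of_lt (le_mul_of_one_le_left (abs_nonneg x) hc.le) hq
  have hxn : ‖x‖ < 1 := by rwa [Real.norm_eq_abs]
  -- the three coefficient families
  set B₁ : ℕ → ℝ := fun n => ((n - (θ+1) : ℕ) : ℝ) * x ^ n with hB₁def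
  set B₂ : ℕ → ℝ := fun n => (∑ k ∈ Finset.Icc θ (n-2), U k) * x ^ n with hB₂def
  set B₃ : ℕ → ℝ := fun n => (∑ k ∈ Finset.Icc θ (n-2), U (n-k-2)) * x ^ n with hB₃def
  -- Step 1: LHS equals ∑' n, (B₁ n + (B₂ n + B₃ n))
  have step1 : x ^ (θ+2) * ∑' m : ℕ, U (m + (θ+1)) * ((m:ℝ) * x ^ (m-1))
      = ∑' n : ℕ, (B₁ n + (B₂ n + B₃ n)) := by
    rw [← tsum_mul_left]
    have e1 : ∀ m : ℕ, x ^ (θ+2) * (U (m + (θ+1)) * ((m:ℝ) * x ^ (m-1)))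
        = ((m + (θ+1) - (θ+1) : ℕ) : ℝ) * U (m + (θ+1)) * x ^ (m + (θ+1)) := by
      intro m
      rcases Nat.eq_zero_or_pos m with h | h
      · subst h; simp
      · have : x ^ (θ+2) * x ^ (m-1) = x ^ (m + (θ+1)) := by
          rw [← pow_add]
          congr 1
          omega
        rw [Nat.add_sub_cancel]
        calc x ^ (θ+2) * (U (m + (θ+1)) * ((m:ℝ) * x ^ (m-1)))
            = (m:ℝ) * U (m + (θ+1)) * (x ^ (θ+2) * x ^ (m-1)) := by ring
          _ = (m:ℝ) * U (m + (θ+1)) * x ^ (m + (θ+1)) := by rw [this]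
    rw [tsum_congr e1]
    have e2 : ∑' m : ℕ, ((m + (θ+1) - (θ+1) : ℕ) : ℝ) * U (m + (θ+1)) * x ^ (m + (θ+1))
        = ∑' n : ℕ, ((n - (θ+1) : ℕ) : ℝ) * U n * x ^ n := by
      apply (add_left_injective (θ+1)).tsum_eq
        (f := fun n => ((n - (θ+1) : ℕ) : ℝ) * U n * x ^ n)
      intro n hn
      simp only [Function.mem_support] at hn
      have hnle : ¬ n ≤ θ + 1 := by
        intro h
        apply hn
        have : n - (θ+1) = 0 := by omega
        rw [this]
        simp
      exact ⟨n - (θ+1), by show n - (θ+1) + (θ+1) = n; omega⟩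
    rw [e2]
    apply tsum_congr
    intro n
    by_cases hn : n ≤ θ + 1
    · have h1 : n - (θ+1) = 0 := by omega
      have h2 : Finset.Icc θ (n-2) = ∅ := by
        apply Finset.Icc_eq_empty
        omega
      simp [hB₁def, hB₂def, hB₃def, h1, h2, h0 n hn]
    · push_neg at hn
      have hn2 : θ + 2 ≤ n := hn
      have hcast : ((n - (θ+1) : ℕ) : ℝ) = (n:ℝ) - θ - 1 := by
        have : ((n - (θ+1) : ℕ) : ℝ) = (n:ℝ) - ((θ+1 : ℕ) : ℝ) :=
          Nat.cast_sub (by omega)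
        rw [this]
        push_cast
        ring
      have hd : ((n:ℝ) - θ - 1) ≠ 0 := by
        have : (θ:ℝ) + 2 ≤ (n:ℝ) := by exact_mod_cast hn2
        intro h
        rw [sub_eq_zero] at h
        nlinarith [h]
      simp only [hB₁def, hB₂def, hB₃def]
      rw [hcast, hrec n hn2, Finset.sum_add_distrib]
      field_simp
  rw [step1]
  -- summability of the three families
  have hsum_aux : ∀ (V : ℕ → ℕ → ℝ), (∀ n k, k ∈ Finset.Icc θ (n-2) → 0 ≤ V n k)
      → (∀ n k, k ∈ Finset.Icc θ (n-2) → V n k ≤ C * c ^ n)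
      → Summable fun n => (∑ k ∈ Finset.Icc θ (n-2), V n k) * x ^ n := by
    intro V hV0 hVb
    apply qr_summable_of_le (C := C) hc (by linarith) ?_ hq
    intro n
    have h1 : 0 ≤ ∑ k ∈ Finset.Icc θ (n-2), V n k :=
      Finset.sum_nonneg (hV0 n)
    rw [abs_of_nonneg h1]
    calc ∑ k ∈ Finset.Icc θ (n-2), V n k
        ≤ ∑ k ∈ Finset.Icc θ (n-2), C * c ^ n := Finset.sum_le_sum (hVb n)
      _ = (Finset.Icc θ (n-2)).card * (C * c ^ n) := by
          rw [Finset.sum_const, nsmul_eq_mul]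
      _ ≤ ((n:ℝ) + 1) * (C * c ^ n) := by
          apply mul_le_mul_of_nonneg_right ?_ (by positivity)
          rw [Nat.card_Icc]
          have : (n - 2 + 1 - θ : ℕ) ≤ n + 1 := by omega
          exact_mod_cast Nat.cast_le.mpr this
  have hB₁s : Summable B₁ := by
    apply qr_summable_of_le (C := C) hc (by linarith) ?_ hq
    intro n
    rw [Nat.abs_cast]
    calc ((n - (θ+1) : ℕ) : ℝ) ≤ (n : ℝ) := Nat.cast_le.mpr (Nat.sub_le n (θ+1))
      _ ≤ ((n:ℝ) + 1) * 1 := by linarith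
      _ ≤ ((n:ℝ) + 1) * (C * c ^ n) := by
          apply mul_le_mul_of_nonneg_left ?_ (by positivity)
          have : (1:ℝ) ≤ c ^ n := one_le_pow₀ hc.le
          nlinarith
  have hB₂s : Summable B₂ :=
    hsum_aux (fun n k => U k) (fun n k _ => hnn k)
      (fun n k hk => by
        simp only [Finset.mem_Icc] at hk
        calc U k ≤ C * c ^ k := hub k
          _ ≤ C * c ^ n := mul_le_mul_of_nonneg_left
              (pow_le_pow_right₀ hc.le (by omega)) (by linarith))
  have hB₃s : Summable B₃ :=
    hsum_aux (fun n k => U (n-k-2)) (fun n k _ => hnn _)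
      (fun n k hk => by
        simp only [Finset.mem_Icc] at hk
        calc U (n-k-2) ≤ C * c ^ (n-k-2) := hub _
          _ ≤ C * c ^ n := mul_le_mul_of_nonneg_left
              (pow_le_pow_right₀ hc.le (by omega)) (by linarith))
  rw [Summable.tsum_add hB₁s (hB₂s.add hB₃s), Summable.tsum_add hB₂s hB₃s]
  -- geometric / Cauchy product evaluations
  have hS : ∑' m : ℕ, (∑ k ∈ Finset.range (m+1), U k) * x ^ m
      = (∑' n : ℕ, U n * x ^ n) * (1-x)⁻¹ := by
    have hf : Summable fun n => ‖U n * x ^ n‖ := qr_summable_norm hnn hub hc hq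
    have hg : Summable fun n : ℕ => ‖x ^ n‖ := by
      simpa [norm_pow, Real.norm_eq_abs] using
        summable_geometric_of_lt_one (abs_nonneg x) hx1
    have hcp := tsum_mul_tsum_eq_tsum_sum_range_of_summable_norm hf hg
    rw [tsum_geometric_of_norm_lt_one hxn] at hcp
    rw [hcp]
    apply tsum_congr
    intro m
    rw [Finset.sum_mul]
    apply Finset.sum_congr rfl
    intro k hk
    simp only [Finset.mem_range] at hk
    rw [mul_assoc, ← pow_add, show k + (m - k) = m by omega]
  have eB₁ : ∑' n, B₁ n = x ^ (θ+2) / (1-x) ^ 2 := by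
    have supp : Function.support B₁ ⊆ Set.range (fun m : ℕ => m + (θ+1)) := by
      intro n hn
      simp only [Function.mem_support, hB₁def] at hn
      have : ¬ n ≤ θ + 1 := by
        intro h
        apply hn
        have h2 : n - (θ+1) = 0 := by omega
        rw [h2]
        simp
      exact ⟨n - (θ+1), by show n - (θ+1) + (θ+1) = n; omega⟩
    rw [← (add_left_injective (θ+1)).tsum_eq (f := B₁) supp]
    have e1 : ∀ m : ℕ, B₁ (m + (θ+1)) = x ^ (θ+1) * ((m:ℝ) * x ^ m) := by
      intro m
      simp only [hB₁def, Nat.add_sub_cancel]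
      rw [pow_add]
      ring
    rw [tsum_congr e1, tsum_mul_left, tsum_coe_mul_geometric_of_norm_lt_one hxn]
    rw [mul_div_assoc', ← pow_succ]
  have eB₂ : ∑' n, B₂ n = x ^ 2 * ((∑' n : ℕ, U n * x ^ n) * (1-x)⁻¹) := by
    have supp : Function.support B₂ ⊆ Set.range (fun m : ℕ => m + 2) := by
      intro n hn
      simp only [Function.mem_support, hB₂def] at hn
      have : ¬ n ≤ 1 := by
        intro h
        apply hn
        have h2 : Finset.Icc θ (n-2) = ∅ := Finset.Icc_eq_empty (by omega)
        rw [h2]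
        simp
      exact ⟨n - 2, by show n - 2 + 2 = n; omega⟩
    rw [← (add_left_injective 2).tsum_eq (f := B₂) supp]
    have e1 : ∀ m : ℕ, B₂ (m + 2)
        = x ^ 2 * ((∑ k ∈ Finset.range (m+1), U k) * x ^ m) := by
      intro m
      simp only [hB₂def, Nat.add_sub_cancel]
      have hsub : ∑ k ∈ Finset.Icc θ m, U k = ∑ k ∈ Finset.range (m+1), U k := by
        apply Finset.sum_subset
        · intro k hk
          simp only [Finset.mem_Icc] at hk
          simp only [Finset.mem_range]
          omega
        · intro k hk hk2
          simp only [Finset.mem_range] at hk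
          simp only [Finset.mem_Icc] at hk2
          apply h0
          omega
      rw [hsub, pow_add]
      ring
    rw [tsum_congr e1, tsum_mul_left, hS]
  have eB₃ : ∑' n, B₃ n = x ^ (θ+2) * ((∑' n : ℕ, U n * x ^ n) * (1-x)⁻¹) := by
    have supp : Function.support B₃ ⊆ Set.range (fun m : ℕ => m + (θ+2)) := by
      intro n hn
      simp only [Function.mem_support, hB₃def] at hn
      have : ¬ n ≤ θ + 1 := by
        intro h
        apply hn
        have h2 : Finset.Icc θ (n-2) = ∅ := Finset.Icc_eq_empty (by omega)
        rw [h2]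
        simp
      exact ⟨n - (θ+2), by show n - (θ+2) + (θ+2) = n; omega⟩
    rw [← (add_left_injective (θ+2)).tsum_eq (f := B₃) supp]
    have e1 : ∀ m : ℕ, B₃ (m + (θ+2))
        = x ^ (θ+2) * ((∑ k ∈ Finset.range (m+1), U k) * x ^ m) := by
      intro m
      simp only [hB₃def]
      have hidx : m + (θ+2) - 2 = m + θ := by omega
      rw [hidx]
      have hinner : ∑ k ∈ Finset.Icc θ (m+θ), U (m + (θ+2) - k - 2)
          = ∑ k ∈ Finset.range (m+1), U k := by
        have e2 : ∑ k ∈ Finset.Icc θ (m+θ), U (m + (θ+2) - k - 2)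
            = ∑ k ∈ Finset.Icc θ (m+θ), U (m + θ - k) := by
          apply Finset.sum_congr rfl
          intro k hk
          simp only [Finset.mem_Icc] at hk
          congr 1
          omega
        rw [e2, ← Finset.Ico_add_one_right_eq_Icc, Finset.sum_Ico_eq_sum_range]
        have h3 : m + θ + 1 - θ = m + 1 := by omega
        rw [h3]
        have e3 : ∀ i ∈ Finset.range (m+1), U (m + θ - (θ + i)) = U (m + 1 - 1 - i) := by
          intro i hi
          simp only [Finset.mem_range] at hi
          congr 1
          omega
        rw [Finset.sum_congr rfl e3, Finset.sum_range_reflect (fun i => U i) (m+1)]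
      rw [hinner, pow_add]
      ring
    rw [tsum_congr e1, tsum_mul_left, hS]
  rw [eB₁, eB₂, eB₃]
  ring



private lemma qr_hderiv (θ : ℕ) (t : ℝ) :
    HasDerivAt (fun t : ℝ => t + ∑ j ∈ Finset.Icc 1 (θ+1), t^j/(j:ℝ))
      (1 + ∑ i ∈ Finset.range (θ+1), t^i) t := by
  have hsum : HasDerivAt (fun t : ℝ => ∑ j ∈ Finset.Icc 1 (θ+1), t^j/(j:ℝ))
      (∑ j ∈ Finset.Icc 1 (θ+1), t^(j-1)) t := by
    apply HasDerivAt.fun_sum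
    intro j hj
    simp only [Finset.mem_Icc] at hj
    have hj0 : (j:ℝ) ≠ 0 := by
      have : 1 ≤ j := hj.1
      positivity
    have := (hasDerivAt_pow j t).div_const (j:ℝ)
    refine this.congr_deriv ?_
    field_simp
  have := (hasDerivAt_id t).add hsum
  refine this.congr_deriv ?_
  congr 1
  rw [← Finset.Ico_add_one_right_eq_Icc, Finset.sum_Ico_eq_sum_range]
  simp
end QRGF

/-- Fix `θ ≥ 1` and let `(U_n)` be the sequence with `U_n = 0` for `n ≤ θ + 1` and
`U_n = 1 + (1/(n − θ − 1)) Σ_{k=θ}^{n−2} (U_k + U_{n−k−2})` for `n ≥ θ + 2`. Then for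
`0 ≤ z < 1`:
`Σ U_n zⁿ = (z^{θ+1}/(1−z)²) · exp(−z − Σ_{j=1}^{θ+1} z^j/j) ·
∫₀^z exp(t + Σ_{j=1}^{θ+1} t^j/j) dt`. -/
theorem quasi_random_gf_closed_form (θ : ℕ) (hθ : 1 ≤ θ) (U : ℕ → ℝ)
    (h0 : ∀ n : ℕ, n ≤ θ + 1 → U n = 0)
    (hrec : ∀ n : ℕ, θ + 2 ≤ n →
      U n = 1 + (1 / ((n : ℝ) - θ - 1)) *
        ∑ k ∈ Finset.Icc θ (n - 2), (U k + U (n - k - 2))) :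
    ∀ z : ℝ, 0 ≤ z → z < 1 →
      ∑' n : ℕ, U n * z ^ n
        = (z ^ (θ + 1) / (1 - z) ^ 2)
          * Real.exp (-z - ∑ j ∈ Finset.Icc 1 (θ + 1), z ^ j / (j : ℝ))
          * ∫ t in (0 : ℝ)..z,
              Real.exp (t + ∑ j ∈ Finset.Icc 1 (θ + 1), t ^ j / (j : ℝ)) := by
  intro z hz0 hz1
  rcases eq_or_lt_of_le hz0 with hzz | hz0'
  · -- z = 0
    rw [← hzz]
    rw [tsum_eq_single 0 (fun n hn => by rw [zero_pow hn, mul_zero])]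
    simp [h0 0 (by omega)]
  -- now 0 < z
  set r : ℝ := (1+z)/2 with hrdef
  have hr0 : 0 < r := by rw [hrdef]; linarith
  have hzr : z < r := by rw [hrdef]; linarith
  have hr1 : r < 1 := by rw [hrdef]; linarith
  set c : ℝ := (1 + 1/r)/2 with hcdef
  have h1r : 1 < 1/r := by
    rw [lt_div_iff₀ hr0]; linarith
  have hc : 1 < c := by rw [hcdef]; linarith
  have hcr : c * r < 1 := by
    have hrne : r ≠ 0 := ne_of_gt hr0
    have : c * r = (r + 1)/2 := by
      rw [hcdef]
      field_simp
    rw [this]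
    linarith
  obtain ⟨C, hC1, hub⟩ := qr_growth hθ h0 hrec c hc
  have hnn := qr_nonneg hθ h0 hrec
  set h₁ : ℝ → ℝ := fun t => t + ∑ j ∈ Finset.Icc 1 (θ+1), t^j/(j:ℝ) with hh₁
  set Fs : ℝ → ℝ := fun y => ∑' m : ℕ, U (m + (θ+1)) * y^m with hFsdef
  set I : ℝ → ℝ := fun y => ∫ t in (0:ℝ)..y, Real.exp (h₁ t) with hIdef
  set Φ : ℝ → ℝ := fun y => Real.exp (h₁ y) * (1-y)^2 * Fs y - I y with hΦdef
  have hcont_h : Continuous h₁ := by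
    rw [hh₁]
    exact continuous_id.add (continuous_finset_sum _ fun j _ =>
      (continuous_pow j).div_const _)
  have hcont_exp : Continuous fun t => Real.exp (h₁ t) :=
    Real.continuous_exp.comp hcont_h
  have hIderiv : ∀ y : ℝ, HasDerivAt I (Real.exp (h₁ y)) y := fun y =>
    (hcont_exp.integral_hasStrictDerivAt 0 y).hasDerivAt
  have hFsderiv : ∀ y ∈ Set.Ioo (-r) r,
      HasDerivAt Fs (∑' m : ℕ, U (m + (θ+1)) * ((m:ℝ) * y^(m-1))) y := fun y hy =>
    qr_hasDerivAt hnn hub hc hC1 hr0 hcr hy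
  have hΦderiv : ∀ y ∈ Set.Ioo (0:ℝ) r, HasDerivAt Φ 0 y := by
    intro y hy
    obtain ⟨hy0, hyr⟩ := hy
    have hy1 : y < 1 := hyr.trans hr1
    have h1y : (0:ℝ) < 1 - y := by linarith
    have h1y' : (1:ℝ) - y ≠ 0 := ne_of_gt h1y
    have hyne : y ≠ 0 := ne_of_gt hy0
    have hmem : y ∈ Set.Ioo (-r) r := ⟨by linarith, hyr⟩
    have hq : c * |y| < 1 := by
      rw [abs_of_pos hy0]
      have : c * y < c * r := by
        apply mul_lt_mul_of_pos_left hyr (by linarith)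
      linarith
    have hDs := hFsderiv y hmem
    have hE := qr_E hθ h0 hrec hnn hub hc hC1 hq
    rw [qr_shift h0 y] at hE
    -- key: (1-y)^2 * Ds = 1 + (y + y^(θ+1)) * (1-y) * Fs y
    have hpowne : y ^ (θ+2) ≠ 0 := pow_ne_zero _ hyne
    have key : (1-y)^2 * (∑' m : ℕ, U (m + (θ+1)) * ((m:ℝ) * y^(m-1)))
        = 1 + (y + y^(θ+1)) * (1-y) * Fs y := by
      apply mul_left_cancel₀ hpowne
      calc y^(θ+2) * ((1-y)^2 * (∑' m : ℕ, U (m + (θ+1)) * ((m:ℝ) * y^(m-1))))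
          = (1-y)^2 * (y^(θ+2) * (∑' m : ℕ, U (m + (θ+1)) * ((m:ℝ) * y^(m-1)))) := by
            ring
        _ = (1-y)^2 * (y^(θ+2)/(1-y)^2
              + (y^2 + y^(θ+2)) * ((y^(θ+1) * Fs y) * (1-y)⁻¹)) := by rw [hE]
        _ = y^(θ+2) * (1 + (y + y^(θ+1)) * (1-y) * Fs y) := by
            field_simp
            ring
    -- geometric sum identity
    have hgs : (∑ i ∈ Finset.range (θ+1), y^i) * (y-1) = y^(θ+1) - 1 :=
      geom_sum_mul y (θ+1)
    -- assemble derivative of Φ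
    have d1 : HasDerivAt (fun w => Real.exp (h₁ w))
        (Real.exp (h₁ y) * (1 + ∑ i ∈ Finset.range (θ+1), y^i)) y := by
      rw [hh₁]
      exact (qr_hderiv θ y).exp
    have dlin : HasDerivAt (fun w : ℝ => 1 - w) (-1) y := by
      simpa using (hasDerivAt_id y).const_sub 1
    have d2 : HasDerivAt (fun w : ℝ => (1-w)^2) (2 * (1-y)^1 * -1) y := by
      exact dlin.pow 2
    have d12 := d1.mul d2
    have d123 := d12.mul hDs
    have dΦ := d123.sub (hIderiv y)
    have : Φ = fun w => Real.exp (h₁ w) * (1-w)^2 * Fs w - I w := hΦdef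
    rw [this]
    refine dΦ.congr_deriv ?_
    simp only [Pi.mul_apply]; symm
    linear_combination (-Real.exp (h₁ y)) * key + (Real.exp (h₁ y) * (1-y) * Fs y) * hgs
  -- Φ is zero on [0, r)
  have hΦz : Φ z = 0 := by
    have hconst : ∀ ε : ℝ, 0 < ε → ε ≤ z → Φ z = Φ ε := by
      intro ε hε hεz
      have hcont : ContinuousOn Φ (Set.Icc ε z) := by
        intro y hy
        have hy' : y ∈ Set.Ioo (0:ℝ) r := ⟨lt_of_lt_of_le hε hy.1, lt_of_le_of_lt hy.2 hzr⟩
        exact (hΦderiv y hy').continuousAt.continuousWithinAt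
      have hder : ∀ y ∈ Set.Ico ε z, HasDerivWithinAt Φ 0 (Set.Ici y) y := by
        intro y hy
        have hy' : y ∈ Set.Ioo (0:ℝ) r := ⟨lt_of_lt_of_le hε hy.1, hy.2.trans hzr⟩
        exact (hΦderiv y hy').hasDerivWithinAt
      exact constant_of_has_deriv_right_zero hcont hder z (Set.mem_Icc.mpr ⟨hεz, le_refl z⟩)
    have hΦ0 : Φ 0 = 0 := by
      have hFs0 : Fs 0 = 0 := by
        have e : Fs 0 = ∑' m : ℕ, U (m + (θ+1)) * (0:ℝ)^m := rfl
        rw [e, tsum_eq_single 0 (fun m hm => by rw [zero_pow hm, mul_zero]),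
          pow_zero, mul_one, h0 (0 + (θ+1)) (by omega)]
      have hI0 : I 0 = 0 := by
        have e : I 0 = ∫ t in (0:ℝ)..(0:ℝ), Real.exp (h₁ t) := rfl
        rw [e]
        exact intervalIntegral.integral_same
      have e : Φ 0 = Real.exp (h₁ 0) * (1-(0:ℝ))^2 * Fs 0 - I 0 := rfl
      rw [e, hFs0, hI0]
      ring
    have hΦcont0 : ContinuousAt Φ 0 := by
      have hFs0 : ContinuousAt Fs 0 :=
        (hFsderiv 0 ⟨by linarith, hr0⟩).continuousAt
      have hI0 : ContinuousAt I 0 := (hIderiv 0).continuousAt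
      rw [hΦdef]
      exact ((hcont_exp.continuousAt.mul
        ((continuous_const.sub continuous_id).pow 2).continuousAt).mul hFs0).sub hI0
    have t1 : Tendsto Φ (nhdsWithin 0 (Set.Ioi (0:ℝ))) (nhds (Φ 0)) :=
      hΦcont0.continuousWithinAt.tendsto
    rw [hΦ0] at t1
    have t2 : Tendsto Φ (nhdsWithin 0 (Set.Ioi (0:ℝ))) (nhds (Φ z)) := by
      apply Tendsto.congr' ?_ tendsto_const_nhds
      filter_upwards [Ioc_mem_nhdsGT hz0'] with ε hε
      exact hconst ε hε.1 hε.2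
    exact tendsto_nhds_unique t2 t1
  -- conclude
  have hexp_ne : Real.exp (h₁ z) ≠ 0 := Real.exp_ne_zero _
  have h1z : (0:ℝ) < 1 - z := by linarith
  have h1z' : (1:ℝ) - z ≠ 0 := ne_of_gt h1z
  have hFsz : Real.exp (h₁ z) * (1-z)^2 * Fs z = I z := by
    have : Real.exp (h₁ z) * (1-z)^2 * Fs z - I z = 0 := hΦz
    linarith
  rw [qr_shift h0 z]
  have hexpneg : Real.exp (-z - ∑ j ∈ Finset.Icc 1 (θ + 1), z ^ j / (j : ℝ))
      = (Real.exp (h₁ z))⁻¹ := by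
    rw [← Real.exp_neg]
    congr 1
    rw [hh₁]
    ring
  have hInt : (∫ t in (0:ℝ)..z,
      Real.exp (t + ∑ j ∈ Finset.Icc 1 (θ + 1), t ^ j / (j : ℝ))) = I z := rfl
  rw [hexpneg, hInt, ← hFsz]
  have hFszdef : (∑' m : ℕ, U (m + (θ+1)) * z ^ m) = Fs z := rfl
  rw [hFszdef]
  field_simp
end

section
/- Fix an integer θ ≥ 1 and define the sequence (U_n)_{n≥0} by U_n = 0 for 0 ≤ n ≤ θ + 1, and U_n = 1 + (1/(n − θ − 1)) · Σ_{k=θ}^{n−2} (U_k + U_{n−k−2}) for n ≥ θ + 2. Then lim_{n→∞} U_n/n = K_θ, where K_θ = e^{−1−H_{θ+1}} · ∫₀¹ exp(t + Σ_{j=1}^{θ+1} t^j/j) dt and H_{θ+1} = Σ_{j=1}^{θ+1} 1/j is the (θ+1)-st harmonic number. (In particular K_1 ≈ 0.340633, so the expected number of base pairs of a quasi-random saturated structure with θ = 1 is asymptotically 0.340633 · n.) -/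
open Finset Filter

namespace QRSP2
noncomputable def g (θ : ℕ) : ℕ → ℝ
  | 0 => 0
  | 1 => 1
  | (m+2) => -(2 * g θ (m+1) + ∑ j ∈ Finset.range θ, g θ (m - j)) / (m+2)
termination_by n => n
decreasing_by all_goals omega
lemma g_zero (θ : ℕ) : g θ 0 = 0 := by simp [g]
lemma g_one (θ : ℕ) : g θ 1 = 1 := by simp [g]
lemma g_rec (θ m : ℕ) :
    g θ (m+2) = -(2 * g θ (m+1) + ∑ j ∈ Finset.range θ, g θ (m - j)) / (m+2) := by
  rw [g]

noncomputable def S (θ N : ℕ) : ℝ := ∑ m ∈ Finset.range N, g θ m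
noncomputable def B (θ t : ℕ) : ℝ := ∑ i ∈ Finset.range t, S θ (i+1)

lemma S_succ (θ N : ℕ) : S θ (N+1) = S θ N + g θ N := Finset.sum_range_succ _ _
lemma B_succ (θ t : ℕ) : B θ (t+1) = B θ t + S θ (t+1) := Finset.sum_range_succ _ _
lemma S_zero (θ : ℕ) : S θ 0 = 0 := rfl
lemma S_one (θ : ℕ) : S θ 1 = 0 := by simp [S, g_zero]
lemma B_zero (θ : ℕ) : B θ 0 = 0 := rfl
lemma B_one (θ : ℕ) : B θ 1 = 0 := by simp [B, S_one]

lemma grec2 (θ t : ℕ) (ht : 2 ≤ t) :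
    (t:ℝ) * g θ t = -(2 * g θ (t-1) + ∑ j ∈ Finset.range θ, g θ (t - 2 - j)) := by
  obtain ⟨m, rfl⟩ : ∃ m, t = m + 2 := ⟨t - 2, by omega⟩
  have h1 : m + 2 - 1 = m + 1 := by omega
  have h2 : ∀ j, m + 2 - 2 - j = m - j := fun j => by omega
  rw [g_rec, h1]
  simp only [h2]
  have h3 : ((m:ℝ)+2) ≠ 0 := by positivity
  push_cast
  field_simp


/-- window lemma -/
lemma window (f : ℕ → ℝ) (hf : f 0 = 0) (d s : ℕ) :
    (∑ m ∈ Finset.range (s+1), f m) - (∑ m ∈ Finset.range (s - d + 1), f m)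
      = ∑ j ∈ Finset.range d, f (s - j) := by
  induction d with
  | zero => simp
  | succ d ih =>
      rw [Finset.sum_range_succ (fun j => f (s - j)) d, ← ih]
      have hdiff : ∑ m ∈ Finset.range (s - d + 1), f m
          = ∑ m ∈ Finset.range (s - (d+1) + 1), f m + f (s - d) := by
        rcases le_or_gt (d+1) s with h | h
        · rw [show s - d + 1 = (s - (d+1) + 1) + 1 by omega, Finset.sum_range_succ,
            show s - (d+1) + 1 = s - d by omega]
        · rw [show s - d = 0 by omega, show s - (d+1) = 0 by omega, hf]
          ring
      rw [hdiff]
      ring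

/-- the key identity -/
lemma key (θ : ℕ) (hθ : 1 ≤ θ) : ∀ t : ℕ, 3 ≤ t →
    ((t:ℝ)-1) * S θ t + S θ (t-1) = 1 + B θ (t - θ - 2) := by
  intro t ht
  induction t, ht using Nat.le_induction with
  | base =>
      have hg2 : g θ 2 = -1 := by
        rw [show (2:ℕ) = 0+2 from rfl, g_rec]
        simp [g_one, g_zero]
      have hS2 : S θ 2 = 1 := by
        rw [show (2:ℕ) = 1+1 from rfl, S_succ, S_one, g_one]; ring
      have hS3 : S θ 3 = 0 := by
        rw [show (3:ℕ) = 2+1 from rfl, S_succ, hS2, hg2]; ring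
      rw [show (3:ℕ) - θ - 2 = 0 by omega, B_zero, hS3, show (3:ℕ)-1 = 2 from rfl, hS2]
      norm_num
  | succ t ht ih =>
      obtain ⟨u, rfl⟩ : ∃ u, t = u + 3 := ⟨t - 3, by omega⟩
      have e1 : u + 3 - 1 = u + 2 := by omega
      have e2 : u + 3 + 1 - 1 = u + 3 := by omega
      have e3 : u + 3 + 1 - θ - 2 = u + 2 - θ := by omega
      have e4 : u + 3 - θ - 2 = u + 1 - θ := by omega
      rw [e1, e4] at ih
      rw [e2, e3]
      have hS4 : S θ (u+3+1) = S θ (u+3) + g θ (u+3) := S_succ θ (u+3)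
      have hS3 : S θ (u+3) = S θ (u+2) + g θ (u+2) := by
        rw [show u+3 = (u+2)+1 from rfl, S_succ]
      have hrec := grec2 θ (u+3) (by omega)
      rw [show u+3-1 = u+2 from e1] at hrec
      have hwin := window (g θ) (g_zero θ) θ (u+1)
      have hmain : ((u:ℝ)+3) * g θ (u+3) + g θ (u+2) + S θ (u+3) = S θ (u+1-θ+1) := by
        have hc : ((u+3:ℕ):ℝ) = (u:ℝ)+3 := by push_cast; ring
        rw [← hc, hrec]
        have hww : ∀ j, u + 3 - 2 - j = u + 1 - j := fun j => by omega
        simp only [hww]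
        have hS2w : S θ (u+2) = ∑ m ∈ Finset.range (u+1+1), g θ m := rfl
        have hSw : S θ (u+1-θ+1) = ∑ m ∈ Finset.range (u+1-θ+1), g θ m := rfl
        rw [hS3, hS2w]
        rw [hSw] at *
        linarith [hwin]
      have hBdiff : B θ (u+2-θ) = B θ (u+1-θ) + S θ (u+1-θ+1) := by
        rcases le_or_gt θ (u+1) with h | h
        · rw [show u+2-θ = (u+1-θ)+1 by omega, B_succ]
        · rw [show u+2-θ = 0 by omega, show u+1-θ = 0 by omega,
            B_zero]
          simp [S_one]
      push_cast at ih ⊢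
      rw [hBdiff]
      linear_combination ih + hmain + ((u:ℝ)+3) * hS4 + hS3

lemma Bstar (θ : ℕ) (hθ : 1 ≤ θ) (t : ℕ) (ht : 3 ≤ t) :
    ((t:ℝ)-1) * B θ t = ((t:ℝ)-2) * B θ (t-1) + 1 + B θ (t-2) + B θ (t - θ - 2) := by
  obtain ⟨u, rfl⟩ : ∃ u, t = u + 3 := ⟨t - 3, by omega⟩
  have hB1 : B θ (u+3) = B θ (u+2) + S θ (u+3) := B_succ θ (u+2)
  have hB2 : B θ (u+2) = B θ (u+1) + S θ (u+2) := B_succ θ (u+1)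
  have hkey := key θ hθ (u+3) (by omega)
  rw [show u+3-1 = u+2 by omega] at hkey
  rw [show u+3-1 = u+2 by omega, show u+3-2 = u+1 by omega]
  push_cast at hkey ⊢
  linear_combination hkey + ((u:ℝ)+2) * hB1 + hB2

/-- reindexing: ∑_{k ∈ Icc a b} F (b - k) = ∑_{m ∈ range (b - a + 1)} F m -/
lemma reindex (F : ℕ → ℝ) (a b : ℕ) (hab : a ≤ b) :
    ∑ k ∈ Finset.Icc a b, F (b - k) = ∑ m ∈ Finset.range (b - a + 1), F m := by
  rw [← Finset.Ico_add_one_right_eq_Icc, Finset.sum_Ico_eq_sum_range]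
  have h1 : b + 1 - a = b - a + 1 := by omega
  rw [h1]
  rw [← Finset.sum_range_reflect]
  refine Finset.sum_congr rfl fun i hi => ?_
  simp only [Finset.mem_range] at hi
  congr 1
  omega

lemma g_two (θ : ℕ) : g θ 2 = -1 := by
  rw [show (2:ℕ) = 0+2 from rfl, g_rec]; simp [g_one, g_zero]
lemma S_two (θ : ℕ) : S θ 2 = 1 := by
  rw [show (2:ℕ) = 1+1 from rfl, S_succ, S_one, g_one]; ring
lemma B_two (θ : ℕ) : B θ 2 = 1 := by
  rw [show (2:ℕ) = 1+1 from rfl, B_succ, B_one, S_two]; ring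

section Useq
variable (θ : ℕ) (hθ : 1 ≤ θ) (U : ℕ → ℝ)
  (h0 : ∀ n : ℕ, n ≤ θ + 1 → U n = 0)
  (hrec : ∀ n : ℕ, θ + 2 ≤ n →
      U n = 1 + (1 / ((n : ℝ) - θ - 1)) *
        ∑ k ∈ Finset.Icc θ (n - 2), (U k + U (n - k - 2)))
include hθ h0 hrec
set_option linter.unusedSectionVars false

lemma Prec (n : ℕ) (hn : θ + 2 ≤ n) :
    ((n:ℝ) - θ - 1) * U n
      = ((n:ℝ) - θ - 1) + (∑ k ∈ Finset.Icc θ (n-2), U k)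
        + (∑ m ∈ Finset.range (n - θ - 1), U m) := by
  have hne : ((n:ℝ) - θ - 1) ≠ 0 := by
    have : ((θ:ℝ)) + 2 ≤ (n:ℝ) := by exact_mod_cast hn
    linarith
  have hsplit : ∑ k ∈ Finset.Icc θ (n - 2), (U k + U (n - k - 2))
      = (∑ k ∈ Finset.Icc θ (n-2), U k) + (∑ k ∈ Finset.Icc θ (n-2), U (n - k - 2)) :=
    Finset.sum_add_distrib
  have hre : ∑ k ∈ Finset.Icc θ (n-2), U (n - k - 2)
      = ∑ m ∈ Finset.range (n - θ - 1), U m := by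
    have : ∀ k, U (n - k - 2) = U (n - 2 - k) := fun k => by
      congr 1; omega
    simp only [this]
    rw [reindex U θ (n-2) (by omega), show n - 2 - θ + 1 = n - θ - 1 by omega]
  rw [hrec n hn, hsplit, hre]
  field_simp
  ring

lemma star (n : ℕ) (hn : θ + 3 ≤ n) :
    ((n:ℝ) - θ - 1) * U n
      = ((n:ℝ) - θ - 2) * U (n-1) + 1 + U (n-2) + U (n - θ - 2) := by
  have h1 := Prec θ hθ U h0 hrec n (by omega)
  have h2 := Prec θ hθ U h0 hrec (n-1) (by omega)
  have hc : ((n-1:ℕ):ℝ) = (n:ℝ) - 1 := by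
    have : (1:ℝ) ≤ (n:ℝ) := by exact_mod_cast Nat.one_le_iff_ne_zero.mpr (by omega)
    push_cast [Nat.cast_sub (by omega : 1 ≤ n)]; ring
  rw [hc, show n-1-2 = n-3 by omega, show n-1-θ-1 = n-θ-2 by omega] at h2
  have hIcc : ∑ k ∈ Finset.Icc θ (n-2), U k
      = (∑ k ∈ Finset.Icc θ (n-3), U k) + U (n-2) := by
    rw [show n-2 = (n-3)+1 by omega, Finset.sum_Icc_succ_top (by omega : θ ≤ (n-3)+1)]
  have hrg : ∑ m ∈ Finset.range (n-θ-1), U m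
      = (∑ m ∈ Finset.range (n-θ-2), U m) + U (n-θ-2) := by
    rw [show n-θ-1 = (n-θ-2)+1 by omega, Finset.sum_range_succ]
  rw [hIcc, hrg] at h1
  linarith [h1, h2]

lemma U_eq_B : ∀ n : ℕ, U n = B θ (n - θ) := by
  intro n
  induction n using Nat.strong_induction_on with
  | _ n IH =>
    rcases le_or_gt n (θ+1) with hn | hn
    · rw [h0 n hn]
      have : n - θ = 0 ∨ n - θ = 1 := by omega
      rcases this with h | h <;> rw [h]
      · rw [B_zero]
      · rw [B_one]
    · rcases eq_or_lt_of_le (Nat.succ_le_of_lt hn) with hn2 | hn2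
      · -- n = θ + 2
        have hn' : n = θ + 2 := by omega
        subst hn'
        have h1 := hrec (θ+2) (le_refl _)
        rw [show θ+2-2 = θ by omega, Finset.Icc_self, Finset.sum_singleton] at h1
        have hU1 : U θ = 0 := h0 θ (by omega)
        have hU2 : U (θ+2-θ-2) = 0 := by
          rw [show θ+2-θ-2 = 0 by omega]; exact h0 0 (by omega)
        rw [hU1, hU2] at h1
        rw [show θ+2-θ = 2 by omega, B_two, h1]; ring
      · -- n ≥ θ + 3
        have hn3 : θ + 3 ≤ n := by omega
        set t := n - θ with htdef
        have ht3 : 3 ≤ t := by omega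
        have hct : ((t:ℕ):ℝ) = (n:ℝ) - θ := by
          rw [htdef, Nat.cast_sub (by omega : θ ≤ n)]
        have hne : ((n:ℝ) - θ - 1) ≠ 0 := by
          have : ((θ:ℝ)) + 3 ≤ (n:ℝ) := by exact_mod_cast hn3
          linarith
        have hstar := star θ hθ U h0 hrec n hn3
        have hBstar := Bstar θ hθ t ht3
        rw [hct] at hBstar
        have e1 : n - 1 - θ = t - 1 := by omega
        have e2 : n - 2 - θ = t - 2 := by omega
        have e3 : n - θ - 2 - θ = t - θ - 2 := by omega
        have i1 : U (n-1) = B θ (t-1) := by rw [IH (n-1) (by omega), e1]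
        have i2 : U (n-2) = B θ (t-2) := by rw [IH (n-2) (by omega), e2]
        have i3 : U (n-θ-2) = B θ (t-θ-2) := by rw [IH (n-θ-2) (by omega), e3]
        rw [i1, i2, i3] at hstar
        apply mul_left_cancel₀ hne
        rw [hstar, hBstar]
end Useq

lemma g_step_bound (θ m : ℕ) (D : ℝ) (hD : 0 ≤ D)
    (h1 : |g θ (m+1)| ≤ D) (h2 : ∀ j, j < θ → |g θ (m - j)| ≤ D) :
    |g θ (m+2)| ≤ ((θ:ℝ)+2) * D / ((m:ℝ)+2) := by
  rw [g_rec, abs_div, abs_neg]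
  have hm2 : |((m:ℕ):ℝ)+2| = (m:ℝ)+2 := abs_of_pos (by positivity)
  push_cast
  rw [hm2]
  apply div_le_div_of_nonneg_right ?_ (by positivity)
  calc |2 * g θ (m+1) + ∑ j ∈ Finset.range θ, g θ (m - j)|
      ≤ |2 * g θ (m+1)| + |∑ j ∈ Finset.range θ, g θ (m - j)| := abs_add_le _ _
    _ ≤ 2 * D + ∑ j ∈ Finset.range θ, |g θ (m - j)| := by
        rw [abs_mul, abs_two]
        gcongr
        exact Finset.abs_sum_le_sum_abs _ _
    _ ≤ 2 * D + (θ:ℝ) * D := by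
        gcongr 2 * D + ?_
        calc ∑ j ∈ Finset.range θ, |g θ (m - j)| ≤ ∑ j ∈ Finset.range θ, D := by
              apply Finset.sum_le_sum
              intro j hj
              exact h2 j (Finset.mem_range.mp hj)
          _ = (θ:ℝ) * D := by rw [Finset.sum_const, Finset.card_range, nsmul_eq_mul]
    _ = ((θ:ℝ)+2) * D := by ring

lemma g_bounded (θ : ℕ) : ∃ D : ℝ, 0 < D ∧ ∀ m, |g θ m| ≤ D := by
  set D : ℝ := (∑ k ∈ Finset.range (θ+3), |g θ k|) + 1 with hD
  have hDpos : 0 < D := by positivity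
  refine ⟨D, hDpos, ?_⟩
  intro m
  induction m using Nat.strong_induction_on with
  | _ m IH =>
    rcases le_or_gt m (θ+2) with hm | hm
    · have : |g θ m| ≤ ∑ k ∈ Finset.range (θ+3), |g θ k| := by
        apply Finset.single_le_sum (f := fun k => |g θ k|) (fun k _ => abs_nonneg _)
        exact Finset.mem_range.mpr (by omega)
      linarith
    · obtain ⟨m', rfl⟩ : ∃ m', m = m' + 2 := ⟨m - 2, by omega⟩
      have hstep := g_step_bound θ m' D hDpos.le (IH (m'+1) (by omega))
        (fun j hj => IH (m' - j) (by omega))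
      refine hstep.trans ?_
      rw [div_le_iff₀ (by positivity)]
      have hth : ((θ:ℝ)+2) ≤ ((m':ℝ)+2) := by
        have : (θ:ℝ) ≤ (m':ℝ) := by exact_mod_cast (by omega : θ ≤ m')
        linarith
      nlinarith


noncomputable def qc : ℕ → ℝ := fun j => if j = 0 then 2 else 1

lemma qc_abs_le (j : ℕ) : |qc j| ≤ 2 := by
  unfold qc; split <;> norm_num

lemma grec' (θ n : ℕ) : ((n:ℝ)+1) * g θ (n+1)
    = (if n = 0 then 1 else 0) - ∑ j ∈ Finset.range (θ+1), qc j * g θ (n - j) := by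
  rw [Finset.sum_range_succ']
  rcases n with _ | m
  · simp [g_one, g_zero, qc]
  · have h2 : ((m:ℝ)+1+1) ≠ 0 := by positivity
    rw [g_rec]
    have hsum : ∑ k ∈ Finset.range θ, qc (k + 1) * g θ (m + 1 - (k + 1))
        = ∑ k ∈ Finset.range θ, g θ (m - k) := by
      refine Finset.sum_congr rfl fun k _ => ?_
      have : m + 1 - (k + 1) = m - k := by omega
      rw [this, qc, if_neg (Nat.succ_ne_zero k), one_mul]
    rw [hsum]
    simp only [qc, if_pos rfl, Nat.cast_succ, if_neg (Nat.succ_ne_zero m), if_true, Nat.sub_zero]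
    field_simp
    ring

noncomputable def Qd (θ : ℕ) (x : ℝ) : ℝ := ∑ j ∈ Finset.range (θ+1), qc j * x^j
noncomputable def Pp (θ N : ℕ) (x : ℝ) : ℝ := ∑ m ∈ Finset.range N, g θ m * x^m
noncomputable def dP (θ N : ℕ) (x : ℝ) : ℝ :=
  ∑ n ∈ Finset.range (N-1), ((n:ℝ)+1) * g θ (n+1) * x^n
noncomputable def Ee (θ N : ℕ) (x : ℝ) : ℝ :=
  ∑ j ∈ Finset.range (θ+1), ∑ m ∈ Finset.Ico (N-1-j) N, qc j * g θ m * x^(j+m)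

lemma Ee_eq (θ N : ℕ) (hN : 2 ≤ N) (x : ℝ) :
    dP θ N x + Qd θ x * Pp θ N x - 1 = Ee θ N x := by
  set T1 : ℝ := ∑ j ∈ Finset.range (θ+1), ∑ m ∈ Finset.range (N-1-j), qc j * g θ m * x^(j+m)
    with hT1
  have h1 : Qd θ x * Pp θ N x = T1 + Ee θ N x := by
    rw [Qd, Pp, Finset.sum_mul_sum]
    have step1 : ∀ j ∈ Finset.range (θ+1),
        ∑ m ∈ Finset.range N, (qc j * x^j) * (g θ m * x^m)
          = (∑ m ∈ Finset.range (N-1-j), qc j * g θ m * x^(j+m))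
            + ∑ m ∈ Finset.Ico (N-1-j) N, qc j * g θ m * x^(j+m) := by
      intro j hj
      have e : ∀ m, (qc j * x^j) * (g θ m * x^m) = qc j * g θ m * x^(j+m) := by
        intro m; rw [pow_add]; ring
      simp only [e]
      rw [Finset.range_eq_Ico, ← Finset.sum_Ico_consecutive _ (Nat.zero_le (N-1-j)) (by omega),
        ← Finset.range_eq_Ico]
    rw [Finset.sum_congr rfl step1, Finset.sum_add_distrib]
    rfl
  have h2 : dP θ N x = 1 - T1 := by
    rw [dP]
    have e : ∀ n : ℕ, ((n:ℝ)+1) * g θ (n+1) * x^n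
        = (if n = 0 then (1:ℝ) else 0) * x^n
          - ∑ j ∈ Finset.range (θ+1), qc j * g θ (n - j) * x^n := by
      intro n
      rw [grec', sub_mul, Finset.sum_mul]
    simp only [e]
    rw [Finset.sum_sub_distrib]
    have hone : ∑ n ∈ Finset.range (N-1), (if n = 0 then (1:ℝ) else 0) * x^n = 1 := by
      rw [Finset.sum_eq_single 0]
      · simp
      · intro b _ hb; rw [if_neg hb, zero_mul]
      · intro h; exact absurd (Finset.mem_range.mpr (by omega)) h
    rw [hone]
    congr 1
    rw [Finset.sum_comm]
    refine Finset.sum_congr rfl fun j hj => ?_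
    have hsub : ∑ n ∈ Finset.range (N-1), qc j * g θ (n - j) * x^n
        = ∑ n ∈ Finset.Ico j (N-1), qc j * g θ (n - j) * x^n := by
      symm
      apply Finset.sum_subset
      · intro n hn
        simp only [Finset.mem_Ico] at hn
        exact Finset.mem_range.mpr hn.2
      · intro n hn hnotin
        simp only [Finset.mem_range] at hn
        simp only [Finset.mem_Ico, not_and, not_lt] at hnotin
        have : n < j := by
          by_contra hc
          exact absurd (hnotin (by omega)) (by omega)
        rw [show n - j = 0 by omega, g_zero, mul_zero, zero_mul]
    rw [hsub, Finset.sum_Ico_eq_sum_range]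
    refine Finset.sum_congr rfl fun m hm => ?_
    rw [show j + m - j = m by omega]
  rw [h1, h2]
  ring

noncomputable def Qf (θ : ℕ) (t : ℝ) : ℝ := t + ∑ j ∈ Finset.Icc 1 (θ+1), t^j/(j:ℝ)

lemma hasDerivAt_Qf (θ : ℕ) (x : ℝ) : HasDerivAt (Qf θ) (Qd θ x) x := by
  have h1 : HasDerivAt (Qf θ)
      (1 + ∑ j ∈ Finset.Icc 1 (θ+1), ((j:ℝ) * x^(j-1))/(j:ℝ)) x := by
    apply (hasDerivAt_id x).add
    apply HasDerivAt.fun_sum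
    intro j hj
    exact (hasDerivAt_pow j x).div_const _
  convert h1 using 1
  have h2 : ∑ j ∈ Finset.Icc 1 (θ+1), ((j:ℝ) * x^(j-1))/(j:ℝ)
      = ∑ j ∈ Finset.Icc 1 (θ+1), x^(j-1) := by
    refine Finset.sum_congr rfl fun j hj => ?_
    have hj1 : 1 ≤ j := (Finset.mem_Icc.mp hj).1
    have hj0 : ((j:ℝ)) ≠ 0 := Nat.cast_ne_zero.mpr (by omega)
    field_simp
  rw [h2]
  have h3 : ∑ j ∈ Finset.Icc 1 (θ+1), x^(j-1) = ∑ i ∈ Finset.range (θ+1), x^i := by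
    rw [← Finset.Ico_add_one_right_eq_Icc, Finset.sum_Ico_eq_sum_range]
    simp
  rw [h3, Qd, Finset.sum_range_succ' (fun j => qc j * x^j) θ,
    Finset.sum_range_succ' (fun i => x^i) θ]
  simp only [qc, if_pos rfl, if_neg (Nat.succ_ne_zero _)]
  simp only [pow_zero, one_mul, mul_one, if_true, eq_self_iff_true]
  ring


lemma cont_Qf (θ : ℕ) : Continuous (Qf θ) := by
  unfold Qf
  exact continuous_id.add (continuous_finset_sum _ fun j _ => (continuous_pow j).div_const _)

lemma Qf_le (θ : ℕ) (x : ℝ) (hx : x ∈ Set.Icc (0:ℝ) 1) : Qf θ x ≤ Qf θ 1 := by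
  obtain ⟨h0, h1⟩ := hx
  unfold Qf
  apply add_le_add h1
  apply Finset.sum_le_sum
  intro j hj
  have hj1 : 1 ≤ j := (Finset.mem_Icc.mp hj).1
  have hjpos : (0:ℝ) < (j:ℝ) := by exact_mod_cast (by omega : 0 < j)
  apply div_le_div_of_nonneg_right ?_ hjpos.le
  calc x ^ j ≤ 1 := pow_le_one₀ h0 h1
    _ = 1 ^ j := (one_pow j).symm

lemma g_small (θ : ℕ) (D : ℝ) (hD : 0 ≤ D) (hDb : ∀ k, |g θ k| ≤ D)
    (m : ℕ) (hm : 2 ≤ m) : |g θ m| ≤ ((θ:ℝ)+2) * D / (m:ℝ) := by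
  obtain ⟨m', rfl⟩ : ∃ m', m = m' + 2 := ⟨m - 2, by omega⟩
  have := g_step_bound θ m' D hD (hDb _) (fun j _ => hDb _)
  convert this using 2
  push_cast
  ring

lemma Ee_bound (θ N : ℕ) (hN : θ + 3 ≤ N) (D : ℝ) (hD : 0 ≤ D) (hDb : ∀ k, |g θ k| ≤ D)
    (x : ℝ) (hx : x ∈ Set.Icc (0:ℝ) 1) :
    |Ee θ N x| ≤ 2*((θ:ℝ)+1)^2*((θ:ℝ)+2)*D / ((N:ℝ)-1-θ) := by
  have hden : (0:ℝ) < (N:ℝ)-1-θ := by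
    have : ((θ:ℝ)) + 3 ≤ (N:ℝ) := by exact_mod_cast hN
    linarith
  have hterm : ∀ j ∈ Finset.range (θ+1), ∀ m ∈ Finset.Ico (N-1-j) N,
      |qc j * g θ m * x^(j+m)| ≤ 2 * (((θ:ℝ)+2) * D / ((N:ℝ)-1-θ)) := by
    intro j hj m hm
    simp only [Finset.mem_range] at hj
    simp only [Finset.mem_Ico] at hm
    have hm2 : 2 ≤ m := by omega
    have hgm : |g θ m| ≤ ((θ:ℝ)+2) * D / (m:ℝ) := g_small θ D hD hDb m hm2
    have hmN : ((N:ℝ)-1-θ) ≤ (m:ℝ) := by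
      have : N - 1 - θ ≤ m := by omega
      have hc : ((N-1-θ:ℕ):ℝ) ≤ (m:ℝ) := by exact_mod_cast this
      have hc2 : ((N-1-θ:ℕ):ℝ) = (N:ℝ)-1-θ := by
        push_cast [Nat.cast_sub (by omega : 1 ≤ N), Nat.cast_sub (by omega : θ ≤ N - 1)]
        ring
      linarith
    have hx01 : |x^(j+m)| ≤ 1 := by
      rw [abs_pow]
      exact pow_le_one₀ (abs_nonneg x) (abs_le.mpr ⟨by linarith [hx.1], hx.2⟩)
    calc |qc j * g θ m * x^(j+m)| = |qc j| * |g θ m| * |x^(j+m)| := by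
          rw [abs_mul, abs_mul]
      _ ≤ 2 * (((θ:ℝ)+2) * D / ((N:ℝ)-1-θ)) * 1 := by
          apply mul_le_mul ?_ hx01 (abs_nonneg _) (by positivity)
          apply mul_le_mul (qc_abs_le j) ?_ (abs_nonneg _) (by norm_num)
          calc |g θ m| ≤ ((θ:ℝ)+2) * D / (m:ℝ) := hgm
            _ ≤ ((θ:ℝ)+2) * D / ((N:ℝ)-1-θ) := by
                apply div_le_div_of_nonneg_left (by positivity) hden hmN
      _ = 2 * (((θ:ℝ)+2) * D / ((N:ℝ)-1-θ)) := by ring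
  calc |Ee θ N x|
      ≤ ∑ j ∈ Finset.range (θ+1), |∑ m ∈ Finset.Ico (N-1-j) N, qc j * g θ m * x^(j+m)| :=
        Finset.abs_sum_le_sum_abs _ _
    _ ≤ ∑ j ∈ Finset.range (θ+1), ((θ:ℝ)+1) * (2 * (((θ:ℝ)+2) * D / ((N:ℝ)-1-θ))) := by
        apply Finset.sum_le_sum
        intro j hj
        calc |∑ m ∈ Finset.Ico (N-1-j) N, qc j * g θ m * x^(j+m)|
            ≤ ∑ m ∈ Finset.Ico (N-1-j) N, |qc j * g θ m * x^(j+m)| :=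
              Finset.abs_sum_le_sum_abs _ _
          _ ≤ ∑ m ∈ Finset.Ico (N-1-j) N, 2 * (((θ:ℝ)+2) * D / ((N:ℝ)-1-θ)) :=
              Finset.sum_le_sum (hterm j hj)
          _ = ((Finset.Ico (N-1-j) N).card : ℝ) * (2 * (((θ:ℝ)+2) * D / ((N:ℝ)-1-θ))) := by
              rw [Finset.sum_const, nsmul_eq_mul]
          _ ≤ ((θ:ℝ)+1) * (2 * (((θ:ℝ)+2) * D / ((N:ℝ)-1-θ))) := by
              apply mul_le_mul_of_nonneg_right ?_ (by positivity)
              rw [Nat.card_Ico]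
              simp only [Finset.mem_range] at hj
              have : N - (N-1-j) ≤ θ + 1 := by omega
              calc ((N - (N-1-j) : ℕ) : ℝ) ≤ ((θ+1 : ℕ) : ℝ) := by exact_mod_cast this
                _ = (θ:ℝ)+1 := by push_cast; ring
    _ = ((θ:ℝ)+1) * (((θ:ℝ)+1) * (2 * (((θ:ℝ)+2) * D / ((N:ℝ)-1-θ)))) := by
        rw [Finset.sum_const, Finset.card_range, nsmul_eq_mul]; push_cast; ring
    _ = 2*((θ:ℝ)+1)^2*((θ:ℝ)+2)*D / ((N:ℝ)-1-θ) := by ring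

lemma hasDerivAt_Pp (θ N : ℕ) (hN : 1 ≤ N) (x : ℝ) :
    HasDerivAt (fun y => Pp θ N y) (dP θ N x) x := by
  have h : HasDerivAt (fun y : ℝ => ∑ m ∈ Finset.range N, g θ m * y^m)
      (∑ m ∈ Finset.range N, g θ m * ((m:ℝ) * x^(m-1))) x :=
    HasDerivAt.fun_sum fun m _ => (hasDerivAt_pow m x).const_mul _
  refine h.congr_deriv ?_
  obtain ⟨K, rfl⟩ : ∃ K, N = K + 1 := ⟨N-1, by omega⟩
  rw [dP, Finset.sum_range_succ' (fun m => g θ m * ((m:ℝ) * x^(m-1))) K]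
  rw [show K + 1 - 1 = K from rfl]
  simp only [g_zero, Nat.cast_zero, zero_mul, mul_zero, add_zero]
  refine Finset.sum_congr rfl fun n _ => ?_
  rw [show n + 1 - 1 = n from rfl]
  push_cast
  ring

lemma Sest (θ N : ℕ) (hθ : 1 ≤ θ) (hN : θ + 3 ≤ N)
    (D : ℝ) (hD : 0 ≤ D) (hDb : ∀ k, |g θ k| ≤ D) :
    |Real.exp (Qf θ 1) * S θ N - ∫ t in (0:ℝ)..1, Real.exp (Qf θ t)|
      ≤ Real.exp (Qf θ 1) * (2*((θ:ℝ)+1)^2*((θ:ℝ)+2)*D / ((N:ℝ)-1-θ)) := by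
  set c : ℝ := 2*((θ:ℝ)+1)^2*((θ:ℝ)+2)*D with hc
  have hcnn : 0 ≤ c := by positivity
  have hden : (0:ℝ) < (N:ℝ)-1-θ := by
    have : ((θ:ℝ)) + 3 ≤ (N:ℝ) := by exact_mod_cast hN
    linarith
  set Φ : ℝ → ℝ := fun x => Real.exp (Qf θ x) * Pp θ N x
    - ∫ t in (0:ℝ)..x, Real.exp (Qf θ t) with hΦ
  have hcont : Continuous (fun t => Real.exp (Qf θ t)) := Real.continuous_exp.comp (cont_Qf θ)
  have hderiv : ∀ x : ℝ, HasDerivAt Φ (Real.exp (Qf θ x) * Ee θ N x) x := by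
    intro x
    have h1 : HasDerivAt (fun x : ℝ => Real.exp (Qf θ x))
        (Real.exp (Qf θ x) * Qd θ x) x := (hasDerivAt_Qf θ x).exp
    have h2 : HasDerivAt (fun y => Pp θ N y) (dP θ N x) x :=
      hasDerivAt_Pp θ N (by omega) x
    have h3 : HasDerivAt (fun x : ℝ => ∫ t in (0:ℝ)..x, Real.exp (Qf θ t))
        (Real.exp (Qf θ x)) x := (hcont.integral_hasStrictDerivAt 0 x).hasDerivAt
    have h4 := (h1.fun_mul h2).fun_sub h3
    refine h4.congr_deriv ?_
    rw [← Ee_eq θ N (by omega) x]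
    ring
  have hbound : ∀ x ∈ Set.Icc (0:ℝ) 1,
      ‖Real.exp (Qf θ x) * Ee θ N x‖ ≤ Real.exp (Qf θ 1) * (c / ((N:ℝ)-1-θ)) := by
    intro x hx
    rw [Real.norm_eq_abs, abs_mul, Real.abs_exp]
    apply mul_le_mul (Real.exp_le_exp.mpr (Qf_le θ x hx))
      (Ee_bound θ N hN D hD hDb x hx) (abs_nonneg _) (Real.exp_pos _).le
  have hmvt := (convex_Icc (0:ℝ) 1).norm_image_sub_le_of_norm_hasDerivWithin_le
    (fun x _ => (hderiv x).hasDerivWithinAt) hbound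
    (Set.mem_Icc.mpr ⟨le_refl 0, by norm_num⟩) (Set.mem_Icc.mpr ⟨by norm_num, le_refl 1⟩)
  have hΦ0 : Φ 0 = 0 := by
    rw [hΦ]
    simp only [intervalIntegral.integral_same, sub_zero]
    have : Pp θ N 0 = 0 := by
      rw [Pp, Finset.sum_eq_single 0]
      · rw [g_zero, zero_mul]
      · intro b _ hb
        rw [zero_pow hb, mul_zero]
      · intro h; exact absurd (Finset.mem_range.mpr (by omega)) h
    rw [this, mul_zero]
  have hΦ1 : Φ 1 = Real.exp (Qf θ 1) * S θ N - ∫ t in (0:ℝ)..1, Real.exp (Qf θ t) := by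
    rw [hΦ]
    have : Pp θ N 1 = S θ N := by
      rw [Pp, S]
      refine Finset.sum_congr rfl fun m _ => by rw [one_pow, mul_one]
    simp only
    rw [this]
  rw [hΦ0, hΦ1] at hmvt
  simp only [sub_zero, Real.norm_eq_abs, norm_one] at hmvt
  linarith [hmvt]

lemma S_tendsto (θ : ℕ) (hθ : 1 ≤ θ) :
    Filter.Tendsto (S θ) Filter.atTop
      (nhds (Real.exp (-(Qf θ 1)) * ∫ t in (0:ℝ)..1, Real.exp (Qf θ t))) := by
  obtain ⟨D, hD, hDb⟩ := g_bounded θ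
  set I : ℝ := ∫ t in (0:ℝ)..1, Real.exp (Qf θ t) with hI
  set c : ℝ := 2*((θ:ℝ)+1)^2*((θ:ℝ)+2)*D with hc
  have hM : Filter.Tendsto (fun N : ℕ => Real.exp (Qf θ 1) * (c / ((N:ℝ)-1-θ)))
      Filter.atTop (nhds 0) := by
    have h1 : Filter.Tendsto (fun N : ℕ => (N:ℝ)-1-θ) Filter.atTop Filter.atTop := by
      have h0 : Filter.Tendsto (fun N : ℕ => (N:ℝ)) Filter.atTop Filter.atTop :=
        tendsto_natCast_atTop_atTop
      have := Filter.tendsto_atTop_add_const_right Filter.atTop (-1-(θ:ℝ)) h0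
      apply this.congr
      intro N
      ring
    have h2 : Filter.Tendsto (fun N : ℕ => c / ((N:ℝ)-1-θ)) Filter.atTop (nhds 0) :=
      Filter.Tendsto.div_atTop tendsto_const_nhds h1
    have := h2.const_mul (Real.exp (Qf θ 1))
    simpa using this
  have hdist : Filter.Tendsto (fun N : ℕ => Real.exp (Qf θ 1) * S θ N)
      Filter.atTop (nhds I) := by
    rw [tendsto_iff_dist_tendsto_zero]
    apply squeeze_zero' (Filter.Eventually.of_forall fun N => dist_nonneg)
      ?_ hM
    filter_upwards [Filter.eventually_ge_atTop (θ+3)] with N hN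
    rw [Real.dist_eq]
    exact Sest θ N hθ hN D hD.le hDb
  have hfinal := hdist.const_mul (Real.exp (-(Qf θ 1)))
  have heq : ∀ N : ℕ, Real.exp (-(Qf θ 1)) * (Real.exp (Qf θ 1) * S θ N) = S θ N := by
    intro N
    rw [← mul_assoc, ← Real.exp_add, neg_add_cancel, Real.exp_zero, one_mul]
  apply Filter.Tendsto.congr heq
  exact hfinal

lemma B_div_tendsto (θ : ℕ) (hθ : 1 ≤ θ) :
    Filter.Tendsto (fun t : ℕ => B θ t / (t:ℝ)) Filter.atTop
      (nhds (Real.exp (-(Qf θ 1)) * ∫ t in (0:ℝ)..1, Real.exp (Qf θ t))) := by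
  have hA : Filter.Tendsto (fun i : ℕ => S θ (i+1)) Filter.atTop
      (nhds (Real.exp (-(Qf θ 1)) * ∫ t in (0:ℝ)..1, Real.exp (Qf θ t))) :=
    (S_tendsto θ hθ).comp (Filter.tendsto_add_atTop_nat 1)
  have hces := hA.cesaro
  apply hces.congr
  intro n
  rw [B, inv_mul_eq_div]

end QRSP2


open QRSP2 in
/-- Fix `θ ≥ 1` and let `(U_n)` be the sequence with `U_n = 0` for `n ≤ θ + 1` and
`U_n = 1 + (1/(n − θ − 1)) Σ_{k=θ}^{n−2} (U_k + U_{n−k−2})` for `n ≥ θ + 2` (the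
expected number of base pairs of a quasi-random saturated structure on `[1,n]`).
Then `lim_{n→∞} U_n/n = K_θ = e^{−1−H_{θ+1}} ∫₀¹ exp(t + Σ_{j=1}^{θ+1} t^j/j) dt`,
where `H_{θ+1}` is the `(θ+1)`-st harmonic number.  (`K₁ ≈ 0.340633`.) -/
theorem quasi_random_expected_base_pairs (θ : ℕ) (hθ : 1 ≤ θ) (U : ℕ → ℝ)
    (h0 : ∀ n : ℕ, n ≤ θ + 1 → U n = 0)
    (hrec : ∀ n : ℕ, θ + 2 ≤ n →
      U n = 1 + (1 / ((n : ℝ) - θ - 1)) *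
        ∑ k ∈ Finset.Icc θ (n - 2), (U k + U (n - k - 2))) :
    Filter.Tendsto (fun n : ℕ => U n / (n : ℝ)) Filter.atTop
      (nhds (Real.exp (-1 - ∑ j ∈ Finset.Icc 1 (θ + 1), (1 : ℝ) / (j : ℝ))
        * ∫ t in (0 : ℝ)..1,
            Real.exp (t + ∑ j ∈ Finset.Icc 1 (θ + 1), t ^ j / (j : ℝ)))) := by
  have hUB := U_eq_B θ hθ U h0 hrec
  have hval : Real.exp (-1 - ∑ j ∈ Finset.Icc 1 (θ + 1), (1 : ℝ) / (j : ℝ))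
      = Real.exp (-(Qf θ 1)) := by
    congr 1
    rw [Qf]
    have h1 : ∑ j ∈ Finset.Icc 1 (θ+1), (1:ℝ)^j/(j:ℝ)
        = ∑ j ∈ Finset.Icc 1 (θ+1), (1:ℝ)/(j:ℝ) :=
      Finset.sum_congr rfl fun j _ => by rw [one_pow]
    rw [h1]
    ring
  have hint : (∫ t in (0:ℝ)..1, Real.exp (t + ∑ j ∈ Finset.Icc 1 (θ+1), t^j/(j:ℝ)))
      = ∫ t in (0:ℝ)..1, Real.exp (Qf θ t) := rfl
  rw [hval, hint]
  have h1 : Filter.Tendsto (fun n : ℕ => B θ (n-θ) / ((n-θ:ℕ):ℝ)) Filter.atTop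
      (nhds (Real.exp (-(Qf θ 1)) * ∫ t in (0:ℝ)..1, Real.exp (Qf θ t))) :=
    (B_div_tendsto θ hθ).comp (Filter.tendsto_sub_atTop_nat θ)
  have h2 : Filter.Tendsto (fun n : ℕ => ((n-θ:ℕ):ℝ)/(n:ℝ)) Filter.atTop (nhds 1) := by
    have ht : Filter.Tendsto (fun n : ℕ => 1 - (θ:ℝ)/(n:ℝ)) Filter.atTop (nhds (1-0)) :=
      tendsto_const_nhds.sub (tendsto_const_div_atTop_nhds_zero_nat (θ:ℝ))
    rw [sub_zero] at ht
    apply ht.congr'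
    filter_upwards [Filter.eventually_ge_atTop (θ+1)] with n hn
    have hn0 : ((n:ℝ)) ≠ 0 := Nat.cast_ne_zero.mpr (by omega)
    rw [Nat.cast_sub (by omega : θ ≤ n)]
    field_simp
  have h3 := h1.mul h2
  rw [mul_one] at h3
  apply h3.congr'
  filter_upwards [Filter.eventually_ge_atTop (θ+1)] with n hn
  rw [hUB n]
  have hb0 : ((n-θ:ℕ):ℝ) ≠ 0 := Nat.cast_ne_zero.mpr (by omega)
  have hn0 : ((n:ℝ)) ≠ 0 := Nat.cast_ne_zero.mpr (by omega)
  field_simp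
end
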